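/- arXiv:1505.03827 — 11 statements merged into one kernel-verified Lean document; each statement's English description precedes it below -/
import Mathlib

section
/- For the scaled bacteria-phage system, the weighted total F(t) = Σ_i H_i(t) + Σ_i P_i(t)/(e_i n_i) satisfies F(t) ≤ Q/W + (F(0) − Q/W) e^{−W t} for all t ≥ 0, where W = min_i n_i, K = max_i{H_i(0), r_i/a_i}, and Q = Σ_i (W + r_i) K. Consequently limsup_{t→∞} F(t) ≤ Σ_i (1 + r_i/W) r_i/a_i. -/
open Filter Finset

/-- The weighted total `F(t) = Σ H_i(t) + Σ P_i(t)/(e_i n_i)`. -/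
noncomputable def Ftot (n : ℕ) (e ν : ℕ → ℝ) (H P : ℝ → ℕ → ℝ) (t : ℝ) : ℝ :=
  ∑ i ∈ Finset.range n, H t i + ∑ i ∈ Finset.range n, P t i / (e i * ν i)

open Set


/-- Real version of `le_of_forall_pos_le_add`. -/
lemma my_le_of_forall_pos_le_add {a b : ℝ} (h : ∀ ε > 0, a ≤ b + ε) : a ≤ b := by
  apply le_of_forall_sub_le
  intro ε hε
  linarith [h ε hε]

/-- Constant upper barrier with strict contact. -/
lemma barrier_le {f φ : ℝ → ℝ} {t0 c : ℝ}
    (hf : ∀ t ≥ t0, HasDerivAt f (φ t) t)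
    (hcontact : ∀ t ≥ t0, f t = c → φ t < 0)
    (h0 : f t0 ≤ c) : ∀ t ≥ t0, f t ≤ c := by
  intro t ht
  have key : ∀ ⦃x⦄, x ∈ Icc t0 t → f x ≤ (fun _ : ℝ => c) x := by
    apply image_le_of_deriv_right_lt_deriv_boundary (f' := φ) (B := fun _ => c) (B' := fun _ => 0)
    · exact fun x hx => ((hf x hx.1).continuousAt).continuousWithinAt
    · exact fun x hx => (hf x hx.1).hasDerivWithinAt
    · exact h0
    · exact fun x => hasDerivAt_const x c
    · exact fun x hx hc => hcontact x hx.1 hc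
  exact key ⟨ht, le_refl t⟩

/-- Sign preservation for `f' = f * g` with `g` continuous. -/
lemma nonneg_of_linear {f g : ℝ → ℝ}
    (hg : ContinuousOn g (Ici 0))
    (hf : ∀ t ≥ (0:ℝ), HasDerivAt f (f t * g t) t)
    (h0 : 0 ≤ f 0) : ∀ t ≥ (0:ℝ), 0 ≤ f t := by
  intro b hb
  by_contra hneg
  push_neg at hneg
  have hfc : ContinuousOn f (Icc 0 b) := fun x hx => ((hf x hx.1).continuousAt).continuousWithinAt
  obtain ⟨s, hs, hfs⟩ : ∃ s ∈ Icc (0:ℝ) b, f s = 0 := by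
    have h1 := intermediate_value_Icc' hb hfc
    have h0mem : (0:ℝ) ∈ Icc (f b) (f 0) := ⟨hneg.le, h0⟩
    obtain ⟨s, hs, hfs⟩ := h1 h0mem
    exact ⟨s, hs, hfs⟩
  obtain ⟨C, hC⟩ := (isCompact_Icc : IsCompact (Icc s b)).exists_bound_of_continuousOn
    (hg.mono (fun x hx => le_trans hs.1 hx.1))
  have key : ∀ x ∈ Icc s b, ‖f x‖ ≤ gronwallBound 0 C 0 (x - s) := by
    apply norm_le_gronwallBound_of_norm_deriv_right_le
    · exact fun x hx => ((hf x (le_trans hs.1 hx.1)).continuousAt).continuousWithinAt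
    · exact fun x hx => (hf x (le_trans hs.1 hx.1)).hasDerivWithinAt
    · simp [hfs]
    · intro x hx
      have := hC x (Ico_subset_Icc_self hx)
      rw [Real.norm_eq_abs] at this ⊢
      rw [abs_mul]
      calc |f x| * |g x| ≤ |f x| * C := by
            apply mul_le_mul_of_nonneg_left _ (abs_nonneg _)
            exact this
        _ = C * |f x| + 0 := by ring
  have hb' := key b ⟨hs.2, le_refl b⟩
  rw [gronwallBound_ε0, Real.norm_eq_abs] at hb'
  simp at hb'
  linarith

/-- Upper bound via logistic comparison: if `f' ≤ f (r - a f)`, `f ≥ 0`, `f t0 ≤ c`,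
`r/a < c`, then `f ≤ c` on `[t0, ∞)`. -/
lemma logistic_le {f φ : ℝ → ℝ} {t0 c r a : ℝ} (hr : 0 < r) (ha : 0 < a) (hc : r / a < c)
    (hf : ∀ t ≥ t0, HasDerivAt f (φ t) t)
    (hb : ∀ t ≥ t0, φ t ≤ f t * (r - a * f t))
    (h0 : f t0 ≤ c) : ∀ t ≥ t0, f t ≤ c := by
  have hc0 : 0 < c := lt_of_le_of_lt (div_nonneg hr.le ha.le) hc
  have hrac : r - a * c < 0 := by
    rw [div_lt_iff₀ ha] at hc; linarith
  apply barrier_le hf _ h0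
  intro t ht hfc
  calc φ t ≤ f t * (r - a * f t) := hb t ht
    _ = c * (r - a * c) := by rw [hfc]
    _ < 0 := mul_neg_of_pos_of_neg hc0 hrac

/-- Eventual logistic upper bound. -/
lemma logistic_eventually_le {f φ : ℝ → ℝ} {t0 c r a : ℝ} (hr : 0 < r) (ha : 0 < a)
    (hc : r / a < c)
    (hf : ∀ t ≥ t0, HasDerivAt f (φ t) t)
    (hb : ∀ t ≥ t0, φ t ≤ f t * (r - a * f t)) :
    ∃ T ≥ t0, ∀ t ≥ T, f t ≤ c := by
  have hc0 : 0 < c := lt_of_le_of_lt (div_nonneg hr.le ha.le) hc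
  have hδ0 : 0 < a * c - r := by rw [div_lt_iff₀ ha] at hc; linarith
  by_cases hex : ∃ t1 ≥ t0, f t1 ≤ c
  · obtain ⟨t1, ht1, hft1⟩ := hex
    exact ⟨t1, ht1, logistic_le hr ha hc (fun t ht => hf t (ht1.trans ht))
      (fun t ht => hb t (ht1.trans ht)) hft1⟩
  · push_neg at hex
    exfalso
    set δ := a * c - r with hδdef
    have hg : AntitoneOn (fun t => f t + c * δ * (t - t0)) (Ici t0) := by
      apply antitoneOn_of_deriv_nonpos (convex_Ici t0)
      · exact fun x hx => (((hf x hx).continuousAt).add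
          (by fun_prop)).continuousWithinAt
      · intro x hx
        rw [interior_Ici] at hx
        exact (((hf x hx.le).add
          ((((hasDerivAt_id x).sub_const t0).const_mul (c * δ)))).differentiableAt).differentiableWithinAt
      · intro x hx
        rw [interior_Ici] at hx
        have hd : HasDerivAt (fun t => f t + c * δ * (t - t0)) (φ x + c * δ * 1) x :=
          (hf x hx.le).add (((hasDerivAt_id x).sub_const t0).const_mul (c * δ))
        rw [hd.deriv]
        have h1 := hb x hx.le
        have h2 := hex x hx.le
        nlinarith [mul_nonneg (le_of_lt (lt_trans hc0 h2)) (sub_nonneg.2 h2.le)]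
    have hcd : 0 < c * δ := mul_pos hc0 hδ0
    have hq : 0 ≤ (f t0 - c) / (c * δ) := by
      have h2 := hex t0 (le_refl t0)
      exact div_nonneg (by linarith) hcd.le
    set s := t0 + (f t0 - c) / (c * δ) + 1 with hsdef
    have hst0 : t0 ≤ s := by rw [hsdef]; linarith
    have := hg (self_mem_Ici) (mem_Ici.2 hst0) hst0
    simp only at this
    have hfs := hex s hst0
    have hexp : c * δ * (s - t0) = (f t0 - c) + c * δ := by
      rw [hsdef]; field_simp; ring
    nlinarith

/-- Linear Gronwall: `f' ≤ Q - W f` implies exponential bound. -/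
lemma lin_gronwall {f φ : ℝ → ℝ} {t0 Q W : ℝ} (hW : 0 < W)
    (hf : ∀ t ≥ t0, HasDerivAt f (φ t) t)
    (hb : ∀ t ≥ t0, φ t ≤ Q - W * f t) :
    ∀ t ≥ t0, f t ≤ Q / W + (f t0 - Q / W) * Real.exp (-W * (t - t0)) := by
  intro t ht
  set g := fun s => (f s - Q / W) * Real.exp (W * (s - t0)) with hgdef
  have hgd : ∀ x ≥ t0, HasDerivAt g
      (φ x * Real.exp (W * (x - t0)) + (f x - Q / W) * (Real.exp (W * (x - t0)) * (W * 1))) x := by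
    intro x hx
    exact ((hf x hx).sub_const (Q / W)).mul
      ((((hasDerivAt_id x).sub_const t0).const_mul W).exp)
  have hg : AntitoneOn g (Ici t0) := by
    apply antitoneOn_of_deriv_nonpos (convex_Ici t0)
    · exact fun x hx => ((hgd x hx).continuousAt).continuousWithinAt
    · intro x hx
      rw [interior_Ici] at hx
      exact (hgd x hx.le).differentiableAt.differentiableWithinAt
    · intro x hx
      rw [interior_Ici] at hx
      rw [(hgd x hx.le).deriv]
      have h1 := hb x hx.le
      have h2 := Real.exp_pos (W * (x - t0))
      have h4 : φ x * Real.exp (W * (x - t0)) + (f x - Q / W) * (Real.exp (W * (x - t0)) * (W * 1))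
          = (φ x + (W * f x - Q)) * Real.exp (W * (x - t0)) := by
        field_simp
      rw [h4]
      exact mul_nonpos_of_nonpos_of_nonneg (by linarith) h2.le
  have hkey := hg (self_mem_Ici) (mem_Ici.2 ht) ht
  simp only [hgdef, sub_self, mul_zero, Real.exp_zero, mul_one] at hkey
  have hE : Real.exp (-W * (t - t0)) * Real.exp (W * (t - t0)) = 1 := by
    rw [← Real.exp_add]; ring_nf; exact Real.exp_zero
  have hEpos := Real.exp_pos (W * (t - t0))
  have hEpos' := Real.exp_pos (-W * (t - t0))
  have h5 : Real.exp (-W * (t - t0)) * ((f t - Q / W) * Real.exp (W * (t - t0)))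
      = f t - Q / W := by
    rw [show Real.exp (-W * (t - t0)) * ((f t - Q / W) * Real.exp (W * (t - t0)))
        = (f t - Q / W) * (Real.exp (-W * (t - t0)) * Real.exp (W * (t - t0))) from by ring,
      hE, mul_one]
  have h6 : f t - Q / W ≤ (f t0 - Q / W) * Real.exp (-W * (t - t0)) := by
    have := mul_le_mul_of_nonneg_left hkey hEpos'.le
    rw [h5] at this
    linarith [this, mul_comm (Real.exp (-W * (t - t0))) (f t0 - Q / W)]
  linarith

/-- `F(t) ≤ Q/W + (F(0) − Q/W) e^{−Wt}` where `W = min_i n_i`,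
`K = max_i {H_i(0), r_i/a_i}`, `Q = Σ_i (W + r_i) K`; consequently
`limsup_{t→∞} F(t) ≤ Σ_i (1 + r_i/W) r_i/a_i`. -/
theorem statement1
    (n : ℕ) (hn : 0 < n) (r a e ν : ℕ → ℝ) (M : ℕ → ℕ → ℝ)
    (hr : ∀ i < n, 0 < r i) (ha : ∀ i < n, 0 < a i)
    (he : ∀ i < n, 0 < e i) (hν : ∀ i < n, 0 < ν i)
    (hM : ∀ i j, M i j = 0 ∨ M i j = 1)
    (H P : ℝ → ℕ → ℝ)
    (hH : ∀ t ≥ (0:ℝ), ∀ i < n, HasDerivAt (fun s => H s i)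
      (H t i * (r i - ∑ j ∈ Finset.range n, a j * H t j)
        - H t i * ∑ j ∈ Finset.range n, M i j * P t j) t)
    (hP : ∀ t ≥ (0:ℝ), ∀ i < n, HasDerivAt (fun s => P s i)
      (e i * ν i * P t i * ((∑ j ∈ Finset.range n, M j i * H t j) - 1 / e i)) t)
    (h0 : ∀ i < n, 0 ≤ H 0 i ∧ 0 ≤ P 0 i)
    (W K Q : ℝ)
    (hW : W = (Finset.range n).inf' (Finset.nonempty_range_iff.mpr hn.ne') ν)
    (hK : K = (Finset.range n).sup' (Finset.nonempty_range_iff.mpr hn.ne')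
      (fun i => max (H 0 i) (r i / a i)))
    (hQ : Q = ∑ i ∈ Finset.range n, (W + r i) * K) :
    (∀ t ≥ (0:ℝ), Ftot n e ν H P t ≤ Q / W + (Ftot n e ν H P 0 - Q / W) * Real.exp (-W * t)) ∧
    Filter.limsup (Ftot n e ν H P) Filter.atTop
      ≤ ∑ i ∈ Finset.range n, (1 + r i / W) * (r i / a i) := by
  classical
  have hne : (Finset.range n).Nonempty := Finset.nonempty_range_iff.mpr hn.ne'
  have hM0 : ∀ i j, 0 ≤ M i j := by
    intro i j; rcases hM i j with h | h <;> rw [h] <;> norm_num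
  have hW0 : 0 < W := by
    rw [hW]
    exact (Finset.lt_inf'_iff _).mpr fun i hi => hν i (mem_range.1 hi)
  have hWν : ∀ i < n, W ≤ ν i := fun i hi => hW ▸ Finset.inf'_le ν (mem_range.2 hi)
  have hK0 : ∀ i < n, H 0 i ≤ K := fun i hi =>
    le_trans (le_max_left _ _) (hK ▸ Finset.le_sup' _ (mem_range.2 hi))
  have hKra : ∀ i < n, r i / a i ≤ K := fun i hi =>
    le_trans (le_max_right _ _) (hK ▸ Finset.le_sup' _ (mem_range.2 hi))
  have hHc : ∀ j < n, ContinuousOn (fun t => H t j) (Ici 0) := fun j hj x hx =>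
    ((hH x hx j hj).continuousAt).continuousWithinAt
  have hPc : ∀ j < n, ContinuousOn (fun t => P t j) (Ici 0) := fun j hj x hx =>
    ((hP x hx j hj).continuousAt).continuousWithinAt
  -- nonnegativity
  have hHpos : ∀ t ≥ (0:ℝ), ∀ i < n, 0 ≤ H t i := by
    intro t ht i hi
    refine nonneg_of_linear (f := fun s => H s i)
      (g := fun s => (r i - ∑ j ∈ range n, a j * H s j) - ∑ j ∈ range n, M i j * P s j)
      ?_ ?_ (h0 i hi).1 t ht
    · exact (continuousOn_const.sub (continuousOn_finset_sum _ fun j hj =>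
        continuousOn_const.mul (hHc j (mem_range.1 hj)))).sub
        (continuousOn_finset_sum _ fun j hj => continuousOn_const.mul (hPc j (mem_range.1 hj)))
    · intro s hs
      have h := hH s hs i hi
      have heq : H s i * (r i - ∑ j ∈ range n, a j * H s j)
          - H s i * ∑ j ∈ range n, M i j * P s j
          = H s i * ((r i - ∑ j ∈ range n, a j * H s j) - ∑ j ∈ range n, M i j * P s j) := by
        ring
      rwa [heq] at h
  have hPpos : ∀ t ≥ (0:ℝ), ∀ i < n, 0 ≤ P t i := by
    intro t ht i hi
    refine nonneg_of_linear (f := fun s => P s i)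
      (g := fun s => e i * ν i * ((∑ j ∈ range n, M j i * H s j) - 1 / e i))
      ?_ ?_ (h0 i hi).2 t ht
    · exact continuousOn_const.mul ((continuousOn_finset_sum _ fun j hj =>
        continuousOn_const.mul (hHc j (mem_range.1 hj))).sub continuousOn_const)
    · intro s hs
      have h := hP s hs i hi
      have heq : e i * ν i * P s i * ((∑ j ∈ range n, M j i * H s j) - 1 / e i)
          = P s i * (e i * ν i * ((∑ j ∈ range n, M j i * H s j) - 1 / e i)) := by ring
      rwa [heq] at h
  -- logistic bound on the derivative of H i
  have hlb : ∀ i < n, ∀ s ≥ (0:ℝ),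
      H s i * (r i - ∑ j ∈ range n, a j * H s j) - H s i * ∑ j ∈ range n, M i j * P s j
        ≤ H s i * (r i - a i * H s i) := by
    intro i hi s hs
    have h1 : a i * H s i ≤ ∑ j ∈ range n, a j * H s j :=
      Finset.single_le_sum (f := fun j => a j * H s j)
        (fun j hj => mul_nonneg (ha j (mem_range.1 hj)).le (hHpos s hs j (mem_range.1 hj)))
        (mem_range.2 hi)
    have h2 : 0 ≤ ∑ j ∈ range n, M i j * P s j :=
      Finset.sum_nonneg fun j hj => mul_nonneg (hM0 i j) (hPpos s hs j (mem_range.1 hj))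
    have h3 : 0 ≤ H s i := hHpos s hs i hi
    nlinarith [mul_nonneg h3 (sub_nonneg.2 h1), mul_nonneg h3 h2]
  -- H ≤ K
  have hHK : ∀ t ≥ (0:ℝ), ∀ i < n, H t i ≤ K := by
    intro t ht i hi
    apply my_le_of_forall_pos_le_add
    intro ε hε
    have hra : r i / a i < K + ε := lt_of_le_of_lt (hKra i hi) (by linarith)
    exact logistic_le (hr i hi) (ha i hi) hra (fun s hs => hH s hs i hi)
      (fun s hs => hlb i hi s hs) (by linarith [hK0 i hi]) t ht
  -- eventual H bound
  have hHev : ∀ ε > (0:ℝ), ∃ T ≥ (0:ℝ), ∀ t ≥ T, ∀ i < n, H t i ≤ r i / a i + ε := by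
    intro ε hε
    have hi_ev : ∀ i, ∃ T ≥ (0:ℝ), ∀ t ≥ T, i < n → H t i ≤ r i / a i + ε := by
      intro i
      by_cases hi : i < n
      · obtain ⟨T, hT0, hT⟩ := logistic_eventually_le (hr i hi) (ha i hi)
          (lt_add_of_pos_right _ hε) (fun s hs => hH s hs i hi) (fun s hs => hlb i hi s hs)
        exact ⟨T, hT0, fun t ht _ => hT t ht⟩
      · exact ⟨0, le_refl 0, fun t _ h => absurd h hi⟩
    choose Tf hTf0 hTf using hi_ev
    refine ⟨(range n).sup' hne Tf, ?_, ?_⟩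
    · exact le_trans (hTf0 0) (Finset.le_sup' Tf (mem_range.2 hn))
    · intro t ht i hi
      exact hTf i t (le_trans (Finset.le_sup' Tf (mem_range.2 hi)) ht) hi
  -- main estimate
  have main : ∀ t0 ≥ (0:ℝ), ∀ κ : ℕ → ℝ, (∀ t ≥ t0, ∀ i < n, H t i ≤ κ i) →
      ∀ t ≥ t0, Ftot n e ν H P t ≤ (∑ i ∈ range n, (W + r i) * κ i) / W +
        (Ftot n e ν H P t0 - (∑ i ∈ range n, (W + r i) * κ i) / W)
          * Real.exp (-W * (t - t0)) := by
    intro t0 ht0 κ hκ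
    refine lin_gronwall hW0
      (φ := fun t => (∑ i ∈ range n, (H t i * (r i - ∑ j ∈ range n, a j * H t j)
          - H t i * ∑ j ∈ range n, M i j * P t j))
        + ∑ i ∈ range n, (e i * ν i * P t i
            * ((∑ j ∈ range n, M j i * H t j) - 1 / e i)) / (e i * ν i)) ?_ ?_
    · intro t ht
      have h1 : HasDerivAt (fun s => ∑ i ∈ range n, H s i)
          (∑ i ∈ range n, (H t i * (r i - ∑ j ∈ range n, a j * H t j)
            - H t i * ∑ j ∈ range n, M i j * P t j)) t :=
        HasDerivAt.fun_sum fun i hi => hH t (le_trans ht0 ht) i (mem_range.1 hi)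
      have h2 : HasDerivAt (fun s => ∑ i ∈ range n, P s i / (e i * ν i))
          (∑ i ∈ range n, (e i * ν i * P t i
            * ((∑ j ∈ range n, M j i * H t j) - 1 / e i)) / (e i * ν i)) t :=
        HasDerivAt.fun_sum fun i hi =>
          (hP t (le_trans ht0 ht) i (mem_range.1 hi)).div_const (e i * ν i)
      exact h1.add h2
    · intro t ht
      have ht' : (0:ℝ) ≤ t := le_trans ht0 ht
      have e2 : ∀ i ∈ range n, (e i * ν i * P t i
          * ((∑ j ∈ range n, M j i * H t j) - 1 / e i)) / (e i * ν i)
          = P t i * (∑ j ∈ range n, M j i * H t j) - P t i / e i := by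
        intro i hi
        have he' := (he i (mem_range.1 hi)).ne'
        have hν' := (hν i (mem_range.1 hi)).ne'
        field_simp
      rw [Finset.sum_congr rfl e2]
      have e3 : ∑ i ∈ range n, H t i * ∑ j ∈ range n, M i j * P t j
          = ∑ i ∈ range n, P t i * ∑ j ∈ range n, M j i * H t j := by
        simp only [Finset.mul_sum]
        rw [Finset.sum_comm]
        exact Finset.sum_congr rfl fun i _ => Finset.sum_congr rfl fun j _ => by ring
      rw [Finset.sum_sub_distrib, Finset.sum_sub_distrib, e3]
      have hFt : Ftot n e ν H P t
          = ∑ i ∈ range n, H t i + ∑ i ∈ range n, P t i / (e i * ν i) := rfl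
      rw [hFt]
      have b1 : ∑ i ∈ range n, (H t i * (r i - ∑ j ∈ range n, a j * H t j) + W * H t i)
          ≤ ∑ i ∈ range n, (W + r i) * κ i := by
        apply Finset.sum_le_sum
        intro i hi
        have hi' := mem_range.1 hi
        have h3 : 0 ≤ H t i := hHpos t ht' i hi'
        have hS : 0 ≤ ∑ j ∈ range n, a j * H t j :=
          Finset.sum_nonneg fun j hj =>
            mul_nonneg (ha j (mem_range.1 hj)).le (hHpos t ht' j (mem_range.1 hj))
        have h4 : (W + r i) * H t i ≤ (W + r i) * κ i :=
          mul_le_mul_of_nonneg_left (hκ t ht i hi') (by linarith [hr i hi', hW0])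
        nlinarith [mul_nonneg h3 hS]
      have b2 : ∑ i ∈ range n, (W * (P t i / (e i * ν i)) - P t i / e i) ≤ 0 := by
        apply Finset.sum_nonpos
        intro i hi
        have hi' := mem_range.1 hi
        have hp : 0 ≤ P t i := hPpos t ht' i hi'
        have heν : 0 < e i * ν i := mul_pos (he i hi') (hν i hi')
        have h5 : W * (P t i / (e i * ν i)) ≤ ν i * (P t i / (e i * ν i)) :=
          mul_le_mul_of_nonneg_right (hWν i hi') (div_nonneg hp heν.le)
        have he' := (he i hi').ne'
        have hν' := (hν i hi').ne'
        have h6 : ν i * (P t i / (e i * ν i)) = P t i / e i := by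
          field_simp
        linarith
      have s1 : ∑ i ∈ range n, (H t i * (r i - ∑ j ∈ range n, a j * H t j) + W * H t i)
          = (∑ i ∈ range n, H t i * (r i - ∑ j ∈ range n, a j * H t j))
            + W * ∑ i ∈ range n, H t i := by
        rw [Finset.sum_add_distrib, Finset.mul_sum]
      have s2 : ∑ i ∈ range n, (W * (P t i / (e i * ν i)) - P t i / e i)
          = W * (∑ i ∈ range n, P t i / (e i * ν i)) - ∑ i ∈ range n, P t i / e i := by
        rw [Finset.sum_sub_distrib, Finset.mul_sum]
      linarith [b1, b2, s1, s2]
  -- Part 1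
  have part1 : ∀ t ≥ (0:ℝ), Ftot n e ν H P t
      ≤ Q / W + (Ftot n e ν H P 0 - Q / W) * Real.exp (-W * t) := by
    intro t ht
    have h := main 0 le_rfl (fun _ => K) (fun s hs i hi => hHK s hs i hi) t ht
    rw [← hQ, sub_zero] at h
    exact h
  refine ⟨part1, ?_⟩
  -- cobounded
  have hcob : IsCoboundedUnder (· ≤ ·) atTop (Ftot n e ν H P) := by
    apply isCoboundedUnder_le_of_eventually_le atTop (x := (0:ℝ))
    filter_upwards [eventually_ge_atTop (0:ℝ)] with t ht
    have h1 : (0:ℝ) ≤ ∑ i ∈ range n, H t i :=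
      Finset.sum_nonneg fun i hi => hHpos t ht i (mem_range.1 hi)
    have h2 : (0:ℝ) ≤ ∑ i ∈ range n, P t i / (e i * ν i) :=
      Finset.sum_nonneg fun i hi => div_nonneg (hPpos t ht i (mem_range.1 hi))
        (mul_pos (he i (mem_range.1 hi)) (hν i (mem_range.1 hi))).le
    exact add_nonneg h1 h2
  -- limsup bound
  set B := ∑ i ∈ range n, (1 + r i / W) * (r i / a i) with hB
  apply my_le_of_forall_pos_le_add
  intro ε' hε'
  set C := ∑ i ∈ range n, (W + r i) / W with hCdef
  have hC0 : 0 < C :=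
    Finset.sum_pos (fun i hi => div_pos (by linarith [hr i (mem_range.1 hi)]) hW0) hne
  set ε := ε' / (2 * C) with hεdef
  have hε : 0 < ε := div_pos hε' (by linarith)
  obtain ⟨T, hT0, hT⟩ := hHev ε hε
  set Qε := ∑ i ∈ range n, (W + r i) * (r i / a i + ε) with hQε
  have hmain := main T hT0 (fun i => r i / a i + ε) (fun t ht i hi => hT t ht i hi)
  -- Qε / W = B + ε * C
  have hQεW : Qε / W = B + ε * C := by
    rw [hQε, hB, hCdef, Finset.sum_div, Finset.mul_sum, ← Finset.sum_add_distrib]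
    apply Finset.sum_congr rfl
    intro i hi
    rw [show (1:ℝ) + r i / W = (W + r i) / W from by field_simp]
    ring
  have hεC : ε * C = ε' / 2 := by
    rw [hεdef, div_mul_eq_mul_div, mul_comm (2:ℝ) C, ← div_div, mul_div_assoc,
      div_self hC0.ne', mul_one]
  -- the exponential term tends to 0
  have h3 : Tendsto (fun t => -W * (t - T)) atTop atBot := by
    have h4 : Tendsto (fun t : ℝ => W * (t - T)) atTop atTop := by
      apply Tendsto.const_mul_atTop hW0
      exact tendsto_atTop_add_const_right atTop (-T) tendsto_id
    have h5 := tendsto_neg_atTop_atBot.comp h4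
    exact h5.congr fun x => by simp only [Function.comp_apply]; ring
  have htend : Tendsto (fun t => (Ftot n e ν H P T - Qε / W) * Real.exp (-W * (t - T)))
      atTop (nhds 0) := by
    have h6 := (Real.tendsto_exp_atBot.comp h3).const_mul (Ftot n e ν H P T - Qε / W)
    simpa using h6
  have hev : ∀ᶠ t in atTop, Ftot n e ν H P t ≤ Qε / W + ε' / 2 := by
    have h7 : ∀ᶠ t in atTop,
        (Ftot n e ν H P T - Qε / W) * Real.exp (-W * (t - T)) ≤ ε' / 2 :=
      htend.eventually (eventually_le_nhds (by linarith))
    filter_upwards [h7, eventually_ge_atTop T] with t h7t hTt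
    have := hmain t hTt
    linarith
  have hlim : limsup (Ftot n e ν H P) atTop ≤ Qε / W + ε' / 2 :=
    limsup_le_of_le hcob hev
  rw [hQεW, hεC] at hlim
  linarith
end

section
/- For the nested infection network system, a positive equilibrium E* (all 2n components strictly positive) exists if and only if e_1 > e_2 > ... > e_n, r_1 > r_2 > ... > r_n, and Q_n < r_n, where Q_n = a_1/e_1 + Σ_{j=2}^n a_j(1/e_j − 1/e_{j−1}). In that case E* is given explicitly by H_1* = 1/e_1, H_j* = 1/e_j − 1/e_{j−1} for j > 1, P_j* = r_j − r_{j+1} for j < n, and P_n* = r_n − Q_n. -/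
open Filter Finset

/-- `H*` components of the nested-infection-network positive equilibrium. -/
noncomputable def HstarNIN (e : ℕ → ℝ) : ℕ → ℝ
  | 0 => 1 / e 0
  | (j + 1) => 1 / e (j + 1) - 1 / e j

/-- `Q_n = Σ_j a_j H_j*`. -/
noncomputable def QNIN (n : ℕ) (a e : ℕ → ℝ) : ℝ :=
  ∑ j ∈ Finset.range n, a j * HstarNIN e j

/-- `P*` components: `P_j* = r_j − r_{j+1}` for `j < n−1`, `P_{n-1}* = r_{n-1} − Q_n`
(0-based indexing). -/
noncomputable def PstarNIN (n : ℕ) (r a e : ℕ → ℝ) (j : ℕ) : ℝ :=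
  if j = n - 1 then r j - QNIN n a e else r j - r (j + 1)

/-- `(h, p)` is an equilibrium of the NIN system
`H_i' = H_i(r_i − Σ_j a_j H_j − Σ_{j ≥ i} P_j)`, `P_i' = e_i n_i P_i(Σ_{j ≤ i} H_j − 1/e_i)`. -/
def isEqNIN (n : ℕ) (r a e ν : ℕ → ℝ) (h p : ℕ → ℝ) : Prop :=
  (∀ i < n, h i * (r i - (∑ j ∈ Finset.range n, a j * h j) - ∑ j ∈ Finset.Ico i n, p j) = 0) ∧
  (∀ i < n, e i * ν i * p i * ((∑ j ∈ Finset.range (i + 1), h j) - 1 / e i) = 0)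

lemma HsumNIN (e : ℕ → ℝ) (i : ℕ) :
    ∑ j ∈ Finset.range (i + 1), HstarNIN e j = 1 / e i := by
  induction i with
  | zero => simp [HstarNIN]
  | succ k ih => rw [Finset.sum_range_succ, ih]; simp [HstarNIN]

lemma PsumNIN (n : ℕ) (r a e : ℕ → ℝ) :
    ∀ k i, i + k + 1 = n → ∑ j ∈ Finset.Ico i n, PstarNIN n r a e j = r i - QNIN n a e := by
  intro k
  induction k with
  | zero =>
    intro i hi
    have hn : n = i + 1 := by omega
    subst hn
    rw [Nat.Ico_succ_singleton, Finset.sum_singleton]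
    simp [PstarNIN]
  | succ k ih =>
    intro i hi
    have hlt : i < n := by omega
    rw [Finset.sum_eq_sum_Ico_succ_bot hlt, ih (i + 1) (by omega)]
    have hP : PstarNIN n r a e i = r i - r (i + 1) := by
      unfold PstarNIN; rw [if_neg (by omega)]
    rw [hP]; ring

lemma eqUniqueNIN (n : ℕ) (r a e ν : ℕ → ℝ)
    (he : ∀ i < n, 0 < e i) (hν : ∀ i < n, 0 < ν i)
    (h p : ℕ → ℝ) (hpos : ∀ i < n, 0 < h i ∧ 0 < p i)
    (heq : isEqNIN n r a e ν h p) :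
    ∀ i < n, h i = HstarNIN e i ∧ p i = PstarNIN n r a e i := by
  obtain ⟨E1, E2⟩ := heq
  have Ssum : ∀ i < n, ∑ j ∈ Finset.range (i + 1), h j = 1 / e i := by
    intro i hi
    have hne : e i * ν i * p i ≠ 0 :=
      ne_of_gt (mul_pos (mul_pos (he i hi) (hν i hi)) (hpos i hi).2)
    have := (mul_eq_zero.mp (E2 i hi)).resolve_left hne
    linarith
  have hH : ∀ i < n, h i = HstarNIN e i := by
    intro i hi
    match i with
    | 0 =>
      have := Ssum 0 hi
      simpa [HstarNIN] using this
    | (k + 1) =>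
      have s1 := Ssum k (by omega)
      have s2 := Ssum (k + 1) hi
      rw [Finset.sum_range_succ, s1] at s2
      simp only [HstarNIN]
      linarith
  have hQ : ∑ j ∈ Finset.range n, a j * h j = QNIN n a e := by
    unfold QNIN
    exact Finset.sum_congr rfl fun j hj => by rw [hH j (Finset.mem_range.mp hj)]
  have Tsum : ∀ i < n, ∑ j ∈ Finset.Ico i n, p j = r i - QNIN n a e := by
    intro i hi
    have hne : h i ≠ 0 := ne_of_gt (hpos i hi).1
    have := (mul_eq_zero.mp (E1 i hi)).resolve_left hne
    linarith [hQ]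
  have hP : ∀ i < n, p i = PstarNIN n r a e i := by
    intro i hi
    by_cases hc : i = n - 1
    · unfold PstarNIN
      rw [if_pos hc]
      have T := Tsum i hi
      have hIco : Finset.Ico i n = {i} := by
        rw [show n = i + 1 from by omega]; exact Nat.Ico_succ_singleton i
      rw [hIco, Finset.sum_singleton] at T
      exact T
    · unfold PstarNIN
      rw [if_neg hc]
      have T1 := Tsum i hi
      have T2 := Tsum (i + 1) (by omega)
      rw [Finset.sum_eq_sum_Ico_succ_bot hi, T2] at T1
      linarith
  exact fun i hi => ⟨hH i hi, hP i hi⟩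


/-- a positive equilibrium of the NIN system exists iff
`e_1 > ⋯ > e_n`, `r_1 > ⋯ > r_n` and `Q_n < r_n`; in that case it is given by the
explicit formulas `H* , P*`. -/
theorem statement2
    (n : ℕ) (hn : 0 < n) (r a e ν : ℕ → ℝ)
    (hr : ∀ i < n, 0 < r i) (ha : ∀ i < n, 0 < a i)
    (he : ∀ i < n, 0 < e i) (hν : ∀ i < n, 0 < ν i) :
    ((∃ h p : ℕ → ℝ, (∀ i < n, 0 < h i ∧ 0 < p i) ∧ isEqNIN n r a e ν h p) ↔
      ((∀ i, i + 1 < n → e (i + 1) < e i) ∧ (∀ i, i + 1 < n → r (i + 1) < r i) ∧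
        QNIN n a e < r (n - 1))) ∧
    (∀ h p : ℕ → ℝ, (∀ i < n, 0 < h i ∧ 0 < p i) → isEqNIN n r a e ν h p →
      ∀ i < n, h i = HstarNIN e i ∧ p i = PstarNIN n r a e i) := by
  constructor
  · constructor
    · rintro ⟨h, p, hpos, heq⟩
      have key := eqUniqueNIN n r a e ν he hν h p hpos heq
      refine ⟨?_, ?_, ?_⟩
      · intro i hi1
        have h1 := (hpos (i + 1) hi1).1
        rw [(key (i + 1) hi1).1] at h1
        simp only [HstarNIN] at h1
        have h2 : 1 / e i < 1 / e (i + 1) := by linarith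
        exact lt_of_one_div_lt_one_div (he i (by omega)) h2
      · intro i hi1
        have h1 := (hpos i (by omega)).2
        rw [(key i (by omega)).2] at h1
        unfold PstarNIN at h1
        rw [if_neg (by omega)] at h1
        linarith
      · have h1 := (hpos (n - 1) (by omega)).2
        rw [(key (n - 1) (by omega)).2] at h1
        unfold PstarNIN at h1
        rw [if_pos rfl] at h1
        linarith
    · rintro ⟨hE, hR, hQlt⟩
      refine ⟨HstarNIN e, PstarNIN n r a e, ?_, ?_, ?_⟩
      · intro i hi
        constructor
        · match i with
          | 0 => exact one_div_pos.mpr (he 0 hn)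
          | (k + 1) =>
            simp only [HstarNIN]
            have := one_div_lt_one_div_of_lt (he (k + 1) hi) (hE k hi)
            linarith
        · unfold PstarNIN
          split
          · next hc =>
            subst hc
            linarith
          · next hc =>
            have : i + 1 < n := by omega
            linarith [hR i this]
      · intro i hi
        have T := PsumNIN n r a e (n - 1 - i) i (by omega)
        have hQ : (∑ j ∈ Finset.range n, a j * HstarNIN e j) = QNIN n a e := rfl
        rw [hQ, T]
        ring
      · intro i hi
        rw [HsumNIN e i]
        ring
  · exact fun h p hpos heq => eqUniqueNIN n r a e ν he hν h p hpos heq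
end

section
/- In the nested infection network system, if a bounded nonnegative solution satisfies limsup_{t→∞} Σ_{j ≤ i} H_j(t) < 1/e_i, then P_i(t) → 0 as t → ∞. -/
open Filter Finset

/-- `(H, P)` solves the NIN system
`H_i' = H_i(r_i − Σ_j a_j H_j − Σ_{j ≥ i} P_j)`, `P_i' = e_i n_i P_i(Σ_{j ≤ i} H_j − 1/e_i)`
for `t ≥ 0`. -/
def isSolNIN (n : ℕ) (r a e ν : ℕ → ℝ) (H P : ℝ → ℕ → ℝ) : Prop :=
  ∀ t ≥ (0:ℝ), ∀ i < n,
    HasDerivAt (fun s => H s i)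
      (H t i * (r i - (∑ j ∈ Finset.range n, a j * H t j) - ∑ j ∈ Finset.Ico i n, P t j)) t ∧
    HasDerivAt (fun s => P s i)
      (e i * ν i * P t i * ((∑ j ∈ Finset.range (i + 1), H t j) - 1 / e i)) t


/-- in the NIN system, if a bounded nonnegative solution satisfies
`limsup_{t→∞} Σ_{j ≤ i} H_j(t) < 1/e_i`, then `P_i(t) → 0`. -/
theorem statement4
    (n : ℕ) (r a e ν : ℕ → ℝ)
    (hr : ∀ i < n, 0 < r i) (ha : ∀ i < n, 0 < a i)
    (he : ∀ i < n, 0 < e i) (hν : ∀ i < n, 0 < ν i)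
    (H P : ℝ → ℕ → ℝ) (hsol : isSolNIN n r a e ν H P)
    (hpos : ∀ t ≥ (0:ℝ), ∀ j < n, 0 ≤ H t j ∧ 0 ≤ P t j)
    (hbdd : ∃ B : ℝ, ∀ t ≥ (0:ℝ), ∀ j < n, H t j ≤ B ∧ P t j ≤ B)
    (i : ℕ) (hi : i < n)
    (hls : Filter.limsup (fun t => ∑ j ∈ Finset.range (i + 1), H t j) Filter.atTop < 1 / e i) :
    Filter.Tendsto (fun t => P t i) Filter.atTop (nhds 0) := by
  set S : ℝ → ℝ := fun t => ∑ j ∈ Finset.range (i + 1), H t j with hS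
  obtain ⟨b, hb1, hb2⟩ := exists_between hls
  -- boundedness of S
  obtain ⟨B, hB⟩ := hbdd
  have hSbdd : IsBoundedUnder (· ≤ ·) atTop S := by
    apply Filter.isBoundedUnder_of_eventually_le (a := (i+1) * B)
    filter_upwards [eventually_ge_atTop (0:ℝ)] with t ht
    have : S t ≤ ∑ j ∈ Finset.range (i + 1), B := by
      apply Finset.sum_le_sum
      intro j hj
      exact (hB t ht j (lt_of_lt_of_le (Finset.mem_range.mp hj) hi)).1
    simpa using this
  have hev : ∀ᶠ t in atTop, S t < b := eventually_lt_of_limsup_lt hb1 hSbdd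
  obtain ⟨T₀, hT₀⟩ := eventually_atTop.mp hev
  set T : ℝ := max T₀ 0 with hT
  have hT0 : (0:ℝ) ≤ T := le_max_right _ _
  set c : ℝ := e i * ν i with hc
  have hcpos : 0 < c := mul_pos (he i hi) (hν i hi)
  set δ : ℝ := 1 / e i - b with hδ
  have hδpos : 0 < δ := sub_pos.mpr hb2
  set g : ℝ → ℝ := fun t => P t i * Real.exp (c * δ * (t - T)) with hg
  have hgderiv : ∀ t ∈ Set.Ici T,
      HasDerivAt g
        (c * P t i * (S t - 1 / e i) * Real.exp (c * δ * (t - T)) +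
          P t i * (Real.exp (c * δ * (t - T)) * (c * δ))) t := by
    intro t ht
    have ht0 : (0:ℝ) ≤ t := le_trans hT0 ht
    have hP := (hsol t ht0 i hi).2
    have hE : HasDerivAt (fun s : ℝ => Real.exp (c * δ * (s - T)))
        (Real.exp (c * δ * (t - T)) * (c * δ)) t := by
      have h1 : HasDerivAt (fun s : ℝ => c * δ * (s - T)) (c * δ) t := by
        simpa using ((hasDerivAt_id t).sub_const T).const_mul (c * δ)
      exact (Real.hasDerivAt_exp (c * δ * (t - T))).comp t h1
    exact hP.mul hE
  have hderiv_nonpos : ∀ t ∈ Set.Ici T,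
      c * P t i * (S t - 1 / e i) * Real.exp (c * δ * (t - T)) +
        P t i * (Real.exp (c * δ * (t - T)) * (c * δ)) ≤ 0 := by
    intro t ht
    have ht0 : (0:ℝ) ≤ t := le_trans hT0 ht
    have hPt : 0 ≤ P t i := (hpos t ht0 i hi).2
    have hSb : S t < b := hT₀ t (le_trans (le_max_left _ _) ht)
    have hE : (0:ℝ) < Real.exp (c * δ * (t - T)) := Real.exp_pos _
    have key : c * P t i * (S t - 1 / e i) * Real.exp (c * δ * (t - T)) +
        P t i * (Real.exp (c * δ * (t - T)) * (c * δ)) =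
        c * P t i * Real.exp (c * δ * (t - T)) * (S t - b) := by
      rw [hδ]; ring
    rw [key]
    apply mul_nonpos_of_nonneg_of_nonpos
    · positivity
    · linarith
  have hanti : AntitoneOn g (Set.Ici T) := by
    apply antitoneOn_of_deriv_nonpos (convex_Ici T)
    · exact fun t ht => (hgderiv t ht).continuousAt.continuousWithinAt
    · intro t ht
      rw [interior_Ici] at ht
      exact (hgderiv t (Set.mem_Ici.mpr (le_of_lt ht))).differentiableAt.differentiableWithinAt
    · intro t ht
      rw [interior_Ici] at ht
      rw [(hgderiv t (Set.mem_Ici.mpr (le_of_lt ht))).deriv]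
      exact hderiv_nonpos t (Set.mem_Ici.mpr (le_of_lt ht))
  -- P t i ≤ P T i * exp (-(c*δ)*(t-T)) for t ≥ T
  have hupper : ∀ t ≥ T, P t i ≤ P T i * Real.exp (-(c * δ) * (t - T)) := by
    intro t ht
    have := hanti (Set.self_mem_Ici) ht ht
    have hgT : g T = P T i := by simp [hg]
    rw [hgT] at this
    have hE : (0:ℝ) < Real.exp (c * δ * (t - T)) := Real.exp_pos _
    have : P t i ≤ P T i / Real.exp (c * δ * (t - T)) := by
      rw [le_div_iff₀ hE]; exact this
    calc P t i ≤ P T i / Real.exp (c * δ * (t - T)) := this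
      _ = P T i * Real.exp (-(c * δ) * (t - T)) := by
          rw [neg_mul, Real.exp_neg, div_eq_mul_inv]
  have hub : Tendsto (fun t => P T i * Real.exp (-(c * δ) * (t - T))) atTop (nhds 0) := by
    have h1 : Tendsto (fun t : ℝ => -(c * δ) * (t - T)) atTop atBot := by
      have hlin : Tendsto (fun t : ℝ => t - T) atTop atTop :=
        tendsto_atTop_add_const_right atTop (-T) tendsto_id |>.congr
          (fun x => by simp only [id]; ring)
      exact hlin.const_mul_atTop_of_neg (by nlinarith)
    have h2 : Tendsto (fun t : ℝ => Real.exp (-(c * δ) * (t - T))) atTop (nhds 0) :=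
      Real.tendsto_exp_atBot.comp h1
    simpa using h2.const_mul (P T i)
  apply tendsto_of_tendsto_of_tendsto_of_le_of_le' tendsto_const_nhds hub
  · filter_upwards [eventually_ge_atTop (0:ℝ)] with t ht
    exact (hpos t ht i hi).2
  · filter_upwards [eventually_ge_atTop T] with t ht
    exact hupper t ht
end

section
/- In the nested infection network system, if i < j, P_i(0) > 0, and limsup_{t→∞} (H_{i+1}(t) + ... + H_j(t)) < 1/e_j − 1/e_i, then P_j(t) → 0 as t → ∞. -/
open Filter Finset

/-- in the NIN system, if `i < j`, `P_i(0) > 0` and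
`limsup_{t→∞} (H_{i+1} + ⋯ + H_j)(t) < 1/e_j − 1/e_i`, then `P_j(t) → 0`. -/
theorem statement5
    (n : ℕ) (r a e ν : ℕ → ℝ)
    (hr : ∀ i < n, 0 < r i) (ha : ∀ i < n, 0 < a i)
    (he : ∀ i < n, 0 < e i) (hν : ∀ i < n, 0 < ν i)
    (heord : ∀ i, i + 1 < n → e (i + 1) < e i)
    (H P : ℝ → ℕ → ℝ) (hsol : isSolNIN n r a e ν H P)
    (hpos : ∀ t ≥ (0:ℝ), ∀ k < n, 0 ≤ H t k ∧ 0 ≤ P t k)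
    (hbdd : ∃ B : ℝ, ∀ t ≥ (0:ℝ), ∀ k < n, H t k ≤ B ∧ P t k ≤ B)
    (i j : ℕ) (hij : i < j) (hj : j < n)
    (hPi0 : 0 < P 0 i)
    (hls : Filter.limsup (fun t => ∑ k ∈ Finset.Icc (i + 1) j, H t k) Filter.atTop
      < 1 / e j - 1 / e i) :
    Filter.Tendsto (fun t => P t j) Filter.atTop (nhds 0) := by
  obtain ⟨B, hB⟩ := hbdd
  have hi : i < n := hij.trans hj
  have hein : 0 < e i := he i hi
  have hejn : 0 < e j := he j hj
  have hνi : 0 < ν i := hν i hi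
  have hνj : 0 < ν j := hν j hj
  have hB0 : 0 < B := lt_of_lt_of_le hPi0 (hB 0 le_rfl i hi).2
  set c : ℝ := (e j * ν j) / (e i * ν i) with hc
  have hc0 : 0 < c := div_pos (mul_pos hejn hνj) (mul_pos hein hνi)
  set L : ℝ := 1 / e j - 1 / e i with hL
  -- Step A: P t i > 0 for t ≥ 0
  have hPipos : ∀ t ≥ (0:ℝ), 0 < P t i := by
    intro t ht
    set g : ℝ → ℝ := fun s => P s i * Real.exp (ν i * s) with hg
    have hgd : ∀ s ≥ (0:ℝ), HasDerivAt g
        (e i * ν i * P s i * (∑ k ∈ Finset.range (i+1), H s k) * Real.exp (ν i * s)) s := by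
      intro s hs
      have h1 := (hsol s hs i hi).2
      have h2 : HasDerivAt (fun u => Real.exp (ν i * u)) (Real.exp (ν i * s) * ν i) s := by
        simpa using ((hasDerivAt_id s).const_mul (ν i)).exp
      have := h1.mul h2
      refine this.congr_deriv ?_
      field_simp
      ring
    have hgmono : MonotoneOn g (Set.Ici (0:ℝ)) := by
      apply monotoneOn_of_deriv_nonneg (convex_Ici 0)
      · intro s hs
        exact (hgd s hs).continuousAt.continuousWithinAt
      · intro s hs
        rw [interior_Ici] at hs
        exact (hgd s hs.le).differentiableAt.differentiableWithinAt
      · intro s hs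
        rw [interior_Ici] at hs
        rw [(hgd s hs.le).deriv]
        have hS : 0 ≤ ∑ k ∈ Finset.range (i+1), H s k :=
          Finset.sum_nonneg fun k hk =>
            (hpos s hs.le k ((Nat.lt_succ_iff.mp (Finset.mem_range.mp hk)).trans_lt hi)).1
        have hP : 0 ≤ P s i := (hpos s hs.le i hi).2
        have := Real.exp_pos (ν i * s)
        positivity
    have h0t : g 0 ≤ g t := hgmono Set.self_mem_Ici ht ht
    have hg0 : 0 < g 0 := by simp [hg, hPi0]
    have : 0 < g t := lt_of_lt_of_le hg0 h0t
    simp only [hg] at this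
    rcases mul_pos_iff.mp this with ⟨h1, _⟩ | ⟨_, h2⟩
    · exact h1
    · exact absurd (Real.exp_pos (ν i * t)) (not_lt.mpr h2.le)
  -- limsup step
  obtain ⟨b, hb1, hb2⟩ := exists_between hls
  have hbddU : IsBoundedUnder (· ≤ ·) atTop (fun t => ∑ k ∈ Finset.Icc (i + 1) j, H t k) := by
    refine ⟨(j + 1 : ℝ) * B, ?_⟩
    rw [eventually_map]
    filter_upwards [eventually_ge_atTop (0:ℝ)] with t ht
    have h1 : ∑ k ∈ Finset.Icc (i+1) j, H t k ≤ ∑ _k ∈ Finset.Icc (i+1) j, B :=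
      Finset.sum_le_sum fun k hk => (hB t ht k ((Finset.mem_Icc.mp hk).2.trans_lt hj)).1
    rw [Finset.sum_const, nsmul_eq_mul] at h1
    refine h1.trans ?_
    have hcard : ((Finset.Icc (i+1) j).card : ℝ) ≤ (j + 1 : ℝ) := by
      rw [Nat.card_Icc]
      exact_mod_cast (by omega : j + 1 - (i + 1) ≤ j + 1)
    exact mul_le_mul_of_nonneg_right hcard hB0.le
  have hev := Filter.eventually_lt_of_limsup_lt hb1 hbddU
  obtain ⟨T₀, hT₀⟩ := hev.exists_forall_of_atTop
  set ε : ℝ := L - b with hε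
  have hε0 : 0 < ε := sub_pos.mpr hb2
  set lam : ℝ := e j * ν j * ε with hlam
  have hlam0 : 0 < lam := mul_pos (mul_pos hejn hνj) hε0
  set G : ℝ → ℝ := fun s => P s j * Real.exp (-c * Real.log (P s i)) with hGdef
  have hGnn : ∀ s ≥ (0:ℝ), 0 ≤ G s := fun s hs =>
    mul_nonneg (hpos s hs j hj).2 (Real.exp_nonneg _)
  have hG' : ∀ s ≥ (0:ℝ), HasDerivAt G
      (e j * ν j * ((∑ k ∈ Finset.Icc (i+1) j, H s k) - L) * G s) s := by
    intro s hs
    have hPis := hPipos s hs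
    have h1 := (hsol s hs i hi).2
    have h2 := (hsol s hs j hj).2
    have hlog := h1.log hPis.ne'
    have hexp := (hlog.const_mul (-c)).exp
    have hmul := h2.mul hexp
    refine hmul.congr_deriv ?_
    have hsum : (∑ k ∈ Finset.range (j+1), H s k)
        = (∑ k ∈ Finset.range (i+1), H s k) + ∑ k ∈ Finset.Icc (i+1) j, H s k := by
      rw [← Finset.Ico_add_one_right_eq_Icc, Finset.sum_Ico_eq_sub _ (by omega : i+1 ≤ j+1)]
      ring
    rw [hsum]
    simp only [hGdef]
    set E : ℝ := Real.exp (-c * Real.log (P s i)) with hE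
    rw [hc, hL]
    field_simp
    ring
  set h : ℝ → ℝ := fun s => G s * Real.exp (lam * s) with hhdef
  have hh' : ∀ s ≥ (0:ℝ), HasDerivAt h
      (e j * ν j * ((∑ k ∈ Finset.Icc (i+1) j, H s k) - L + ε) * G s * Real.exp (lam * s)) s := by
    intro s hs
    have h2 : HasDerivAt (fun u => Real.exp (lam * u)) (Real.exp (lam * s) * lam) s := by
      simpa using ((hasDerivAt_id s).const_mul lam).exp
    have := (hG' s hs).mul h2
    refine this.congr_deriv ?_
    rw [hlam]
    ring
  set T₁ : ℝ := max T₀ 0 with hT₁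
  have hT₁0 : (0:ℝ) ≤ T₁ := le_max_right _ _
  have hanti : AntitoneOn h (Set.Ici T₁) := by
    apply antitoneOn_of_deriv_nonpos (convex_Ici T₁)
    · intro s hs
      exact (hh' s (hT₁0.trans hs)).continuousAt.continuousWithinAt
    · intro s hs
      rw [interior_Ici] at hs
      exact (hh' s (hT₁0.trans hs.le)).differentiableAt.differentiableWithinAt
    · intro s hs
      rw [interior_Ici] at hs
      have hs0 : (0:ℝ) ≤ s := hT₁0.trans hs.le
      rw [(hh' s hs0).deriv]
      have hfb : (∑ k ∈ Finset.Icc (i+1) j, H s k) < b :=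
        hT₀ s (le_of_lt (lt_of_le_of_lt (le_max_left T₀ 0) hs))
      have h1 : (∑ k ∈ Finset.Icc (i+1) j, H s k) - L + ε ≤ 0 := by
        rw [hε]; linarith
      have h2 : e j * ν j * ((∑ k ∈ Finset.Icc (i+1) j, H s k) - L + ε) ≤ 0 :=
        mul_nonpos_of_nonneg_of_nonpos (by positivity) h1
      have h3 := mul_nonpos_of_nonpos_of_nonneg h2 (hGnn s hs0)
      exact mul_nonpos_of_nonpos_of_nonneg h3 (Real.exp_nonneg _)
  set A : ℝ := h T₁ with hA
  have hA0 : 0 ≤ A := mul_nonneg (hGnn T₁ hT₁0) (Real.exp_nonneg _)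
  set M : ℝ := Real.exp (c * Real.log B) with hM
  have htend : Tendsto (fun t => A * M * Real.exp (-(lam * t))) atTop (nhds 0) := by
    have h1 : Tendsto (fun t : ℝ => lam * t) atTop atTop := tendsto_id.const_mul_atTop hlam0
    have h2 : Tendsto (fun t : ℝ => Real.exp (-(lam * t))) atTop (nhds 0) :=
      Real.tendsto_exp_neg_atTop_nhds_zero.comp h1
    simpa using h2.const_mul (A * M)
  refine squeeze_zero' ?_ ?_ htend
  · filter_upwards [eventually_ge_atTop (0:ℝ)] with t ht
    exact (hpos t ht j hj).2
  · filter_upwards [eventually_ge_atTop T₁] with t ht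
    have ht0 : (0:ℝ) ≤ t := hT₁0.trans ht
    have hht : h t ≤ A := hanti Set.self_mem_Ici ht ht
    have hGle : G t ≤ A * Real.exp (-(lam * t)) := by
      rw [Real.exp_neg, mul_comm, inv_mul_eq_div, le_div_iff₀ (Real.exp_pos _)]
      exact hht
    have hPieq : P t j = G t * Real.exp (c * Real.log (P t i)) := by
      simp only [hGdef]
      rw [mul_assoc, ← Real.exp_add, neg_mul, neg_add_cancel, Real.exp_zero, mul_one]
    have hE2 : Real.exp (c * Real.log (P t i)) ≤ M := by
      rw [hM]
      apply Real.exp_le_exp.mpr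
      exact mul_le_mul_of_nonneg_left
        (Real.log_le_log (hPipos t ht0) (hB t ht0 i hi).2) hc0.le
    calc P t j = G t * Real.exp (c * Real.log (P t i)) := hPieq
      _ ≤ (A * Real.exp (-(lam * t))) * M :=
          mul_le_mul hGle hE2 (Real.exp_nonneg _)
            (mul_nonneg hA0 (Real.exp_nonneg _))
      _ = A * M * Real.exp (-(lam * t)) := by ring
end

section
/- In the nested infection network system, if i < j, H_i(0) > 0, and limsup_{t→∞} (P_i(t) + P_{i+1}(t) + ... + P_{j−1}(t)) < r_i − r_j, then H_j(t) → 0 as t → ∞. -/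
open Filter Finset

/-- If `|u'| ≤ K|u|` on `[a,b]` and `u a = 0` then `u b = 0`. -/
lemma vanish_of_deriv_bound (u u' : ℝ → ℝ) (K a b : ℝ) (hab : a ≤ b)
    (hd : ∀ t ∈ Set.Icc a b, HasDerivAt u (u' t) t)
    (hb : ∀ t ∈ Set.Icc a b, |u' t| ≤ K * |u t|)
    (h0 : u a = 0) : u b = 0 := by
  have hc : ContinuousOn u (Set.Icc a b) := fun t ht => ((hd t ht).continuousAt).continuousWithinAt
  have := norm_le_gronwallBound_of_norm_deriv_right_le (f := u) (f' := u') (δ := 0) (K := K)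
    (ε := 0) (a := a) (b := b) hc
    (fun t ht => ((hd t (Set.mem_Icc_of_Ico ht)).hasDerivWithinAt))
    (by simp [h0]) (fun t ht => by simpa using hb t (Set.mem_Icc_of_Ico ht))
  have hbb := this b (Set.right_mem_Icc.2 hab)
  rw [gronwallBound_ε0_δ0] at hbb
  simpa using hbb

/-- in the NIN system, if `i < j`, `H_i(0) > 0` and
`limsup_{t→∞} (P_i + P_{i+1} + ⋯ + P_{j−1})(t) < r_i − r_j`, then `H_j(t) → 0`. -/
theorem statement6
    (n : ℕ) (r a e ν : ℕ → ℝ)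
    (hr : ∀ i < n, 0 < r i) (ha : ∀ i < n, 0 < a i)
    (he : ∀ i < n, 0 < e i) (hν : ∀ i < n, 0 < ν i)
    (hrord : ∀ i, i + 1 < n → r (i + 1) < r i)
    (H P : ℝ → ℕ → ℝ) (hsol : isSolNIN n r a e ν H P)
    (hpos : ∀ t ≥ (0:ℝ), ∀ k < n, 0 ≤ H t k ∧ 0 ≤ P t k)
    (hbdd : ∃ B : ℝ, ∀ t ≥ (0:ℝ), ∀ k < n, H t k ≤ B ∧ P t k ≤ B)
    (i j : ℕ) (hij : i < j) (hj : j < n)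
    (hHi0 : 0 < H 0 i)
    (hls : Filter.limsup (fun t => ∑ k ∈ Finset.Ico i j, P t k) Filter.atTop < r i - r j) :
    Filter.Tendsto (fun t => H t j) Filter.atTop (nhds 0) := by
  obtain ⟨B, hB⟩ := hbdd
  have hin : i < n := lt_trans hij hj
  have hBnn : 0 ≤ B := le_trans (hpos 0 le_rfl i hin).1 (hB 0 le_rfl i hin).1
  set c : ℕ → ℝ → ℝ := fun k t =>
    r k - (∑ m ∈ Finset.range n, a m * H t m) - ∑ m ∈ Finset.Ico k n, P t m with hc
  have hderiv : ∀ k < n, ∀ t ≥ (0:ℝ), HasDerivAt (fun s => H s k) (H t k * c k t) t :=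
    fun k hk t ht => (hsol t ht k hk).1
  -- bound on the coefficients
  set K : ℕ → ℝ := fun k => |r k| + (∑ m ∈ Finset.range n, |a m|) * B + n * B with hKdef
  have hKb : ∀ k, ∀ t ≥ (0:ℝ), |c k t| ≤ K k := by
    intro k t ht
    have h1 : |∑ m ∈ Finset.range n, a m * H t m| ≤ (∑ m ∈ Finset.range n, |a m|) * B := by
      calc |∑ m ∈ Finset.range n, a m * H t m| ≤ ∑ m ∈ Finset.range n, |a m * H t m| :=
            Finset.abs_sum_le_sum_abs _ _
        _ ≤ ∑ m ∈ Finset.range n, |a m| * B := by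
            refine Finset.sum_le_sum fun m hm => ?_
            rw [abs_mul]
            have hm' := Finset.mem_range.1 hm
            have h0 := (hpos t ht m hm').1
            have h1 := (hB t ht m hm').1
            exact mul_le_mul_of_nonneg_left (by rwa [abs_of_nonneg h0]) (abs_nonneg _)
        _ = (∑ m ∈ Finset.range n, |a m|) * B := by rw [Finset.sum_mul]
    have h2 : |∑ m ∈ Finset.Ico k n, P t m| ≤ (n : ℝ) * B := by
      calc |∑ m ∈ Finset.Ico k n, P t m| ≤ ∑ m ∈ Finset.Ico k n, |P t m| :=
            Finset.abs_sum_le_sum_abs _ _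
        _ ≤ ∑ m ∈ Finset.Ico k n, B := by
            refine Finset.sum_le_sum fun m hm => ?_
            have hm' := (Finset.mem_Ico.1 hm).2
            rw [abs_of_nonneg (hpos t ht m hm').2]
            exact (hB t ht m hm').2
        _ = ((n - k : ℕ) : ℝ) * B := by rw [Finset.sum_const, Nat.card_Ico]; simp
        _ ≤ (n : ℝ) * B := by
            apply mul_le_mul_of_nonneg_right _ hBnn
            exact_mod_cast Nat.sub_le n k
    calc |c k t| ≤ |r k - ∑ m ∈ Finset.range n, a m * H t m| + |∑ m ∈ Finset.Ico k n, P t m| :=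
          abs_sub _ _
      _ ≤ (|r k| + |∑ m ∈ Finset.range n, a m * H t m|) + |∑ m ∈ Finset.Ico k n, P t m| := by
          gcongr; exact abs_sub _ _
      _ ≤ K k := by rw [hKdef]; dsimp only; gcongr
  -- positivity propagation
  have hposH : ∀ k < n, 0 < H 0 k → ∀ t ≥ (0:ℝ), 0 < H t k := by
    intro k hk h0 t ht
    rcases ((hpos t ht k hk).1).lt_or_eq with h | h
    · exact h
    exfalso
    have hz : H 0 k = 0 := by
      have := vanish_of_deriv_bound (fun s => H (t - s) k)
        (fun s => -(H (t - s) k * c k (t - s))) (K k) 0 t ht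
        (fun s hs => by
          have hts : (0:ℝ) ≤ t - s := by
            have := hs.2; simp only [Set.mem_Icc] at hs; linarith [hs.2]
          have h1 := hderiv k hk (t - s) hts
          have h2 : HasDerivAt (fun u : ℝ => t - u) (-1) s := by
            simpa using (hasDerivAt_id s).const_sub t
          have h3 := h1.comp s h2
          simpa [Function.comp_def, mul_neg_one, neg_mul] using h3)
        (fun s hs => by
          have hts : (0:ℝ) ≤ t - s := by simp only [Set.mem_Icc] at hs; linarith [hs.2]
          rw [abs_neg, abs_mul, mul_comm]
          exact mul_le_mul_of_nonneg_right (hKb k _ hts) (abs_nonneg _))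
        (by simpa using h.symm)
      simpa using this
    linarith
  -- case on H 0 j
  rcases ((hpos 0 le_rfl j hj).1).lt_or_eq with hj0 | hj0
  · -- H 0 j > 0 : use the log-ratio
    have hpi : ∀ t ≥ (0:ℝ), 0 < H t i := hposH i hin hHi0
    have hpj : ∀ t ≥ (0:ℝ), 0 < H t j := hposH j hj hj0
    set L : ℝ → ℝ := fun t => Real.log (H t j) - Real.log (H t i) with hLdef
    have hLd : ∀ t ≥ (0:ℝ),
        HasDerivAt L ((r j - r i) + ∑ k ∈ Finset.Ico i j, P t k) t := by
      intro t ht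
      have h1 : HasDerivAt (fun s => Real.log (H s j)) (c j t) t := by
        have := (hderiv j hj t ht).log (ne_of_gt (hpj t ht))
        rwa [mul_comm, mul_div_assoc, div_self (ne_of_gt (hpj t ht)), mul_one] at this
      have h2 : HasDerivAt (fun s => Real.log (H s i)) (c i t) t := by
        have := (hderiv i hin t ht).log (ne_of_gt (hpi t ht))
        rwa [mul_comm, mul_div_assoc, div_self (ne_of_gt (hpi t ht)), mul_one] at this
      have h3 := h1.sub h2
      have hsum : ∑ m ∈ Finset.Ico i j, P t m + ∑ m ∈ Finset.Ico j n, P t m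
          = ∑ m ∈ Finset.Ico i n, P t m :=
        Finset.sum_Ico_consecutive _ (le_of_lt hij) (le_of_lt hj)
      have : c j t - c i t = (r j - r i) + ∑ k ∈ Finset.Ico i j, P t k := by
        simp only [hc]; linarith
      rwa [this] at h3
    -- find δ and T
    set M := Filter.limsup (fun t => ∑ k ∈ Finset.Ico i j, P t k) Filter.atTop with hM
    set δ : ℝ := (r i - r j - M) / 2 with hδdef
    have hδ : 0 < δ := by rw [hδdef]; linarith
    have hbP : IsBoundedUnder (· ≤ ·) atTop (fun t => ∑ k ∈ Finset.Ico i j, P t k) := by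
      refine ⟨(j : ℝ) * B, eventually_atTop.2 ⟨0, fun t ht => ?_⟩⟩
      calc ∑ k ∈ Finset.Ico i j, P t k ≤ ∑ k ∈ Finset.Ico i j, B :=
            Finset.sum_le_sum fun m hm =>
              (hB t ht m (lt_of_lt_of_le (Finset.mem_Ico.1 hm).2 (le_of_lt hj))).2
        _ = ((j - i : ℕ) : ℝ) * B := by rw [Finset.sum_const, Nat.card_Ico]; simp
        _ ≤ (j : ℝ) * B := by
            apply mul_le_mul_of_nonneg_right _ hBnn
            exact_mod_cast Nat.sub_le j i
    have hev : ∀ᶠ t in atTop, (∑ k ∈ Finset.Ico i j, P t k) < M + δ :=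
      eventually_lt_of_limsup_lt (by rw [← hM]; linarith) hbP
    obtain ⟨T0, hT0⟩ := eventually_atTop.1 hev
    set T : ℝ := max T0 0 with hTdef
    have hT0' : ∀ t ≥ T, (∑ k ∈ Finset.Ico i j, P t k) < M + δ :=
      fun t ht => hT0 t (le_trans (le_max_left _ _) ht)
    have hTnn : (0:ℝ) ≤ T := le_max_right _ _
    -- g is antitone on [T, ∞)
    set g : ℝ → ℝ := fun t => L t + δ * t with hgdef
    have hgd : ∀ t ≥ (0:ℝ),
        HasDerivAt g ((r j - r i) + (∑ k ∈ Finset.Ico i j, P t k) + δ) t := by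
      intro t ht
      have h1 : HasDerivAt (fun s : ℝ => δ * s) δ t := by
        simpa using (hasDerivAt_id t).const_mul δ
      exact (hLd t ht).add h1
    have hanti : AntitoneOn g (Set.Ici T) := by
      apply antitoneOn_of_deriv_nonpos (convex_Ici T)
      · exact fun t ht =>
          ((hgd t (le_trans hTnn ht)).continuousAt).continuousWithinAt
      · intro t ht
        rw [interior_Ici] at ht
        exact ((hgd t (le_trans hTnn (le_of_lt ht))).differentiableAt).differentiableWithinAt
      · intro t ht
        rw [interior_Ici] at ht
        have h1 := (hgd t (le_trans hTnn (le_of_lt ht))).deriv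
        rw [h1]
        have h2 := hT0' t (le_of_lt ht)
        have : M + δ = r i - r j - δ := by rw [hδdef]; ring
        rw [this] at h2
        linarith
    -- exponential bound and squeeze
    have key : ∀ t ≥ T, H t j ≤ Real.exp (g T - δ * t) * B := by
      intro t ht
      have ht0 : (0:ℝ) ≤ t := le_trans hTnn ht
      have hL : L t ≤ g T - δ * t := by
        have := hanti (Set.self_mem_Ici) (Set.mem_Ici.2 ht) ht
        simp only [hgdef] at this ⊢
        linarith
      have hHeq : H t j = Real.exp (L t) * H t i := by
        rw [hLdef]
        simp only [Real.exp_sub, Real.exp_log (hpj t ht0), Real.exp_log (hpi t ht0)]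
        rw [div_mul_cancel₀ _ (ne_of_gt (hpi t ht0))]
      rw [hHeq]
      exact mul_le_mul (Real.exp_le_exp.2 hL) (hB t ht0 i hin).1
        (le_of_lt (hpi t ht0)) (Real.exp_pos _).le
    have hlim : Tendsto (fun t => Real.exp (g T - δ * t) * B) atTop (nhds 0) := by
      have h1 : Tendsto (fun t : ℝ => δ * t) atTop atTop :=
        Tendsto.const_mul_atTop hδ tendsto_id
      have h1' : Tendsto (fun t : ℝ => -(δ * t)) atTop atBot :=
        tendsto_neg_atTop_atBot.comp h1
      have h2 : Tendsto (fun t : ℝ => g T - δ * t) atTop atBot := by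
        simpa [sub_eq_add_neg] using tendsto_atBot_add_const_left atTop (g T) h1'
      have h3 := (Real.tendsto_exp_atBot.comp h2).mul_const B
      simpa using h3
    refine squeeze_zero' ?_ ?_ hlim
    · exact eventually_atTop.2 ⟨0, fun t ht => (hpos t ht j hj).1⟩
    · exact eventually_atTop.2 ⟨T, key⟩
  · -- H 0 j = 0 : H j ≡ 0 on [0, ∞)
    have hz : ∀ t ≥ (0:ℝ), H t j = 0 := by
      intro t ht
      exact vanish_of_deriv_bound (fun s => H s j) (fun s => H s j * c j s) (K j) 0 t ht
        (fun s hs => hderiv j hj s hs.1)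
        (fun s hs => by
          rw [abs_mul, mul_comm]
          exact mul_le_mul_of_nonneg_right (hKb j s hs.1) (abs_nonneg _))
        hj0.symm
    have : (fun t => H t j) =ᶠ[atTop] fun _ => (0:ℝ) :=
      eventually_atTop.2 ⟨0, hz⟩
    exact Tendsto.congr' this.symm tendsto_const_nhds
end

section
/- In the nested infection network system with all virus identically zero (P_i ≡ 0 for all i) and H_1(0) > 0, the first host converges: H_1(t) → r_1/a_1, and H_j(t) → 0 for j ≥ 2. -/
open Filter Finset Topology

private lemma const_on_nonneg (φ : ℝ → ℝ)
    (hc : ∀ t ≥ (0:ℝ), ContinuousAt φ t)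
    (hd : ∀ t ≥ (0:ℝ), HasDerivWithinAt φ 0 (Set.Ici t) t) :
    ∀ t ≥ (0:ℝ), φ t = φ 0 := by
  intro t ht
  exact constant_of_has_deriv_right_zero
    (fun u hu => (hc u hu.1).continuousWithinAt)
    (fun u hu => hd u hu.1) t ⟨ht, le_rfl⟩

private lemma exp_rep (c f : ℝ → ℝ) (hc : Continuous c)
    (hf : ∀ t ≥ (0:ℝ), HasDerivAt f (f t * c t) t) :
    ∀ t ≥ (0:ℝ), f t = f 0 * Real.exp (∫ s in (0:ℝ)..t, c s) := by
  have hI : ∀ t : ℝ, HasDerivAt (fun u => ∫ s in (0:ℝ)..u, c s) (c t) t := fun t =>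
    intervalIntegral.integral_hasDerivAt_right (hc.intervalIntegrable _ _)
      (hc.stronglyMeasurableAtFilter _ _) hc.continuousAt
  set I : ℝ → ℝ := fun u => ∫ s in (0:ℝ)..u, c s with hIdef
  have hconst : ∀ t ≥ (0:ℝ), f t * Real.exp (-I t) = f 0 * Real.exp (-I 0) := by
    apply const_on_nonneg
    · intro t ht
      exact ((hf t ht).continuousAt).mul ((hI t).neg.exp.continuousAt)
    · intro t ht
      have h2 : HasDerivAt (fun s => Real.exp (-I s)) (Real.exp (-I t) * -(c t)) t :=
        (hI t).neg.exp
      have := ((hf t ht).hasDerivWithinAt).mul (h2.hasDerivWithinAt (s := Set.Ici t))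
      refine this.congr_deriv ?_
      ring
  intro t ht
  have h := hconst t ht
  have hI0 : I 0 = 0 := intervalIntegral.integral_same
  rw [hI0, neg_zero, Real.exp_zero, mul_one, Real.exp_neg] at h
  have hne : Real.exp (I t) ≠ 0 := (Real.exp_pos _).ne'
  field_simp at h
  exact h.trans (mul_comm _ _)

private lemma lin_unique (ρ : ℝ) (β u v : ℝ → ℝ)
    (hu : ∀ t ≥ (0:ℝ), HasDerivAt u (β t - ρ * u t) t)
    (hv : ∀ t, HasDerivAt v (β t - ρ * v t) t)
    (h0 : u 0 = v 0) : ∀ t ≥ (0:ℝ), u t = v t := by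
  have hconst : ∀ t ≥ (0:ℝ),
      (u t - v t) * Real.exp (ρ * t) = (u 0 - v 0) * Real.exp (ρ * 0) := by
    apply const_on_nonneg
    · intro t ht
      exact ((hu t ht).continuousAt.sub (hv t).continuousAt).mul
        (((hasDerivAt_id t).const_mul ρ).exp.continuousAt)
    · intro t ht
      have he : HasDerivAt (fun s => Real.exp (ρ * s)) (Real.exp (ρ * t) * ρ) t := by
        simpa using ((hasDerivAt_id t).const_mul ρ).exp
      have := (((hu t ht).sub (hv t)).hasDerivWithinAt).mul
        (he.hasDerivWithinAt (s := Set.Ici t))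
      refine this.congr_deriv ?_
      simp only [Pi.sub_apply]
      ring
  intro t ht
  have h := hconst t ht
  rw [h0, sub_self, zero_mul] at h
  have hne : Real.exp (ρ * t) ≠ 0 := (Real.exp_pos _).ne'
  have h' : u t - v t = 0 := by
    rcases mul_eq_zero.1 h with h' | h'
    · exact h'
    · exact absurd h' hne
  linarith

/-- with all virus identically zero the NIN system reduces to the
Lotka–Volterra competition system `H_i' = H_i(r_i − Σ_j a_j H_j)`; if `H_1(0) > 0` then
`H_1(t) → r_1/a_1` and `H_j(t) → 0` for `j ≥ 2`. -/
theorem statement7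
    (n : ℕ) (hn : 0 < n) (r a : ℕ → ℝ)
    (hr : ∀ i < n, 0 < r i) (ha : ∀ i < n, 0 < a i)
    (hrord : ∀ i, i + 1 < n → r (i + 1) < r i)
    (H : ℝ → ℕ → ℝ)
    (hH : ∀ t ≥ (0:ℝ), ∀ i < n, HasDerivAt (fun s => H s i)
      (H t i * (r i - ∑ j ∈ Finset.range n, a j * H t j)) t)
    (h0 : ∀ i < n, 0 ≤ H 0 i)
    (hH10 : 0 < H 0 0) :
    Filter.Tendsto (fun t => H t 0) Filter.atTop (nhds (r 0 / a 0)) ∧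
    (∀ j, 1 ≤ j → j < n → Filter.Tendsto (fun t => H t j) Filter.atTop (nhds 0)) := by
  have hr0 : 0 < r 0 := hr 0 hn
  have ha0 : 0 < a 0 := ha 0 hn
  -- ordering: r j < r 0 for 1 ≤ j < n
  have hrlt : ∀ j, 1 ≤ j → j < n → r j < r 0 := by
    intro j hj1 hjn
    induction j with
    | zero => omega
    | succ m ih =>
      rcases Nat.eq_zero_or_pos m with hm | hm
      · subst hm; simpa using hrord 0 hjn
      · exact lt_trans (hrord m hjn) (ih hm (by omega))
  -- continuity of the competition term on [0,∞), and a continuous global extension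
  have hSat : ∀ t ≥ (0:ℝ), ContinuousAt (fun s => ∑ j ∈ Finset.range n, a j * H s j) t := by
    intro t ht
    exact tendsto_finset_sum _ fun j hj =>
      continuousAt_const.mul ((hH t ht j (mem_range.mp hj)).continuousAt)
  set Sc : ℝ → ℝ := fun t => ∑ j ∈ Finset.range n, a j * H (max t 0) j with hScdef
  have hSc : Continuous Sc := by
    rw [continuous_iff_continuousAt]
    intro t
    have hm : ContinuousAt (fun u : ℝ => max u 0) t := (continuous_id.max continuous_const).continuousAt
    exact ContinuousAt.comp (g := fun s => ∑ j ∈ Finset.range n, a j * H s j)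
      (f := fun u : ℝ => max u 0) (hSat _ (le_max_right t 0)) hm
  have hSceq : ∀ t ≥ (0:ℝ), Sc t = ∑ j ∈ Finset.range n, a j * H t j := by
    intro t ht
    simp only [hScdef, max_eq_left ht]
  -- the integral of Sc
  set J : ℝ → ℝ := fun t => ∫ s in (0:ℝ)..t, Sc s with hJdef
  have hJ : ∀ t : ℝ, HasDerivAt J (Sc t) t := fun t =>
    intervalIntegral.integral_hasDerivAt_right (hSc.intervalIntegrable _ _)
      (hSc.stronglyMeasurableAtFilter _ _) hSc.continuousAt
  -- representation of each component
  have rep : ∀ i < n, ∀ t ≥ (0:ℝ), H t i = H 0 i * Real.exp (r i * t - J t) := by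
    intro i hi t ht
    have hrep := exp_rep (fun s => r i - Sc s) (fun s => H s i)
      (continuous_const.sub hSc) ?_ t ht
    · have hrep' : H t i = H 0 i * Real.exp (∫ s in (0:ℝ)..t, (r i - Sc s)) := hrep
      rw [hrep']
      congr 1
      rw [intervalIntegral.integral_sub (intervalIntegrable_const) (hSc.intervalIntegrable 0 t),
        intervalIntegral.integral_const]
      simp [hJdef]
      ring
    · intro s hs
      have := hH s hs i hi
      rw [← hSceq s hs] at this
      exact this
  -- u = exp (J - r0 t)
  set u : ℝ → ℝ := fun t => Real.exp (J t - r 0 * t) with hudef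
  have hu' : ∀ t : ℝ, HasDerivAt u (u t * (Sc t - r 0)) t := by
    intro t
    have := ((hJ t).sub ((hasDerivAt_id t).const_mul (r 0))).exp
    simpa [hudef] using this
  -- β
  set β : ℝ → ℝ := fun t => ∑ j ∈ Finset.range n, a j * H 0 j * Real.exp ((r j - r 0) * t) with hβdef
  have huE : ∀ t : ℝ, u t * Real.exp (r 0 * t - J t) = 1 := by
    intro t
    rw [hudef]
    rw [← Real.exp_add, show (J t - r 0 * t) + (r 0 * t - J t) = 0 by ring, Real.exp_zero]
  have hScβ : ∀ t ≥ (0:ℝ), Sc t = β t * Real.exp (r 0 * t - J t) := by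
    intro t ht
    rw [hSceq t ht, hβdef]
    rw [Finset.sum_mul]
    apply Finset.sum_congr rfl
    intro j hj
    rw [rep j (mem_range.mp hj) t ht, mul_assoc, ← Real.exp_add]
    ring_nf
  have hu : ∀ t ≥ (0:ℝ), HasDerivAt u (β t - r 0 * u t) t := by
    intro t ht
    have h1 := hu' t
    have h2 : u t * (Sc t - r 0) = β t - r 0 * u t := by
      rw [hScβ t ht]
      have : u t * (β t * Real.exp (r 0 * t - J t) - r 0)
          = β t * (u t * Real.exp (r 0 * t - J t)) - r 0 * u t := by ring
      rw [this, huE t, mul_one]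
    rwa [h2] at h1
  -- explicit solution v
  set v : ℝ → ℝ := fun t => Real.exp (-(r 0 * t)) + ∑ j ∈ Finset.range n,
      a j * H 0 j / r j * (Real.exp ((r j - r 0) * t) - Real.exp (-(r 0 * t))) with hvdef
  have hexpd : ∀ (k t : ℝ), HasDerivAt (fun s => Real.exp (k * s)) (k * Real.exp (k * t)) t := by
    intro k t
    simpa [mul_comm] using ((hasDerivAt_id t).const_mul k).exp
  have hnegd : ∀ t : ℝ, HasDerivAt (fun s => Real.exp (-(r 0 * s))) (-(r 0) * Real.exp (-(r 0 * t))) t := by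
    intro t
    have := hexpd (-(r 0)) t
    simpa [neg_mul] using this
  have hv : ∀ t : ℝ, HasDerivAt v (β t - r 0 * v t) t := by
    intro t
    have hterm : ∀ j ∈ Finset.range n, HasDerivAt
        (fun s => a j * H 0 j / r j * (Real.exp ((r j - r 0) * s) - Real.exp (-(r 0 * s))))
        (a j * H 0 j / r j * ((r j - r 0) * Real.exp ((r j - r 0) * t)
          - -(r 0) * Real.exp (-(r 0 * t)))) t := by
      intro j hj
      exact ((hexpd (r j - r 0) t).sub (hnegd t)).const_mul _
    have hsum := HasDerivAt.sum hterm
    have hD := (hnegd t).add hsum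
    have key : ∀ j ∈ Finset.range n,
        a j * H 0 j / r j * ((r j - r 0) * Real.exp ((r j - r 0) * t)
          - -(r 0) * Real.exp (-(r 0 * t)))
        = a j * H 0 j * Real.exp ((r j - r 0) * t)
          - r 0 * (a j * H 0 j / r j * (Real.exp ((r j - r 0) * t) - Real.exp (-(r 0 * t)))) := by
      intro j hj
      have hrj : r j ≠ 0 := (hr j (mem_range.mp hj)).ne'
      field_simp
      ring
    have heq : -(r 0) * Real.exp (-(r 0 * t)) + ∑ j ∈ Finset.range n,
        a j * H 0 j / r j * ((r j - r 0) * Real.exp ((r j - r 0) * t)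
          - -(r 0) * Real.exp (-(r 0 * t)))
        = β t - r 0 * v t := by
      rw [Finset.sum_congr rfl key, Finset.sum_sub_distrib, hβdef, hvdef]
      simp only [mul_add, Finset.mul_sum]
      ring
    rw [heq] at hD
    exact hD.congr_of_eventuallyEq (Filter.Eventually.of_forall fun s => by
      simp [hvdef, Finset.sum_apply])
  have h00 : u 0 = v 0 := by
    simp [hudef, hvdef, hJdef, intervalIntegral.integral_same]
  have huv := lin_unique (r 0) β u v hu hv h00
  -- limits
  have hexp0 : ∀ k : ℝ, k < 0 → Tendsto (fun t => Real.exp (k * t)) atTop (𝓝 0) := by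
    intro k hk
    exact Real.tendsto_exp_atBot.comp ((tendsto_const_mul_atBot_of_neg hk).2 tendsto_id)
  have he0 : Tendsto (fun t => Real.exp (-(r 0 * t))) atTop (𝓝 0) := by
    have := hexp0 (-(r 0)) (by linarith)
    simpa [neg_mul] using this
  set L : ℝ := a 0 * H 0 0 / r 0 with hLdef
  have hvlim : Tendsto v atTop (𝓝 L) := by
    have hsum : Tendsto (fun t => ∑ j ∈ Finset.range n,
        a j * H 0 j / r j * (Real.exp ((r j - r 0) * t) - Real.exp (-(r 0 * t)))) atTop
        (𝓝 (∑ j ∈ Finset.range n, if j = 0 then L else 0)) := by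
      apply tendsto_finset_sum
      intro j hj
      by_cases hj0 : j = 0
      · subst hj0
        simp only [if_pos rfl, sub_self, zero_mul, Real.exp_zero]
        have h1 : Tendsto (fun t : ℝ => (1:ℝ) - Real.exp (-(r 0 * t))) atTop
            (𝓝 ((1:ℝ) - 0)) := Tendsto.sub tendsto_const_nhds he0
        have h2 := h1.const_mul (a 0 * H 0 0 / r 0)
        simpa [hLdef] using h2
      · have hjn := mem_range.mp hj
        have hk : r j - r 0 < 0 := sub_neg.mpr (hrlt j (Nat.one_le_iff_ne_zero.mpr hj0) hjn)
        have := ((hexp0 _ hk).sub he0).const_mul (a j * H 0 j / r j)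
        simpa [hj0] using this
    have hL' : (∑ j ∈ Finset.range n, if j = 0 then L else 0) = L := by
      rw [Finset.sum_ite_eq' (Finset.range n) 0 (fun _ => L)]
      simp [hn]
    rw [hL'] at hsum
    have := he0.add hsum
    simpa [hvdef] using this
  have hLpos : 0 < L := by
    rw [hLdef]; positivity
  have hLne : L ≠ 0 := hLpos.ne'
  -- H t 0 = H 0 0 * (v t)⁻¹ for t ≥ 0
  have hEinv : ∀ t : ℝ, Real.exp (r 0 * t - J t) = (u t)⁻¹ := by
    intro t
    rw [hudef, ← Real.exp_neg]
    congr 1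
    ring
  have heq0 : ∀ᶠ t in atTop, H t 0 = H 0 0 * (v t)⁻¹ := by
    filter_upwards [eventually_ge_atTop (0:ℝ)] with t ht
    rw [rep 0 hn t ht, hEinv t, huv t ht]
  constructor
  · have hlim : Tendsto (fun t => H 0 0 * (v t)⁻¹) atTop (𝓝 (H 0 0 * L⁻¹)) :=
      tendsto_const_nhds.mul (hvlim.inv₀ hLne)
    have hval : H 0 0 * L⁻¹ = r 0 / a 0 := by
      rw [hLdef]
      field_simp
    rw [← hval]
    exact Tendsto.congr' (heq0.mono fun t ht => ht.symm) hlim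
  · intro j hj1 hjn
    have hk : r j - r 0 < 0 := sub_neg.mpr (hrlt j hj1 hjn)
    have heqj : ∀ᶠ t in atTop, H t j
        = H 0 j * Real.exp ((r j - r 0) * t) * (v t)⁻¹ := by
      filter_upwards [eventually_ge_atTop (0:ℝ)] with t ht
      rw [rep j hjn t ht]
      have : Real.exp (r j * t - J t)
          = Real.exp ((r j - r 0) * t) * Real.exp (r 0 * t - J t) := by
        rw [← Real.exp_add]; ring_nf
      rw [this, hEinv t, huv t ht, ← mul_assoc]
    have hlim : Tendsto (fun t => H 0 j * Real.exp ((r j - r 0) * t) * (v t)⁻¹) atTop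
        (𝓝 (H 0 j * 0 * L⁻¹)) :=
      (tendsto_const_nhds.mul (hexp0 _ hk)).mul (hvlim.inv₀ hLne)
    have := Tendsto.congr' (heqj.mono fun t ht => ht.symm) hlim
    simpa using this
end

section
/- In the nested infection network system satisfying e_1 > ... > e_n, r_1 > ... > r_n and Q_n < r_n: if H_1(0) > 0 then limsup_{t→∞} H_1(t) ≥ 1/e_1; and if in addition P_1(0) > 0 then limsup_{t→∞} P_1(t) ≥ min{r_1 − r_2, (r_1 e_1 − a_1)/e_1}. -/
open Filter Finset

open Filter Finset Set intervalIntegral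


lemma ode_exp {x g : ℝ → ℝ} (hg : Continuous g)
    (hx : ∀ t, 0 ≤ t → HasDerivAt x (x t * g t) t) :
    ∀ t, 0 ≤ t → x t = x 0 * Real.exp (∫ s in (0:ℝ)..t, g s) := by
  intro b hb
  set G : ℝ → ℝ := fun u => ∫ s in (0:ℝ)..u, g s with hGdef
  have hGd : ∀ t : ℝ, HasDerivAt G (g t) t := fun t =>
    intervalIntegral.integral_hasDerivAt_right (hg.intervalIntegrable _ _)
      (hg.stronglyMeasurableAtFilter _ _) hg.continuousAt
  have key : ∀ u ∈ Set.Icc (0:ℝ) b, x u * Real.exp (-G u) = x 0 * Real.exp (-G 0) := by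
    apply constant_of_has_deriv_right_zero
    · intro u hu
      exact ((hx u hu.1).continuousAt.mul
        (((hGd u).neg.exp).continuousAt)).continuousWithinAt
    · intro u hu
      have h1 : HasDerivAt (fun v => x v * Real.exp (-G v))
          (x u * g u * Real.exp (-G u) + x u * (Real.exp (-G u) * (-g u))) u :=
        (hx u hu.1).mul ((hGd u).neg.exp)
      have : x u * g u * Real.exp (-G u) + x u * (Real.exp (-G u) * (-g u)) = 0 := by ring
      rw [this] at h1
      exact h1.hasDerivWithinAt
  have h2 := key b ⟨hb, le_refl _⟩
  have hG0 : G 0 = 0 := intervalIntegral.integral_same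
  rw [hG0] at h2
  have hepos := Real.exp_pos (-G b)
  have : x b = x 0 * Real.exp (-(0:ℝ)) / Real.exp (-G b) := by
    field_simp at h2 ⊢
    linarith [h2]
  rw [this]
  rw [neg_zero, Real.exp_zero, Real.exp_neg]
  field_simp
  rfl

lemma bound_above {x d : ℝ → ℝ} (hx : ∀ t, 0 ≤ t → HasDerivAt x (d t) t)
    {M : ℝ} (hM : ∀ t, 0 ≤ t → M < x t → d t < 0) :
    ∀ t, 0 ≤ t → x t ≤ max (x 0) M := by
  intro t1 ht1
  by_contra hgt
  push_neg at hgt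
  set c := (max (x 0) M + x t1) / 2 with hc
  have hc1 : max (x 0) M < c := by simp only [hc]; linarith
  have hc2 : c < x t1 := by simp only [hc]; linarith
  have hcont : ContinuousOn x (Set.Icc 0 t1) := fun u hu =>
    ((hx u hu.1).continuousAt).continuousWithinAt
  set S := Set.Icc (0:ℝ) t1 ∩ x ⁻¹' (Set.Iic c) with hSdef
  have hS0 : (0:ℝ) ∈ S := ⟨⟨le_refl _, ht1⟩, le_trans (le_trans (le_max_left _ _) hc1.le) (le_refl _)⟩
  have hSbdd : BddAbove S := ⟨t1, fun u hu => hu.1.2⟩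
  have hSc : IsClosed S := hcont.preimage_isClosed_of_isClosed isClosed_Icc isClosed_Iic
  set s := sSup S with hs
  have hsS : s ∈ S := hSc.csSup_mem ⟨0, hS0⟩ hSbdd
  have hst1 : s < t1 := lt_of_le_of_ne hsS.1.2 (by
    intro h; have := hsS.2; rw [h] at this; exact absurd this (not_le.2 hc2))
  have hgtc : ∀ u, s < u → u ≤ t1 → c < x u := by
    intro u hsu hut1
    by_contra hle
    push_neg at hle
    have : u ∈ S := ⟨⟨le_trans hsS.1.1 hsu.le, hut1⟩, hle⟩
    exact absurd (le_csSup hSbdd this) (not_le.2 hsu)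
  have hanti : StrictAntiOn x (Set.Icc s t1) := by
    apply strictAntiOn_of_deriv_neg (convex_Icc _ _)
      (hcont.mono (Set.Icc_subset_Icc_left hsS.1.1))
    intro u hu
    rw [interior_Icc] at hu
    have hu0 : 0 ≤ u := le_trans hsS.1.1 hu.1.le
    rw [(hx u hu0).deriv]
    exact hM u hu0 (lt_trans (lt_of_le_of_lt (le_max_right _ _) hc1) (hgtc u hu.1 hu.2.le))
  have hx1 := hanti (Set.left_mem_Icc.2 hst1.le) (Set.right_mem_Icc.2 hst1.le) hst1
  have := hgtc t1 hst1 (le_refl _)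
  have := hsS.2
  simp only [Set.mem_preimage, Set.mem_Iic] at this
  linarith



/-- clamped host/phage -/
noncomputable def clm (F : ℝ → ℕ → ℝ) (s : ℝ) (i : ℕ) : ℝ := F (max s 0) i

noncomputable def gHN (n : ℕ) (r a : ℕ → ℝ) (H P : ℝ → ℕ → ℝ) (i : ℕ) (s : ℝ) : ℝ :=
  r i - (∑ j ∈ Finset.range n, a j * clm H s j) - ∑ j ∈ Finset.Ico i n, clm P s j

noncomputable def gPN (e ν : ℕ → ℝ) (H : ℝ → ℕ → ℝ) (i : ℕ) (s : ℝ) : ℝ :=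
  e i * ν i * ((∑ j ∈ Finset.range (i + 1), clm H s j) - 1 / e i)

section NIN

variable {n : ℕ} {r a e ν : ℕ → ℝ} {H P : ℝ → ℕ → ℝ}

lemma clm_of_nonneg (F : ℝ → ℕ → ℝ) {s : ℝ} (hs : 0 ≤ s) (i : ℕ) : clm F s i = F s i := by
  simp [clm, max_eq_left hs]

lemma contH (hsol : isSolNIN n r a e ν H P) {i : ℕ} (hi : i < n) :
    Continuous fun t => clm H t i := by
  rw [continuous_iff_continuousAt]
  intro t
  have h1 : ContinuousAt (fun s => H s i) (max t 0) :=
    (hsol (max t 0) (le_max_right _ _) i hi).1.continuousAt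
  have h2 : ContinuousAt (fun u : ℝ => max u 0) t :=
    Continuous.continuousAt (by continuity)
  exact ContinuousAt.comp (g := fun s => H s i) h1 h2

lemma contP (hsol : isSolNIN n r a e ν H P) {i : ℕ} (hi : i < n) :
    Continuous fun t => clm P t i := by
  rw [continuous_iff_continuousAt]
  intro t
  have h1 : ContinuousAt (fun s => P s i) (max t 0) :=
    (hsol (max t 0) (le_max_right _ _) i hi).2.continuousAt
  have h2 : ContinuousAt (fun u : ℝ => max u 0) t :=
    Continuous.continuousAt (by continuity)
  exact ContinuousAt.comp (g := fun s => P s i) h1 h2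

lemma contgH (hsol : isSolNIN n r a e ν H P) (i : ℕ) :
    Continuous (gHN n r a H P i) := by
  unfold gHN
  apply Continuous.sub
  apply Continuous.sub continuous_const
  · exact continuous_finset_sum _ fun j hj => (continuous_const.mul (contH hsol (Finset.mem_range.1 hj)))
  · exact continuous_finset_sum _ fun j hj => contP hsol (Finset.mem_Ico.1 hj).2

lemma contgP (hsol : isSolNIN n r a e ν H P) {i : ℕ} (hi : i < n) :
    Continuous (gPN e ν H i) := by
  unfold gPN
  apply continuous_const.mul
  apply Continuous.sub _ continuous_const
  exact continuous_finset_sum _ fun j hj => contH hsol (lt_of_lt_of_le (Finset.mem_range.1 hj) hi)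

lemma expH (hsol : isSolNIN n r a e ν H P) {i : ℕ} (hi : i < n) {t : ℝ} (ht : 0 ≤ t) :
    H t i = H 0 i * Real.exp (∫ s in (0:ℝ)..t, gHN n r a H P i s) := by
  refine ode_exp (x := fun u => H u i) (contgH hsol i) ?_ t ht
  intro u hu
  have h1 := (hsol u hu i hi).1
  have h2 : gHN n r a H P i u =
      r i - (∑ j ∈ Finset.range n, a j * H u j) - ∑ j ∈ Finset.Ico i n, P u j := by
    simp [gHN, clm, max_eq_left hu]
  rw [h2]
  exact h1

lemma expP (hsol : isSolNIN n r a e ν H P) {i : ℕ} (hi : i < n) {t : ℝ} (ht : 0 ≤ t) :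
    P t i = P 0 i * Real.exp (∫ s in (0:ℝ)..t, gPN e ν H i s) := by
  refine ode_exp (x := fun u => P u i) (contgP hsol hi) ?_ t ht
  intro u hu
  have h1 := (hsol u hu i hi).2
  have h2 : P u i * gPN e ν H i u =
      e i * ν i * P u i * ((∑ j ∈ Finset.range (i + 1), H u j) - 1 / e i) := by
    simp only [gPN, clm, max_eq_left hu]; ring
  rw [h2]
  exact h1

lemma Hnn (hsol : isSolNIN n r a e ν H P) (h0 : ∀ i < n, 0 ≤ H 0 i ∧ 0 ≤ P 0 i)
    {i : ℕ} (hi : i < n) {t : ℝ} (ht : 0 ≤ t) : 0 ≤ H t i := by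
  rw [expH hsol hi ht]
  exact mul_nonneg (h0 i hi).1 (Real.exp_pos _).le

lemma Pnn (hsol : isSolNIN n r a e ν H P) (h0 : ∀ i < n, 0 ≤ H 0 i ∧ 0 ≤ P 0 i)
    {i : ℕ} (hi : i < n) {t : ℝ} (ht : 0 ≤ t) : 0 ≤ P t i := by
  rw [expP hsol hi ht]
  exact mul_nonneg (h0 i hi).2 (Real.exp_pos _).le

lemma Hpos (hsol : isSolNIN n r a e ν H P) {i : ℕ} (hi : i < n) (h00 : 0 < H 0 i)
    {t : ℝ} (ht : 0 ≤ t) : 0 < H t i := by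
  rw [expH hsol hi ht]; exact mul_pos h00 (Real.exp_pos _)

lemma Ppos (hsol : isSolNIN n r a e ν H P) {i : ℕ} (hi : i < n) (h00 : 0 < P 0 i)
    {t : ℝ} (ht : 0 ≤ t) : 0 < P t i := by
  rw [expP hsol hi ht]; exact mul_pos h00 (Real.exp_pos _)

end NIN

section NINX
variable {n : ℕ} {r a e ν : ℕ → ℝ} {H P : ℝ → ℕ → ℝ}

lemma clmHnn (hsol : isSolNIN n r a e ν H P) (h0 : ∀ i < n, 0 ≤ H 0 i ∧ 0 ≤ P 0 i)
    {j : ℕ} (hj : j < n) (s : ℝ) : 0 ≤ clm H s j :=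
  Hnn hsol h0 hj (le_max_right s 0)

lemma clmPnn (hsol : isSolNIN n r a e ν H P) (h0 : ∀ i < n, 0 ≤ H 0 i ∧ 0 ≤ P 0 i)
    {j : ℕ} (hj : j < n) (s : ℝ) : 0 ≤ clm P s j :=
  Pnn hsol h0 hj (le_max_right s 0)

end NINX

lemma int_exp_decay {f : ℝ → ℝ} (hf : Continuous f) {T δ D : ℝ} (hδ : 0 < δ) (hD : 0 ≤ D)
    (hdec : ∀ s, T ≤ s → f s ≤ D * Real.exp (-δ * (s - T))) :
    ∀ t, T ≤ t → (∫ s in T..t, f s) ≤ D / δ := by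
  intro t ht
  have hcont : Continuous fun s => D * Real.exp (-δ * (s - T)) := by continuity
  have h1 : (∫ s in T..t, f s) ≤ ∫ s in T..t, D * Real.exp (-δ * (s - T)) :=
    intervalIntegral.integral_mono_on ht (hf.intervalIntegrable _ _)
      (hcont.intervalIntegrable _ _) (fun s hs => hdec s hs.1)
  have hF : ∀ s : ℝ, HasDerivAt (fun u => -(D / δ) * Real.exp (-δ * (u - T)))
      (D * Real.exp (-δ * (s - T))) s := by
    intro s
    have h2 : HasDerivAt (fun u : ℝ => -δ * (u - T)) (-δ) s := by
      simpa using (((hasDerivAt_id s).sub_const T).const_mul (-δ))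
    have h3 := (h2.exp).const_mul (-(D / δ))
    refine h3.congr_deriv ?_
    field_simp
  have h2 : (∫ s in T..t, D * Real.exp (-δ * (s - T)))
      = -(D / δ) * Real.exp (-δ * (t - T)) - -(D / δ) * Real.exp (-δ * (T - T)) := by
    apply intervalIntegral.integral_eq_sub_of_hasDerivAt (fun s _ => hF s)
      (hcont.intervalIntegrable _ _)
  rw [h2] at h1
  have h3 : Real.exp (-δ * (t - T)) ≤ 1 := by
    rw [Real.exp_le_one_iff]
    nlinarith
  have h4 : Real.exp (-δ * (T - T)) = 1 := by norm_num
  rw [h4] at h1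
  have h5 : 0 ≤ D / δ := div_nonneg hD hδ.le
  nlinarith [h1, Real.exp_pos (-δ * (t - T))]

lemma chain_anti {f : ℕ → ℝ} {n : ℕ} (h : ∀ k, k + 1 < n → f (k + 1) < f k) :
    ∀ i j, i < j → j < n → f j < f i := by
  intro i j
  induction j with
  | zero => omega
  | succ j ih =>
    intro hij hj
    rcases Nat.lt_or_ge i j with h' | h'
    · exact lt_trans (h j hj) (ih h' (by omega))
    · have : i = j := by omega
      subst this
      exact h i hj

lemma sum_split1 (f : ℕ → ℝ) {m : ℕ} (hm : 1 ≤ m) :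
    ∑ j ∈ Finset.range m, f j = f 0 + ∑ j ∈ Finset.Ico 1 m, f j := by
  rw [Finset.range_eq_Ico, ← Finset.sum_Ico_consecutive f (Nat.zero_le 1) hm]
  norm_num

section NIN2
variable {n : ℕ} {r a e ν : ℕ → ℝ} {H P : ℝ → ℕ → ℝ}

lemma derivH (hsol : isSolNIN n r a e ν H P) {i : ℕ} (hi : i < n) {t : ℝ} (ht : 0 ≤ t) :
    HasDerivAt (fun s => H s i) (H t i * gHN n r a H P i t) t := by
  have h1 := (hsol t ht i hi).1
  have h2 : gHN n r a H P i t =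
      r i - (∑ j ∈ Finset.range n, a j * H t j) - ∑ j ∈ Finset.Ico i n, P t j := by
    simp [gHN, clm, max_eq_left ht]
  rw [h2]; exact h1

lemma derivP (hsol : isSolNIN n r a e ν H P) {i : ℕ} (hi : i < n) {t : ℝ} (ht : 0 ≤ t) :
    HasDerivAt (fun s => P s i) (P t i * gPN e ν H i t) t := by
  have h1 := (hsol t ht i hi).2
  have h2 : P t i * gPN e ν H i t =
      e i * ν i * P t i * ((∑ j ∈ Finset.range (i + 1), H t j) - 1 / e i) := by
    simp only [gPN, clm, max_eq_left ht]; ring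
  rw [h2]; exact h1

lemma H0_bdd (hn : 0 < n) (hr0 : 0 < r 0) (ha0 : 0 < a 0)
    (ha : ∀ i < n, 0 < a i)
    (hsol : isSolNIN n r a e ν H P) (h0 : ∀ i < n, 0 ≤ H 0 i ∧ 0 ≤ P 0 i) :
    ∀ t, 0 ≤ t → H t 0 ≤ max (H 0 0) (r 0 / a 0) := by
  apply bound_above (d := fun t => H t 0 * gHN n r a H P 0 t)
  · intro t ht; exact derivH hsol hn ht
  · intro t ht hMt
    have hpos : 0 < H t 0 := lt_trans (div_pos hr0 ha0) hMt
    apply mul_neg_of_pos_of_neg hpos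
    have hA : a 0 * H t 0 ≤ ∑ j ∈ Finset.range n, a j * clm H t j := by
      have h00 : a 0 * clm H t 0 = a 0 * H t 0 := by rw [clm_of_nonneg _ ht]
      rw [← h00]
      apply Finset.single_le_sum (f := fun j => a j * clm H t j)
      · intro j hj
        rw [clm_of_nonneg _ ht]
        exact mul_nonneg (ha j (Finset.mem_range.1 hj)).le (Hnn hsol h0 (Finset.mem_range.1 hj) ht)
      · exact Finset.mem_range.2 hn
    have hS : 0 ≤ ∑ j ∈ Finset.Ico 0 n, clm P t j := by
      apply Finset.sum_nonneg
      intro j hj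
      rw [clm_of_nonneg _ ht]
      exact Pnn hsol h0 (Finset.mem_Ico.1 hj).2 ht
    have : r 0 < a 0 * H t 0 := by
      rw [div_lt_iff₀ ha0] at hMt
      linarith [hMt]
    simp only [gHN]
    linarith
end NIN2

section NIN3
variable {n : ℕ} {r a e ν : ℕ → ℝ} {H P : ℝ → ℕ → ℝ}

lemma nin_cum
    (hn : 0 < n) (hr : ∀ i < n, 0 < r i) (ha : ∀ i < n, 0 < a i)
    (he : ∀ i < n, 0 < e i) (hν : ∀ i < n, 0 < ν i)
    (hsol : isSolNIN n r a e ν H P) (h0 : ∀ i < n, 0 ≤ H 0 i ∧ 0 ≤ P 0 i)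
    (hH00 : 0 < H 0 0)
    {MH : ℝ} (hMHpos : 0 < MH) (hMH : ∀ t, 0 ≤ t → H t 0 ≤ MH)
    {α β CH CP : ℝ} (hα : 0 ≤ α) (hβ : 0 ≤ β) (hCH : 0 ≤ CH) (hCP : 0 ≤ CP)
    (hαe : ∀ i, 1 ≤ i → i < n → α < 1 / e i)
    (hβr : ∀ i, 1 ≤ i → i < n → β < r 0 - r i)
    (hIH : ∀ t, 0 ≤ t → (∫ s in (0:ℝ)..t, clm H s 0) ≤ α * t + CH)
    (hIP : ∀ t, 0 ≤ t → (∫ s in (0:ℝ)..t, clm P s 0) ≤ β * t + CP) :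
    ∀ i, i ≤ n → ∃ C, 0 ≤ C ∧ ∀ t, 0 ≤ t →
      (∫ s in (0:ℝ)..t, ∑ j ∈ Finset.Ico 1 i, (clm H s j + clm P s j)) ≤ C := by
  intro i
  induction i with
  | zero => exact fun _ => ⟨0, le_rfl, fun t ht => by simp⟩
  | succ i ih =>
    intro hin
    have hi_n : i < n := hin
    obtain ⟨C, hC0, hCb⟩ := ih (Nat.le_of_lt hin)
    rcases Nat.eq_zero_or_pos i with rfl | h1i
    · exact ⟨0, le_rfl, fun t ht => by simp⟩
    -- continuity helpers
    have hWcont : Continuous fun s => ∑ j ∈ Finset.Ico 1 i, (clm H s j + clm P s j) :=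
      continuous_finset_sum _ fun j hj =>
        (contH hsol (lt_trans (Finset.mem_Ico.1 hj).2 hi_n)).add
          (contP hsol (lt_trans (Finset.mem_Ico.1 hj).2 hi_n))
    have hWPcont : Continuous fun s => ∑ j ∈ Finset.Ico 1 i, clm P s j :=
      continuous_finset_sum _ fun j hj => contP hsol (lt_trans (Finset.mem_Ico.1 hj).2 hi_n)
    have hWHcont : Continuous fun s => ∑ j ∈ Finset.Ico 1 i, clm H s j :=
      continuous_finset_sum _ fun j hj => contH hsol (lt_trans (Finset.mem_Ico.1 hj).2 hi_n)
    set κ := r 0 - r i - β with hκdef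
    have hκpos : 0 < κ := by
      have := hβr i h1i hi_n; simp only [hκdef]; linarith
    -- (sum Ico 1 i of P) integral bounded by C
    have hIWP : ∀ t, 0 ≤ t → (∫ s in (0:ℝ)..t, ∑ j ∈ Finset.Ico 1 i, clm P s j) ≤ C := by
      intro t ht
      refine le_trans (intervalIntegral.integral_mono_on ht (hWPcont.intervalIntegrable _ _)
        (hWcont.intervalIntegrable _ _) ?_) (hCb t ht)
      intro s _
      apply Finset.sum_le_sum
      intro j hj
      have hjn : j < n := lt_trans (Finset.mem_Ico.1 hj).2 hi_n
      have := clmHnn hsol h0 hjn s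
      linarith
    have hIWH : ∀ t, 0 ≤ t → (∫ s in (0:ℝ)..t, ∑ j ∈ Finset.Ico 1 i, clm H s j) ≤ C := by
      intro t ht
      refine le_trans (intervalIntegral.integral_mono_on ht (hWHcont.intervalIntegrable _ _)
        (hWcont.intervalIntegrable _ _) ?_) (hCb t ht)
      intro s _
      apply Finset.sum_le_sum
      intro j hj
      have hjn : j < n := lt_trans (Finset.mem_Ico.1 hj).2 hi_n
      have := clmPnn hsol h0 hjn s
      linarith
    -- integrand identity
    have hgid : ∀ s : ℝ, gHN n r a H P i s - gHN n r a H P 0 s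
        = (r i - r 0) + (clm P s 0 + ∑ j ∈ Finset.Ico 1 i, clm P s j) := by
      intro s
      simp only [gHN]
      have h1 : (∑ j ∈ Finset.Ico 0 i, clm P s j) + (∑ j ∈ Finset.Ico i n, clm P s j)
          = ∑ j ∈ Finset.Ico 0 n, clm P s j :=
        Finset.sum_Ico_consecutive _ (Nat.zero_le i) (le_of_lt hi_n)
      have h2 : ∑ j ∈ Finset.Ico 0 i, clm P s j
          = clm P s 0 + ∑ j ∈ Finset.Ico 1 i, clm P s j := by
        rw [← Finset.range_eq_Ico]
        exact sum_split1 _ h1i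
      linarith [h1, h2]
    -- bound on difference of integrals
    have hIdiff : ∀ t, 0 ≤ t →
        (∫ s in (0:ℝ)..t, gHN n r a H P i s) - (∫ s in (0:ℝ)..t, gHN n r a H P 0 s)
          ≤ -κ * t + (CP + C) := by
      intro t ht
      have hint1 : (∫ s in (0:ℝ)..t, gHN n r a H P i s) - (∫ s in (0:ℝ)..t, gHN n r a H P 0 s)
          = ∫ s in (0:ℝ)..t, (gHN n r a H P i s - gHN n r a H P 0 s) :=
        (intervalIntegral.integral_sub ((contgH hsol i).intervalIntegrable _ _)
          ((contgH hsol 0).intervalIntegrable _ _)).symm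
      rw [hint1,
        intervalIntegral.integral_congr (g := fun s => (r i - r 0)
          + (clm P s 0 + ∑ j ∈ Finset.Ico 1 i, clm P s j)) (fun s _ => hgid s)]
      rw [intervalIntegral.integral_add (g := fun s => clm P s 0 + ∑ j ∈ Finset.Ico 1 i, clm P s j)
        (intervalIntegrable_const)
        (((contP hsol hn).add hWPcont).intervalIntegrable _ _),
        intervalIntegral.integral_add ((contP hsol hn).intervalIntegrable _ _)
          (hWPcont.intervalIntegrable _ _),
        intervalIntegral.integral_const]
      have b1 := hIP t ht
      have b2 := hIWP t ht
      have := hβr i h1i hi_n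
      simp only [smul_eq_mul, sub_zero]
      nlinarith [b1, b2]
    -- decay of H i
    set DH : ℝ := (H 0 i / H 0 0) * MH * Real.exp (CP + C) with hDHdef
    have hDH0 : 0 ≤ DH := by
      apply mul_nonneg (mul_nonneg (div_nonneg (h0 i hi_n).1 hH00.le) hMHpos.le) (Real.exp_pos _).le
    have hHidecay : ∀ t, 0 ≤ t → H t i ≤ DH * Real.exp (-κ * t) := by
      intro t ht
      have hGi := expH hsol hi_n ht
      have hG0 := expH hsol hn ht
      set Gi := ∫ s in (0:ℝ)..t, gHN n r a H P i s with hGidef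
      set G0 := ∫ s in (0:ℝ)..t, gHN n r a H P 0 s with hG0def
      have hd := hIdiff t ht
      have hexpG0 : Real.exp G0 ≤ MH / H 0 0 := by
        rw [le_div_iff₀ hH00]
        have h5 := hMH t ht
        rw [hG0] at h5
        nlinarith [h5]
      have heq : H t i = H 0 i * Real.exp G0 * Real.exp (Gi - G0) := by
        rw [hGi, mul_assoc, ← Real.exp_add]
        congr 2
        ring
      rw [heq]
      calc H 0 i * Real.exp G0 * Real.exp (Gi - G0)
          ≤ (H 0 i * (MH / H 0 0)) * Real.exp (-κ * t + (CP + C)) := by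
            apply mul_le_mul (mul_le_mul_of_nonneg_left hexpG0 (h0 i hi_n).1)
              (Real.exp_le_exp.2 hd) (Real.exp_pos _).le
              (mul_nonneg (h0 i hi_n).1 (div_nonneg hMHpos.le hH00.le))
        _ = DH * Real.exp (-κ * t) := by
            rw [hDHdef, Real.exp_add]; ring
    have hIHi : ∀ t, 0 ≤ t → (∫ s in (0:ℝ)..t, clm H s i) ≤ DH / κ := by
      intro t ht
      refine int_exp_decay (contH hsol hi_n) hκpos hDH0 (fun s hs => ?_) t ht
      rw [clm_of_nonneg _ hs]
      simpa [sub_zero] using hHidecay s hs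
    have hDHκ : 0 ≤ DH / κ := div_nonneg hDH0 hκpos.le
    -- decay of P i
    set δi : ℝ := e i * ν i * (1 / e i - α) with hδidef
    have hδipos : 0 < δi := by
      have h1 := hαe i h1i hi_n
      have h2 := he i hi_n
      have h3 := hν i hi_n
      apply mul_pos (mul_pos h2 h3)
      linarith
    set CCi : ℝ := e i * ν i * (CH + C + DH / κ) with hCCidef
    have hTcont : Continuous fun s => (∑ j ∈ Finset.range (i + 1), clm H s j) :=
      continuous_finset_sum _ fun j hj =>
        contH hsol (lt_of_lt_of_le (Finset.mem_range.1 hj) hin)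
    have hGP : ∀ t, 0 ≤ t → (∫ s in (0:ℝ)..t, gPN e ν H i s) ≤ -δi * t + CCi := by
      intro t ht
      have h1 : (∫ s in (0:ℝ)..t, gPN e ν H i s)
          = e i * ν i * ((∫ s in (0:ℝ)..t, ∑ j ∈ Finset.range (i + 1), clm H s j)
            - (1 / e i) * t) := by
        simp only [gPN]
        rw [intervalIntegral.integral_const_mul,
          intervalIntegral.integral_sub (hTcont.intervalIntegrable _ _)
            (intervalIntegrable_const),
          intervalIntegral.integral_const]
        simp only [smul_eq_mul, sub_zero]
        ring
      have h2 : (∫ s in (0:ℝ)..t, ∑ j ∈ Finset.range (i + 1), clm H s j)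
          = (∫ s in (0:ℝ)..t, clm H s 0)
            + ((∫ s in (0:ℝ)..t, ∑ j ∈ Finset.Ico 1 i, clm H s j)
              + ∫ s in (0:ℝ)..t, clm H s i) := by
        rw [intervalIntegral.integral_congr (g := fun s => clm H s 0
          + ((∑ j ∈ Finset.Ico 1 i, clm H s j) + clm H s i)) (fun s _ => by
            rw [sum_split1 _ (Nat.succ_le_succ (Nat.zero_le i)),
              Finset.sum_Ico_succ_top h1i])]
        rw [intervalIntegral.integral_add (g := fun s => (∑ j ∈ Finset.Ico 1 i, clm H s j) + clm H s i)
          ((contH hsol hn).intervalIntegrable _ _)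
          ((hWHcont.add (contH hsol hi_n)).intervalIntegrable _ _),
          intervalIntegral.integral_add (hWHcont.intervalIntegrable _ _)
            ((contH hsol hi_n).intervalIntegrable _ _)]
      rw [h1, h2]
      have b1 := hIH t ht
      have b2 := hIWH t ht
      have b3 := hIHi t ht
      have hev : 0 < e i * ν i := mul_pos (he i hi_n) (hν i hi_n)
      rw [hδidef, hCCidef]
      nlinarith [b1, b2, b3]
    set DP : ℝ := P 0 i * Real.exp CCi with hDPdef
    have hDP0 : 0 ≤ DP := mul_nonneg (h0 i hi_n).2 (Real.exp_pos _).le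
    have hPidecay : ∀ t, 0 ≤ t → P t i ≤ DP * Real.exp (-δi * t) := by
      intro t ht
      rw [expP hsol hi_n ht]
      calc P 0 i * Real.exp (∫ s in (0:ℝ)..t, gPN e ν H i s)
          ≤ P 0 i * Real.exp (-δi * t + CCi) :=
            mul_le_mul_of_nonneg_left (Real.exp_le_exp.2 (hGP t ht)) (h0 i hi_n).2
        _ = DP * Real.exp (-δi * t) := by rw [hDPdef, Real.exp_add]; ring
    have hIPi : ∀ t, 0 ≤ t → (∫ s in (0:ℝ)..t, clm P s i) ≤ DP / δi := by
      intro t ht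
      refine int_exp_decay (contP hsol hi_n) hδipos hDP0 (fun s hs => ?_) t ht
      rw [clm_of_nonneg _ hs]
      simpa [sub_zero] using hPidecay s hs
    have hDPδ : 0 ≤ DP / δi := div_nonneg hDP0 hδipos.le
    -- assemble
    refine ⟨C + DH / κ + DP / δi, by linarith, fun t ht => ?_⟩
    have hsplit : (∫ s in (0:ℝ)..t, ∑ j ∈ Finset.Ico 1 (i + 1), (clm H s j + clm P s j))
        = (∫ s in (0:ℝ)..t, ∑ j ∈ Finset.Ico 1 i, (clm H s j + clm P s j))
          + ((∫ s in (0:ℝ)..t, clm H s i) + ∫ s in (0:ℝ)..t, clm P s i) := by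
      rw [intervalIntegral.integral_congr (g := fun s =>
        (∑ j ∈ Finset.Ico 1 i, (clm H s j + clm P s j)) + (clm H s i + clm P s i))
        (fun s _ => by rw [Finset.sum_Ico_succ_top h1i])]
      rw [intervalIntegral.integral_add (g := fun s => clm H s i + clm P s i)
        (hWcont.intervalIntegrable _ _)
        (((contH hsol hi_n).add (contP hsol hi_n)).intervalIntegrable _ _),
        intervalIntegral.integral_add ((contH hsol hi_n).intervalIntegrable _ _)
          ((contP hsol hi_n).intervalIntegrable _ _)]
    rw [hsplit]
    have := hCb t ht
    have := hIHi t ht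
    have := hIPi t ht
    linarith

end NIN3

section NIN4
variable {n : ℕ} {r a e ν : ℕ → ℝ} {H P : ℝ → ℕ → ℝ}

lemma nin_master
    (hn : 0 < n) (hr : ∀ i < n, 0 < r i) (ha : ∀ i < n, 0 < a i)
    (he : ∀ i < n, 0 < e i) (hν : ∀ i < n, 0 < ν i)
    (hsol : isSolNIN n r a e ν H P) (h0 : ∀ i < n, 0 ≤ H 0 i ∧ 0 ≤ P 0 i)
    (hH00 : 0 < H 0 0)
    {MH : ℝ} (hMHpos : 0 < MH) (hMH : ∀ t, 0 ≤ t → H t 0 ≤ MH)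
    {α β CH CP : ℝ} (hα : 0 ≤ α) (hβ : 0 ≤ β) (hCH : 0 ≤ CH) (hCP : 0 ≤ CP)
    (hαe : ∀ i, 1 ≤ i → i < n → α < 1 / e i)
    (hβr : ∀ i, 1 ≤ i → i < n → β < r 0 - r i)
    (hIH : ∀ t, 0 ≤ t → (∫ s in (0:ℝ)..t, clm H s 0) ≤ α * t + CH)
    (hIP : ∀ t, 0 ≤ t → (∫ s in (0:ℝ)..t, clm P s 0) ≤ β * t + CP)
    (hκ0 : 0 < r 0 - a 0 * α - β) : False := by
  obtain ⟨C, hC0, hCb⟩ := nin_cum hn hr ha he hν hsol h0 hH00 hMHpos hMH hα hβ hCH hCP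
    hαe hβr hIH hIP n le_rfl
  set amax := 1 + ∑ j ∈ Finset.range n, a j with hamaxdef
  have hsum_a : 0 ≤ ∑ j ∈ Finset.range n, a j :=
    Finset.sum_nonneg fun j hj => (ha j (Finset.mem_range.1 hj)).le
  have hamax1 : 1 ≤ amax := by simp only [hamaxdef]; linarith
  have hale : ∀ j, j < n → a j ≤ amax := by
    intro j hj
    have h1 : a j ≤ ∑ k ∈ Finset.range n, a k :=
      Finset.single_le_sum (fun k hk => (ha k (Finset.mem_range.1 hk)).le)
        (Finset.mem_range.2 hj)
    simp only [hamaxdef]; linarith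
  set W := fun s => ∑ j ∈ Finset.Ico 1 n, (clm H s j + clm P s j) with hWdef
  have hWcont : Continuous W :=
    continuous_finset_sum _ fun j hj =>
      (contH hsol (Finset.mem_Ico.1 hj).2).add (contP hsol (Finset.mem_Ico.1 hj).2)
  have hWnn : ∀ s, 0 ≤ W s := by
    intro s
    apply Finset.sum_nonneg
    intro j hj
    have h1 := clmHnn hsol h0 (Finset.mem_Ico.1 hj).2 s
    have h2 := clmPnn hsol h0 (Finset.mem_Ico.1 hj).2 s
    linarith
  have hglow : ∀ s : ℝ,
      r 0 - a 0 * clm H s 0 - clm P s 0 - 2 * amax * W s ≤ gHN n r a H P 0 s := by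
    intro s
    simp only [gHN]
    have hsplitA : ∑ j ∈ Finset.range n, a j * clm H s j
        = a 0 * clm H s 0 + ∑ j ∈ Finset.Ico 1 n, a j * clm H s j :=
      sum_split1 (fun j => a j * clm H s j) hn
    have hsplitP : ∑ j ∈ Finset.Ico 0 n, clm P s j
        = clm P s 0 + ∑ j ∈ Finset.Ico 1 n, clm P s j := by
      rw [← Finset.range_eq_Ico]
      exact sum_split1 _ hn
    have hA2 : ∑ j ∈ Finset.Ico 1 n, a j * clm H s j ≤ amax * W s := by
      rw [hWdef, Finset.mul_sum]
      apply Finset.sum_le_sum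
      intro j hj
      have hjn : j < n := (Finset.mem_Ico.1 hj).2
      have h1 := clmHnn hsol h0 hjn s
      have h2 := clmPnn hsol h0 hjn s
      have h3 := hale j hjn
      nlinarith
    have hP2 : ∑ j ∈ Finset.Ico 1 n, clm P s j ≤ amax * W s := by
      rw [hWdef, Finset.mul_sum]
      apply Finset.sum_le_sum
      intro j hj
      have hjn : j < n := (Finset.mem_Ico.1 hj).2
      have h1 := clmHnn hsol h0 hjn s
      have h2 := clmPnn hsol h0 hjn s
      nlinarith
    linarith
  set κ0 := r 0 - a 0 * α - β with hκ0def
  set C0 := a 0 * CH + CP + 2 * amax * C with hC0def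
  have hGlow : ∀ t, 0 ≤ t →
      κ0 * t - C0 ≤ ∫ s in (0:ℝ)..t, gHN n r a H P 0 s := by
    intro t ht
    have hlcont : Continuous fun s =>
        r 0 - a 0 * clm H s 0 - clm P s 0 - 2 * amax * W s := by
      apply Continuous.sub
      apply Continuous.sub
      apply Continuous.sub continuous_const
      · exact continuous_const.mul (contH hsol hn)
      · exact contP hsol hn
      · exact continuous_const.mul hWcont
    have h1 : (∫ s in (0:ℝ)..t, (r 0 - a 0 * clm H s 0 - clm P s 0 - 2 * amax * W s))
        ≤ ∫ s in (0:ℝ)..t, gHN n r a H P 0 s :=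
      intervalIntegral.integral_mono_on ht (hlcont.intervalIntegrable _ _)
        ((contgH hsol 0).intervalIntegrable _ _) (fun s _ => hglow s)
    have h2 : (∫ s in (0:ℝ)..t, (r 0 - a 0 * clm H s 0 - clm P s 0 - 2 * amax * W s))
        = r 0 * t - a 0 * (∫ s in (0:ℝ)..t, clm H s 0) - (∫ s in (0:ℝ)..t, clm P s 0)
          - 2 * amax * (∫ s in (0:ℝ)..t, W s) := by
      rw [intervalIntegral.integral_sub (f := fun s => r 0 - a 0 * clm H s 0 - clm P s 0)
          (g := fun s => 2 * amax * W s) (((_root_.intervalIntegrable_const).sub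
          ((continuous_const.mul (contH hsol hn)).intervalIntegrable _ _)).sub
          ((contP hsol hn).intervalIntegrable _ _))
          ((continuous_const.mul hWcont).intervalIntegrable _ _),
        intervalIntegral.integral_sub (f := fun s => r 0 - a 0 * clm H s 0)
          (g := fun s => clm P s 0) ((_root_.intervalIntegrable_const).sub
          ((continuous_const.mul (contH hsol hn)).intervalIntegrable _ _))
          ((contP hsol hn).intervalIntegrable _ _),
        intervalIntegral.integral_sub (f := fun _ => r 0) (g := fun s => a 0 * clm H s 0)
          (_root_.intervalIntegrable_const)
          ((continuous_const.mul (contH hsol hn)).intervalIntegrable _ _),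
        intervalIntegral.integral_const, intervalIntegral.integral_const_mul,
        intervalIntegral.integral_const_mul]
      simp only [smul_eq_mul, sub_zero]
      ring
    have b1 := hIH t ht
    have b2 := hIP t ht
    have b3 := hCb t ht
    have ha0 := (ha 0 hn).le
    have hamax0 : (0:ℝ) ≤ 2 * amax := by linarith
    rw [h2] at h1
    have e1 : a 0 * (∫ s in (0:ℝ)..t, clm H s 0) ≤ a 0 * (α * t + CH) :=
      mul_le_mul_of_nonneg_left b1 ha0
    have e3 : 2 * amax * (∫ s in (0:ℝ)..t, W s) ≤ 2 * amax * C :=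
      mul_le_mul_of_nonneg_left b3 hamax0
    simp only [hκ0def, hC0def]
    nlinarith [h1, e1, e3, b2]
  -- blow up
  have hB : 0 < H 0 0 * Real.exp (-C0) := by positivity
  set B := H 0 0 * Real.exp (-C0) with hBdef
  set t1 := (MH + 1) / (B * κ0) with ht1def
  have hBκ : 0 < B * κ0 := mul_pos hB hκ0
  have ht1pos : 0 < t1 := by
    apply div_pos (by linarith) hBκ
  have hlow := hGlow t1 ht1pos.le
  have hHt1 : H t1 0 = H 0 0 * Real.exp (∫ s in (0:ℝ)..t1, gHN n r a H P 0 s) :=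
    expH hsol hn ht1pos.le
  have hge : B * Real.exp (κ0 * t1) ≤ H t1 0 := by
    rw [hHt1, hBdef, mul_assoc, ← Real.exp_add]
    apply mul_le_mul_of_nonneg_left _ hH00.le
    apply Real.exp_le_exp.2
    linarith
  have hlin : κ0 * t1 + 1 ≤ Real.exp (κ0 * t1) := Real.add_one_le_exp _
  have hval : B * (κ0 * t1) = MH + 1 := by
    rw [ht1def]
    field_simp
  have hMHt := hMH t1 ht1pos.le
  nlinarith [hge, hlin, hval, hMHt, hB, mul_le_mul_of_nonneg_left hlin hB.le]

end NIN4

lemma int_piecewise_bound {f : ℝ → ℝ} (hf : Continuous f) {T M α : ℝ} (hT : 0 ≤ T)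
    (hM : 0 ≤ M) (hα : 0 ≤ α)
    (h1 : ∀ s, 0 ≤ s → s ≤ T → f s ≤ M) (h2 : ∀ s, T ≤ s → f s ≤ α) :
    ∀ t, 0 ≤ t → (∫ s in (0:ℝ)..t, f s) ≤ α * t + M * T := by
  intro t ht
  rcases le_or_gt t T with h | h
  · have hb : (∫ s in (0:ℝ)..t, f s) ≤ ∫ s in (0:ℝ)..t, M :=
      intervalIntegral.integral_mono_on ht (hf.intervalIntegrable _ _)
        (_root_.intervalIntegrable_const) (fun s hs => h1 s hs.1 (le_trans hs.2 h))
    rw [intervalIntegral.integral_const] at hb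
    simp only [smul_eq_mul, sub_zero] at hb
    nlinarith [mul_nonneg hα ht]
  · have hTt : T ≤ t := h.le
    have hsplit : (∫ s in (0:ℝ)..T, f s) + (∫ s in T..t, f s) = ∫ s in (0:ℝ)..t, f s :=
      intervalIntegral.integral_add_adjacent_intervals (hf.intervalIntegrable _ _)
        (hf.intervalIntegrable _ _)
    have hb1 : (∫ s in (0:ℝ)..T, f s) ≤ M * T := by
      have hb : (∫ s in (0:ℝ)..T, f s) ≤ ∫ s in (0:ℝ)..T, M :=
        intervalIntegral.integral_mono_on hT (hf.intervalIntegrable _ _)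
          (_root_.intervalIntegrable_const) (fun s hs => h1 s hs.1 hs.2)
      rw [intervalIntegral.integral_const] at hb
      simp only [smul_eq_mul, sub_zero] at hb
      linarith
    have hb2 : (∫ s in T..t, f s) ≤ α * (t - T) := by
      have hb : (∫ s in T..t, f s) ≤ ∫ s in T..t, α :=
        intervalIntegral.integral_mono_on hTt (hf.intervalIntegrable _ _)
          (_root_.intervalIntegrable_const) (fun s hs => h2 s hs.1)
      rw [intervalIntegral.integral_const] at hb
      simp only [smul_eq_mul] at hb
      linarith
    nlinarith [mul_nonneg hα hT]

lemma int_tail_decay_bound {f : ℝ → ℝ} (hf : Continuous f) {T D δ : ℝ} (hT : 0 ≤ T)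
    (hδ : 0 < δ) (hD : 0 ≤ D) (hnn : ∀ s, 0 ≤ f s)
    (hdec : ∀ s, T ≤ s → f s ≤ D * Real.exp (-δ * (s - T))) :
    ∀ t, 0 ≤ t → (∫ s in (0:ℝ)..t, f s) ≤ (∫ s in (0:ℝ)..T, f s) + D / δ := by
  intro t ht
  have hDδ : 0 ≤ D / δ := div_nonneg hD hδ.le
  rcases le_or_gt t T with h | h
  · have hsplit : (∫ s in (0:ℝ)..t, f s) + (∫ s in t..T, f s) = ∫ s in (0:ℝ)..T, f s :=
      intervalIntegral.integral_add_adjacent_intervals (hf.intervalIntegrable _ _)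
        (hf.intervalIntegrable _ _)
    have hnn2 : 0 ≤ ∫ s in t..T, f s :=
      intervalIntegral.integral_nonneg h (fun s _ => hnn s)
    linarith
  · have hsplit : (∫ s in (0:ℝ)..T, f s) + (∫ s in T..t, f s) = ∫ s in (0:ℝ)..t, f s :=
      intervalIntegral.integral_add_adjacent_intervals (hf.intervalIntegrable _ _)
        (hf.intervalIntegrable _ _)
    have := int_exp_decay hf hδ hD hdec t h.le
    linarith

set_option maxHeartbeats 2000000
/-- weak persistence of the first host and virus in the NIN system.
If `H_1(0) > 0` then `limsup H_1 ≥ 1/e_1`; if moreover `P_1(0) > 0` then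
`limsup P_1 ≥ min {r_1 − r_2, (r_1 e_1 − a_1)/e_1}`. -/
theorem statement8
    (n : ℕ) (hn : 0 < n) (r a e ν : ℕ → ℝ)
    (hr : ∀ i < n, 0 < r i) (ha : ∀ i < n, 0 < a i)
    (he : ∀ i < n, 0 < e i) (hν : ∀ i < n, 0 < ν i)
    (heord : ∀ i, i + 1 < n → e (i + 1) < e i)
    (hrord : ∀ i, i + 1 < n → r (i + 1) < r i)
    (hQ : QNIN n a e < r (n - 1))
    (H P : ℝ → ℕ → ℝ) (hsol : isSolNIN n r a e ν H P)
    (h0 : ∀ i < n, 0 ≤ H 0 i ∧ 0 ≤ P 0 i) :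
    (0 < H 0 0 → 1 / e 0 ≤ Filter.limsup (fun t => H t 0) Filter.atTop) ∧
    (0 < H 0 0 → 0 < P 0 0 →
      min (r 0 - r 1) ((r 0 * e 0 - a 0) / e 0)
        ≤ Filter.limsup (fun t => P t 0) Filter.atTop) := by
  have hr0 := hr 0 hn
  have ha0 := ha 0 hn
  have he0 := he 0 hn
  have hν0 := hν 0 hn
  have h1e : ∀ i, 1 ≤ i → i < n → 1 / e 0 < 1 / e i := by
    intro i h1 hi
    have hlt : e i < e 0 := chain_anti heord 0 i h1 hi
    exact one_div_lt_one_div_of_lt (he i hi) hlt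
  have hrle : ∀ i, 1 ≤ i → i < n → r i ≤ r 1 := by
    intro i h1 hi
    rcases eq_or_lt_of_le h1 with h | h
    · rw [← h]
    · exact (chain_anti hrord 1 i h hi).le
  have hHstar : ∀ j, j < n → 0 < HstarNIN e j := by
    intro j hj
    cases j with
    | zero => simpa [HstarNIN] using one_div_pos.2 he0
    | succ k =>
      have h1 : e (k + 1) < e k := heord k hj
      have h2 : 0 < e (k + 1) := he _ hj
      have h3 : 0 < e k := lt_trans h2 h1
      simp only [HstarNIN]
      have := one_div_lt_one_div_of_lt h2 h1
      linarith
  have hQlow : a 0 / e 0 ≤ QNIN n a e := by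
    have h1 : a 0 * HstarNIN e 0 ≤ QNIN n a e := by
      apply Finset.single_le_sum (f := fun j => a j * HstarNIN e j)
      · intro j hj
        exact mul_nonneg (ha j (Finset.mem_range.1 hj)).le (hHstar j (Finset.mem_range.1 hj)).le
      · exact Finset.mem_range.2 hn
    have h2 : a 0 * HstarNIN e 0 = a 0 / e 0 := by
      simp [HstarNIN]
      ring
    linarith
  have hrn0 : r (n - 1) ≤ r 0 := by
    rcases Nat.eq_zero_or_pos (n - 1) with h | h
    · rw [h]
    · exact (chain_anti hrord 0 (n - 1) h (Nat.sub_lt hn one_pos)).le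
  have hkey : a 0 / e 0 < r 0 := lt_of_le_of_lt hQlow (lt_of_lt_of_le hQ hrn0)
  constructor
  · intro hH00
    set MH := max (H 0 0) (r 0 / a 0) with hMHdef
    have hMHpos : 0 < MH := lt_of_lt_of_le hH00 (le_max_left _ _)
    have hMH : ∀ t, 0 ≤ t → H t 0 ≤ MH := H0_bdd hn hr0 ha0 ha hsol h0
    by_contra hcon
    push_neg at hcon
    have hbd : IsBoundedUnder (· ≤ ·) atTop (fun t => H t 0) :=
      isBoundedUnder_of_eventually_le ((eventually_ge_atTop 0).mono fun t ht => hMH t ht)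
    set L := limsup (fun t => H t 0) atTop with hL
    have hb2 : L < (L + 1 / e 0) / 2 := by
      simp only [hL]
      linarith
    have hev := eventually_lt_of_limsup_lt hb2 hbd
    obtain ⟨T0, hT0⟩ := eventually_atTop.1 hev
    set T := max T0 0 with hT
    have hTnn : 0 ≤ T := le_max_right _ _
    set α := max ((L + 1 / e 0) / 2) 0 with hαdef
    have hα0 : 0 ≤ α := le_max_right _ _
    have hα1 : α < 1 / e 0 := by
      have h3 : (0:ℝ) < 1 / e 0 := one_div_pos.2 he0
      apply max_lt _ h3
      simp only [hL]
      linarith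
    have hbound : ∀ s, T ≤ s → H s 0 ≤ α := by
      intro s hs
      have := hT0 s (le_trans (le_max_left _ _) hs)
      exact le_trans this.le (le_max_left _ _)
    have hclmH0 : Continuous fun s => clm H s 0 := contH hsol hn
    have hIH : ∀ t, 0 ≤ t → (∫ s in (0:ℝ)..t, clm H s 0) ≤ α * t + MH * T := by
      apply int_piecewise_bound hclmH0 hTnn hMHpos.le hα0
      · intro s hs _
        rw [clm_of_nonneg _ hs]
        exact hMH s hs
      · intro s hs
        have hs0 : 0 ≤ s := le_trans hTnn hs
        rw [clm_of_nonneg _ hs0]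
        exact hbound s hs
    set δ0 := e 0 * ν 0 * (1 / e 0 - α) with hδ0def
    have hδ0pos : 0 < δ0 := mul_pos (mul_pos he0 hν0) (by linarith)
    have hgP0 : ∀ s, T ≤ s → gPN e ν H 0 s ≤ -δ0 := by
      intro s hs
      have hs0 : 0 ≤ s := le_trans hTnn hs
      have h1 : gPN e ν H 0 s = e 0 * ν 0 * (H s 0 - 1 / e 0) := by
        simp [gPN, Finset.sum_range_one, clm_of_nonneg _ hs0]
      rw [h1, hδ0def]
      have := hbound s hs
      nlinarith [mul_pos he0 hν0]
    have hPdec : ∀ t, T ≤ t → P t 0 ≤ P T 0 * Real.exp (-δ0 * (t - T)) := by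
      intro t htT
      have ht0 : 0 ≤ t := le_trans hTnn htT
      have hsplit : (∫ s in (0:ℝ)..T, gPN e ν H 0 s) + (∫ s in T..t, gPN e ν H 0 s)
          = ∫ s in (0:ℝ)..t, gPN e ν H 0 s :=
        intervalIntegral.integral_add_adjacent_intervals
          ((contgP hsol hn).intervalIntegrable _ _) ((contgP hsol hn).intervalIntegrable _ _)
      have htail : (∫ s in T..t, gPN e ν H 0 s) ≤ -δ0 * (t - T) := by
        have hb : (∫ s in T..t, gPN e ν H 0 s) ≤ ∫ s in T..t, (-δ0) :=
          intervalIntegral.integral_mono_on htT ((contgP hsol hn).intervalIntegrable _ _)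
            (_root_.intervalIntegrable_const) (fun s hs => hgP0 s hs.1)
        rw [intervalIntegral.integral_const] at hb
        simp only [smul_eq_mul] at hb
        linarith
      have hPt := expP hsol hn ht0
      have hPT := expP hsol hn hTnn
      rw [hPt, hPT]
      have hle : (∫ s in (0:ℝ)..t, gPN e ν H 0 s)
          ≤ (∫ s in (0:ℝ)..T, gPN e ν H 0 s) + (-δ0 * (t - T)) := by linarith
      calc P 0 0 * Real.exp (∫ s in (0:ℝ)..t, gPN e ν H 0 s)
          ≤ P 0 0 * Real.exp ((∫ s in (0:ℝ)..T, gPN e ν H 0 s) + (-δ0 * (t - T))) :=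
            mul_le_mul_of_nonneg_left (Real.exp_le_exp.2 hle) (h0 0 hn).2
        _ = P 0 0 * Real.exp (∫ s in (0:ℝ)..T, gPN e ν H 0 s) * Real.exp (-δ0 * (t - T)) := by
            rw [Real.exp_add]; ring
    have hclmP0 : Continuous fun s => clm P s 0 := contP hsol hn
    have hPT0 : 0 ≤ P T 0 := Pnn hsol h0 hn hTnn
    have hIP : ∀ t, 0 ≤ t → (∫ s in (0:ℝ)..t, clm P s 0)
        ≤ 0 * t + ((∫ s in (0:ℝ)..T, clm P s 0) + P T 0 / δ0) := by
      intro t ht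
      have hmain := int_tail_decay_bound hclmP0 hTnn hδ0pos hPT0
        (fun s => clmPnn hsol h0 hn s) (fun s hs => by
          have hs0 : 0 ≤ s := le_trans hTnn hs
          rw [clm_of_nonneg _ hs0]
          exact hPdec s hs) t ht
      linarith
    have hCP2nn : 0 ≤ (∫ s in (0:ℝ)..T, clm P s 0) + P T 0 / δ0 := by
      have h1 : 0 ≤ ∫ s in (0:ℝ)..T, clm P s 0 :=
        intervalIntegral.integral_nonneg hTnn (fun s _ => clmPnn hsol h0 hn s)
      have h2 : 0 ≤ P T 0 / δ0 := div_nonneg hPT0 hδ0pos.le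
      linarith
    exact nin_master hn hr ha he hν hsol h0 hH00 hMHpos hMH hα0 le_rfl
      (mul_nonneg hMHpos.le hTnn) hCP2nn
      (fun i h1 hi => lt_trans hα1 (h1e i h1 hi))
      (fun i h1 hi => by have := chain_anti hrord 0 i h1 hi; linarith)
      hIH hIP
      (by
        have h3 : a 0 * α < a 0 * (1 / e 0) := mul_lt_mul_of_pos_left hα1 ha0
        have h4 : a 0 * (1 / e 0) = a 0 / e 0 := by ring
        linarith)
  · intro hH00 hP00
    set m := min (r 0 - r 1) ((r 0 * e 0 - a 0) / e 0) with hmdef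
    rcases le_or_gt m 0 with hm | hm
    · have h1 : 0 ≤ limsup (fun t => P t 0) atTop := by
        rw [limsup_eq]
        apply Real.sInf_nonneg
        intro x hx
        simp only [Set.mem_setOf_eq, eventually_map] at hx
        obtain ⟨t, htx, ht0⟩ := (hx.and (eventually_ge_atTop (0:ℝ))).exists
        exact le_trans (Ppos hsol hn hP00 ht0).le htx
      linarith
    · by_contra hcon
      push_neg at hcon
      set MH := max (H 0 0) (r 0 / a 0) with hMHdef
      have hMHpos : 0 < MH := lt_of_lt_of_le hH00 (le_max_left _ _)
      have hMH : ∀ t, 0 ≤ t → H t 0 ≤ MH := H0_bdd hn hr0 ha0 ha hsol h0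
      set MV := e 0 * ν 0 * MH + e 0 * r 0 * MH with hMVdef
      have hVb : ∀ t, 0 ≤ t → e 0 * ν 0 * H t 0 + P t 0
          ≤ max (e 0 * ν 0 * H 0 0 + P 0 0) MV := by
        apply bound_above (x := fun t => e 0 * ν 0 * H t 0 + P t 0)
          (d := fun t => e 0 * ν 0 * (H t 0 * gHN n r a H P 0 t) + P t 0 * gPN e ν H 0 t)
        · intro t ht
          exact ((derivH hsol hn ht).const_mul (e 0 * ν 0)).add (derivP hsol hn ht)
        · intro t ht hMt
          have hHt := Hnn hsol h0 hn ht
          have hPt := Pnn hsol h0 hn ht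
          have hHtM := hMH t ht
          have hgH : gHN n r a H P 0 t ≤ r 0 - P t 0 := by
            simp only [gHN]
            have hA : 0 ≤ ∑ j ∈ Finset.range n, a j * clm H t j :=
              Finset.sum_nonneg fun j hj =>
                mul_nonneg (ha j (Finset.mem_range.1 hj)).le
                  (clmHnn hsol h0 (Finset.mem_range.1 hj) t)
            have hS : clm P t 0 ≤ ∑ j ∈ Finset.Ico 0 n, clm P t j :=
              Finset.single_le_sum (f := fun j => clm P t j)
                (fun j hj => clmPnn hsol h0 (Finset.mem_Ico.1 hj).2 t)
                (Finset.mem_Ico.2 ⟨le_refl 0, hn⟩)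
            rw [clm_of_nonneg _ ht] at hS
            linarith
          have hgP : P t 0 * gPN e ν H 0 t = e 0 * ν 0 * P t 0 * H t 0 - ν 0 * P t 0 := by
            have h1 : gPN e ν H 0 t = e 0 * ν 0 * (H t 0 - 1 / e 0) := by
              simp [gPN, Finset.sum_range_one, clm_of_nonneg _ ht]
            rw [h1]
            field_simp
          have h2 : e 0 * ν 0 * (H t 0 * gHN n r a H P 0 t)
              ≤ e 0 * ν 0 * (H t 0 * (r 0 - P t 0)) := by
            apply mul_le_mul_of_nonneg_left _ (mul_pos he0 hν0).le
            exact mul_le_mul_of_nonneg_left hgH hHt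
          rw [hgP]
          have hHe : e 0 * ν 0 * H t 0 ≤ e 0 * ν 0 * MH :=
            mul_le_mul_of_nonneg_left hHtM (mul_pos he0 hν0).le
          have hPbig : e 0 * r 0 * MH < P t 0 := by
            simp only [hMVdef] at hMt
            linarith
          have hfact : e 0 * ν 0 * r 0 * H t 0 ≤ e 0 * ν 0 * r 0 * MH :=
            mul_le_mul_of_nonneg_left hHtM (by positivity)
          have hν0P : ν 0 * (e 0 * r 0 * MH) < ν 0 * P t 0 :=
            mul_lt_mul_of_pos_left hPbig hν0
          nlinarith [h2, hfact, hν0P]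
      set MP := max (e 0 * ν 0 * H 0 0 + P 0 0) MV with hMPdef
      have hMPP : ∀ t, 0 ≤ t → P t 0 ≤ MP := by
        intro t ht
        have h1 := hVb t ht
        have h2 : 0 ≤ e 0 * ν 0 * H t 0 :=
          mul_nonneg (mul_pos he0 hν0).le (Hnn hsol h0 hn ht)
        linarith
      have hMPpos : 0 < MP := by
        have h2 : 0 ≤ e 0 * ν 0 * H 0 0 :=
          mul_nonneg (mul_pos he0 hν0).le (h0 0 hn).1
        have : 0 < e 0 * ν 0 * H 0 0 + P 0 0 := by linarith
        exact lt_of_lt_of_le this (le_max_left _ _)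
      have hGP0id : ∀ t : ℝ, (∫ s in (0:ℝ)..t, gPN e ν H 0 s)
          = e 0 * ν 0 * ((∫ s in (0:ℝ)..t, clm H s 0) - (1 / e 0) * t) := by
        intro t
        rw [intervalIntegral.integral_congr (g := fun s => e 0 * ν 0 * (clm H s 0 - 1 / e 0))
          (fun s _ => by simp [gPN, Finset.sum_range_one])]
        rw [intervalIntegral.integral_const_mul,
          intervalIntegral.integral_sub ((contH hsol hn).intervalIntegrable _ _)
            _root_.intervalIntegrable_const,
          intervalIntegral.integral_const]
        simp only [smul_eq_mul, sub_zero]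
        ring
      set CH2 := max 0 (Real.log (MP / P 0 0) / (e 0 * ν 0)) with hCH2def
      have hCH2nn : (0:ℝ) ≤ CH2 := le_max_left _ _
      have hIH : ∀ t, 0 ≤ t → (∫ s in (0:ℝ)..t, clm H s 0) ≤ (1 / e 0) * t + CH2 := by
        intro t ht
        have h1 := expP hsol hn ht
        have h2 : P 0 0 * Real.exp (∫ s in (0:ℝ)..t, gPN e ν H 0 s) ≤ MP := by
          rw [← h1]
          exact hMPP t ht
        have h3 : Real.exp (∫ s in (0:ℝ)..t, gPN e ν H 0 s) ≤ MP / P 0 0 := by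
          rw [le_div_iff₀ hP00]
          nlinarith [h2]
        have hMPd : 0 < MP / P 0 0 := div_pos hMPpos hP00
        have h4 : (∫ s in (0:ℝ)..t, gPN e ν H 0 s) ≤ Real.log (MP / P 0 0) :=
          (Real.le_log_iff_exp_le hMPd).2 h3
        rw [hGP0id t] at h4
        have hev' : 0 < e 0 * ν 0 := mul_pos he0 hν0
        have h5 : (∫ s in (0:ℝ)..t, clm H s 0) - (1 / e 0) * t
            ≤ Real.log (MP / P 0 0) / (e 0 * ν 0) := by
          rw [le_div_iff₀ hev']
          nlinarith [h4]
        have h6 : Real.log (MP / P 0 0) / (e 0 * ν 0) ≤ CH2 := le_max_right _ _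
        linarith
      have hbd : IsBoundedUnder (· ≤ ·) atTop (fun t => P t 0) :=
        isBoundedUnder_of_eventually_le ((eventually_ge_atTop 0).mono fun t ht => hMPP t ht)
      set L := limsup (fun t => P t 0) atTop with hL
      have hb2 : L < (L + m) / 2 := by
        simp only [hL]
        linarith [hcon]
      have hev := eventually_lt_of_limsup_lt hb2 hbd
      obtain ⟨T0, hT0⟩ := eventually_atTop.1 hev
      set T := max T0 0 with hTdef
      have hTnn : (0:ℝ) ≤ T := le_max_right _ _
      set β := max ((L + m) / 2) 0 with hβdef
      have hβ0 : (0:ℝ) ≤ β := le_max_right _ _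
      have hβm : β < m := by
        apply max_lt _ hm
        simp only [hL]
        linarith [hcon]
      have hbound : ∀ s, T ≤ s → P s 0 ≤ β := fun s hs =>
        le_trans (hT0 s (le_trans (le_max_left _ _) hs)).le (le_max_left _ _)
      have hIP : ∀ t, 0 ≤ t → (∫ s in (0:ℝ)..t, clm P s 0) ≤ β * t + MP * T := by
        apply int_piecewise_bound (contP hsol hn) hTnn hMPpos.le hβ0
        · intro s hs _
          rw [clm_of_nonneg _ hs]
          exact hMPP s hs
        · intro s hs
          have hs0 : 0 ≤ s := le_trans hTnn hs
          rw [clm_of_nonneg _ hs0]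
          exact hbound s hs
      have hm1 : m ≤ r 0 - r 1 := min_le_left _ _
      have h7 : (r 0 * e 0 - a 0) / e 0 = r 0 - a 0 / e 0 := by
        rw [sub_div, mul_div_cancel_right₀ _ (ne_of_gt he0)]
      have hm2' : m ≤ r 0 - a 0 / e 0 := by
        rw [hmdef, ← h7]
        exact min_le_right _ _
      exact nin_master hn hr ha he hν hsol h0 hH00 hMHpos hMH
        (le_of_lt (one_div_pos.2 he0)) hβ0 hCH2nn (mul_nonneg hMPpos.le hTnn)
        (fun i h1 hi => h1e i h1 hi)
        (fun i h1 hi => by have := hrle i h1 hi; linarith)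
        hIH hIP
        (by
          have h8 : a 0 * (1 / e 0) = a 0 / e 0 := by ring
          linarith)
end

section
/- Time-average lemma for perturbed Lotka-Volterra systems: let x(t) be a bounded positive solution of x_i' = x_i(r_i + Σ_j a_{ij} x_j), 1 ≤ i ≤ n, and suppose there exist k < n and m, M, δ > 0 with m ≤ x_i(t) ≤ M for i ≤ k and all t > 0, x_{k+1}(t) ≤ δ for all t > 0, and x_j(t) → 0 for j > k+1. If the k×k subsystem obtained by setting x_j = 0 for j > k has a unique positive equilibrium p (in particular the k×k matrix (a_{ij})_{i,j ≤ k} is invertible), then liminf_{T→∞} (1/T) ∫_0^T x_i(t) dt = p_i + O(δ) for 1 ≤ i ≤ k, and the same holds for the limsup; i.e., there is a constant c (depending only on the matrix data) with |limsup_T [x_i]_T − p_i| ≤ c δ and |liminf_T [x_i]_T − p_i| ≤ c δ. -/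
open Filter Finset

lemma qbound (k : ℕ) (A : ℕ → ℕ → ℝ)
    (hinv : ∀ v : ℕ → ℝ, (∀ i < k, ∑ j ∈ Finset.range k, A i j * v j = 0) → ∀ j < k, v j = 0) :
    ∃ C > (0:ℝ), ∀ v : Fin k → ℝ,
      ‖v‖ ≤ C * ‖(fun i : Fin k => ∑ j : Fin k, A i j * v j)‖ := by
  set L : (Fin k → ℝ) →ₗ[ℝ] (Fin k → ℝ) :=
    { toFun := fun v i => ∑ j : Fin k, A i j * v j
      map_add' := by
        intro v w; funext i; simp [mul_add, Finset.sum_add_distrib]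
      map_smul' := by
        intro c v; funext i
        simp [Finset.mul_sum, smul_eq_mul]
        congr 1; funext j; ring } with hL
  have hLinj : Function.Injective L := by
    rw [← LinearMap.ker_eq_bot, LinearMap.ker_eq_bot']
    intro v hv
    set v' : ℕ → ℝ := fun j => if h : j < k then v ⟨j, h⟩ else 0 with hv'
    have h1 : ∀ i < k, ∑ j ∈ Finset.range k, A i j * v' j = 0 := by
      intro i hi
      have : ∑ j ∈ Finset.range k, A i j * v' j = ∑ j : Fin k, A i j * v j := by
        rw [Finset.sum_range]
        refine Finset.sum_congr rfl fun j _ => ?_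
        simp [hv', j.isLt]
      rw [this]
      exact congrFun hv ⟨i, hi⟩
    have h2 := hinv v' h1
    funext j
    have := h2 j j.isLt
    simpa [hv', j.isLt] using this
  have hLsurj : Function.Surjective L := LinearMap.injective_iff_surjective.mp hLinj
  set e := LinearEquiv.ofBijective L ⟨hLinj, hLsurj⟩ with he
  set S := LinearMap.toContinuousLinearMap (e.symm.toLinearMap) with hS
  refine ⟨‖S‖ + 1, by positivity, fun v => ?_⟩
  have h1 : S (L v) = v := e.symm_apply_apply v
  calc ‖v‖ = ‖S (L v)‖ := by rw [h1]
    _ ≤ ‖S‖ * ‖L v‖ := S.le_opNorm _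
    _ ≤ (‖S‖ + 1) * ‖L v‖ := by
        have := norm_nonneg (L v)
        nlinarith [norm_nonneg S]

lemma cesaro_zero (f : ℝ → ℝ) (B : ℝ) (hc : Continuous f) (h0 : ∀ t, 0 ≤ f t)
    (hB : ∀ t, f t ≤ B) (hf : Tendsto f atTop (nhds 0)) :
    Tendsto (fun T => (1/T) * ∫ t in (0:ℝ)..T, f t) atTop (nhds 0) := by
  have hB0 : 0 ≤ B := le_trans (h0 0) (hB 0)
  have hint : ∀ a b : ℝ, IntervalIntegrable f MeasureTheory.volume a b :=
    fun a b => hc.intervalIntegrable a b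
  rw [tendsto_order]
  constructor
  · intro a ha
    filter_upwards [eventually_ge_atTop (1:ℝ)] with T hT
    have h1 : (0:ℝ) < T := lt_of_lt_of_le one_pos hT
    have h2 : 0 ≤ ∫ t in (0:ℝ)..T, f t :=
      intervalIntegral.integral_nonneg h1.le (fun t _ => h0 t)
    have : 0 ≤ (1/T) * ∫ t in (0:ℝ)..T, f t := by positivity
    linarith
  · intro a ha
    obtain ⟨T0', hT0'⟩ := (Metric.tendsto_atTop.mp hf (a/2) (by linarith)).imp (fun _ h => h)
    set T0 : ℝ := max T0' 0 with hT0def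
    have hT00 : 0 ≤ T0 := le_max_right _ _
    have hsmall : ∀ t ≥ T0, f t ≤ a/2 := by
      intro t ht
      have := hT0' t (le_trans (le_max_left _ _) ht)
      rw [Real.dist_eq, sub_zero] at this
      have := abs_le.mp this.le
      linarith [this.2]
    have hev : ∀ᶠ T in atTop, (1/T) * ∫ t in (0:ℝ)..T, f t ≤ B * T0 * (1/T) + a/2 := by
      filter_upwards [eventually_ge_atTop (max T0 1)] with T hT
      have hT1 : (1:ℝ) ≤ T := le_trans (le_max_right _ _) hT
      have hTT0 : T0 ≤ T := le_trans (le_max_left _ _) hT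
      have hTpos : (0:ℝ) < T := lt_of_lt_of_le one_pos hT1
      have hsplit : (∫ t in (0:ℝ)..T, f t)
          = (∫ t in (0:ℝ)..T0, f t) + ∫ t in T0..T, f t :=
        (intervalIntegral.integral_add_adjacent_intervals (hint 0 T0) (hint T0 T)).symm
      have hb1 : (∫ t in (0:ℝ)..T0, f t) ≤ B * T0 := by
        have := intervalIntegral.integral_mono_on hT00 (hint 0 T0)
          (intervalIntegrable_const (c := B)) (fun t _ => hB t)
        simpa [smul_eq_mul, mul_comm] using this
      have hb2 : (∫ t in T0..T, f t) ≤ (a/2) * T := by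
        have h := intervalIntegral.integral_mono_on hTT0 (hint T0 T)
          (intervalIntegrable_const (c := a/2)) (fun t ht => hsmall t ht.1)
        have h2 : (∫ t in T0..T, f t) ≤ (T - T0) * a / 2 := by simpa [smul_eq_mul] using h
        nlinarith
      have hle : (∫ t in (0:ℝ)..T, f t) ≤ B * T0 + (a/2) * T := by linarith
      calc (1/T) * ∫ t in (0:ℝ)..T, f t ≤ (1/T) * (B * T0 + (a/2) * T) := by
            apply mul_le_mul_of_nonneg_left hle (by positivity)
        _ = B * T0 * (1/T) + a/2 * (T * (1/T)) := by ring
        _ = B * T0 * (1/T) + a/2 := by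
            rw [mul_one_div_cancel (ne_of_gt hTpos), mul_one]
    have hlim : Tendsto (fun T : ℝ => B * T0 * (1/T) + a/2) atTop (nhds (a/2)) := by
      have h1 : Tendsto (fun T : ℝ => 1/T) atTop (nhds 0) := by simpa [one_div] using (tendsto_inv_atTop_zero (𝕜 := ℝ))
      have h2 : Tendsto (fun T : ℝ => B * T0 * (1/T)) atTop (nhds 0) := by
        simpa using h1.const_mul (B * T0)
      simpa using h2.add_const (a/2)
    have := hlim.eventually_lt_const (by linarith : a/2 < a)
    filter_upwards [hev, this] with T h1 h2
    exact lt_of_le_of_lt h1 h2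

lemma exists_seq_cluster (u : ℝ → ℝ) (L : ℝ)
    (h : ∀ ε > (0:ℝ), ∃ᶠ T in atTop, |u T - L| < ε) :
    ∃ s : ℕ → ℝ, Tendsto s atTop atTop ∧ Tendsto (fun n => u (s n)) atTop (nhds L) := by
  have hch : ∀ n : ℕ, ∃ T ≥ (n:ℝ), |u T - L| < 1/(n+1) := by
    intro n
    exact frequently_atTop.mp (h (1/(n+1)) (by positivity)) n
  choose s hs1 hs2 using hch
  refine ⟨s, ?_, ?_⟩
  · exact tendsto_atTop_mono hs1 tendsto_natCast_atTop_atTop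
  · rw [tendsto_iff_dist_tendsto_zero]
    refine squeeze_zero (fun n => dist_nonneg)
      (fun n => le_of_lt (by simpa [Real.dist_eq] using hs2 n))
      tendsto_one_div_add_atTop_nhds_zero_nat

/-- time-average lemma for perturbed Lotka–Volterra systems, Lemma 1.2 of
Korytowski–Smith: there is a constant `c` depending only on the matrix data such that for
every bounded positive solution `x` of `x_i' = x_i(r_i + Σ_j a_{ij} x_j)` with
`m ≤ x_i(t) ≤ M` for `i ≤ k`, `x_{k+1}(t) ≤ δ`, and `x_j(t) → 0` for `j > k+1`, the limsup and
liminf of the time averages `(1/T)∫_0^T x_i` differ from the equilibrium `p_i` of the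
truncated `k × k` subsystem by at most `c δ`, for `1 ≤ i ≤ k` (0-based indexing). -/
theorem statement9
    (n k : ℕ) (hk : k < n) (r : ℕ → ℝ) (A : ℕ → ℕ → ℝ)
    (p : ℕ → ℝ)
    (hp : ∀ i < k, 0 < p i ∧ r i + ∑ j ∈ Finset.range k, A i j * p j = 0)
    (hpu : ∀ q : ℕ → ℝ, (∀ i < k, 0 < q i ∧ r i + ∑ j ∈ Finset.range k, A i j * q j = 0) →
      ∀ i < k, q i = p i)
    (hinv : ∀ v : ℕ → ℝ, (∀ i < k, ∑ j ∈ Finset.range k, A i j * v j = 0) → ∀ j < k, v j = 0) :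
    ∃ c > (0:ℝ), ∀ (x : ℝ → ℕ → ℝ) (δ m M B : ℝ), 0 < δ → 0 < m → 0 < M →
      (∀ t, ∀ i < n, HasDerivAt (fun s => x s i)
        (x t i * (r i + ∑ j ∈ Finset.range n, A i j * x t j)) t) →
      (∀ t, ∀ i < n, 0 < x t i) →
      (∀ t, ∀ i < n, x t i ≤ B) →
      (∀ t > (0:ℝ), ∀ i < k, m ≤ x t i ∧ x t i ≤ M) →
      (∀ t > (0:ℝ), x t k ≤ δ) →
      (∀ j, k < j → j < n → Filter.Tendsto (fun t => x t j) Filter.atTop (nhds 0)) →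
      ∀ i < k,
        |Filter.limsup (fun T => (1 / T) * ∫ t in (0:ℝ)..T, x t i) Filter.atTop - p i|
          ≤ c * δ ∧
        |Filter.liminf (fun T => (1 / T) * ∫ t in (0:ℝ)..T, x t i) Filter.atTop - p i|
          ≤ c * δ := by
  obtain ⟨C, hC, hCb⟩ := qbound k A hinv
  set a0 : ℝ := ∑ i ∈ Finset.range k, |A i k| with ha0
  have ha0nn : 0 ≤ a0 := Finset.sum_nonneg fun i _ => abs_nonneg _
  refine ⟨C * a0 + 1, by positivity, ?_⟩
  intro x δ m M B hδ hm hM hderiv hpos hB hbound hδx htend i hik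
  have hin : i < n := hik.trans hk
  have hB0 : 0 < B := lt_of_lt_of_le (hpos 0 i hin) (hB 0 i hin)
  have hcont : ∀ j < n, Continuous fun t => x t j := fun j hj =>
    continuous_iff_continuousAt.mpr fun t => (hderiv t j hj).differentiableAt.continuousAt
  have hint : ∀ j < n, ∀ a b : ℝ, IntervalIntegrable (fun t => x t j)
      MeasureTheory.volume a b := fun j hj a b => (hcont j hj).intervalIntegrable a b
  set u : ℕ → ℝ → ℝ := fun j T => (1/T) * ∫ t in (0:ℝ)..T, x t j with hu
  -- FTC identity
  have key : ∀ i' < n, ∀ T : ℝ, Real.log (x T i') - Real.log (x 0 i')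
      = r i' * T + ∑ j ∈ Finset.range n, A i' j * ∫ t in (0:ℝ)..T, x t j := by
    intro i' hi' T
    have hd : ∀ t ∈ Set.uIcc (0:ℝ) T, HasDerivAt (fun s => Real.log (x s i'))
        (r i' + ∑ j ∈ Finset.range n, A i' j * x t j) t := by
      intro t _
      have h := (hderiv t i' hi').log (ne_of_gt (hpos t i' hi'))
      convert h using 1
      rw [mul_comm, mul_div_assoc, div_self (ne_of_gt (hpos t i' hi')), mul_one]
    have hcsum : Continuous fun t => ∑ j ∈ Finset.range n, A i' j * x t j :=
      continuous_finset_sum _ fun j hj =>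
        continuous_const.mul (hcont j (Finset.mem_range.mp hj))
    have hc2 : Continuous fun t => r i' + ∑ j ∈ Finset.range n, A i' j * x t j :=
      continuous_const.add hcsum
    have hFT := intervalIntegral.integral_eq_sub_of_hasDerivAt hd
      (hc2.intervalIntegrable 0 T)
    rw [← hFT]
    rw [intervalIntegral.integral_add (intervalIntegrable_const)
      (hcsum.intervalIntegrable 0 T)]
    rw [intervalIntegral.integral_const]
    congr 1
    · simp [mul_comm]
    · rw [intervalIntegral.integral_finset_sum
        (fun j hj => ((show Continuous fun t => A i' j * x t j from continuous_const.mul (hcont j (Finset.mem_range.mp hj))).intervalIntegrable 0 T))]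
      exact Finset.sum_congr rfl fun j _ => intervalIntegral.integral_const_mul _ _
  -- basic bounds on averages
  have hu01 : ∀ j < n, ∀ T : ℝ, 1 ≤ T → 0 ≤ u j T ∧ u j T ≤ B := by
    intro j hj T hT
    have hTpos : (0:ℝ) < T := lt_of_lt_of_le one_pos hT
    have h0 : 0 ≤ ∫ t in (0:ℝ)..T, x t j :=
      intervalIntegral.integral_nonneg hTpos.le fun t _ => (hpos t j hj).le
    have h1 : (∫ t in (0:ℝ)..T, x t j) ≤ T * B := by
      have := intervalIntegral.integral_mono_on hTpos.le (hint j hj 0 T)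
        (intervalIntegrable_const (c := B)) (fun t _ => hB t j hj)
      simpa [smul_eq_mul] using this
    constructor
    · exact mul_nonneg (by positivity) h0
    · calc u j T ≤ (1/T) * (T * B) :=
            mul_le_mul_of_nonneg_left h1 (by positivity)
        _ = B := by field_simp
  -- log term tends to zero
  have hlog0 : ∀ i' < k, Tendsto
      (fun T => (Real.log (x T i') - Real.log (x 0 i')) * (1/T)) atTop (nhds 0) := by
    intro i' hi'
    have hK : ∀ T : ℝ, 1 ≤ T →
        |Real.log (x T i') - Real.log (x 0 i')|
          ≤ |Real.log m| + |Real.log M| + |Real.log (x 0 i')| := by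
      intro T hT
      have hTpos : (0:ℝ) < T := lt_of_lt_of_le one_pos hT
      obtain ⟨hml, hMu⟩ := hbound T hTpos i' hi'
      have h1 : Real.log m ≤ Real.log (x T i') := Real.log_le_log hm hml
      have h2 : Real.log (x T i') ≤ Real.log M :=
        Real.log_le_log (lt_of_lt_of_le hm hml) hMu
      have := abs_sub_abs_le_abs_sub (Real.log (x T i')) (Real.log (x 0 i'))
      have h3 : |Real.log (x T i')| ≤ |Real.log m| + |Real.log M| := by
        rw [abs_le]; constructor
        · linarith [neg_abs_le (Real.log m), abs_nonneg (Real.log M)]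
        · linarith [le_abs_self (Real.log M), abs_nonneg (Real.log m)]
      calc |Real.log (x T i') - Real.log (x 0 i')|
          ≤ |Real.log (x T i')| + |Real.log (x 0 i')| := abs_sub _ _
        _ ≤ |Real.log m| + |Real.log M| + |Real.log (x 0 i')| := by linarith
    have hinv1 : Tendsto (fun T : ℝ => 1/T) atTop (nhds 0) := by
      simpa [one_div] using (tendsto_inv_atTop_zero (𝕜 := ℝ))
    apply squeeze_zero_norm' ?_ (by
      simpa using hinv1.const_mul (|Real.log m| + |Real.log M| + |Real.log (x 0 i')|))
    filter_upwards [eventually_ge_atTop (1:ℝ)] with T hT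
    have hTpos : (0:ℝ) < T := lt_of_lt_of_le one_pos hT
    rw [Real.norm_eq_abs, abs_mul, abs_of_pos (by positivity : (0:ℝ) < 1/T)]
    have := mul_le_mul_of_nonneg_right (hK T hT) (by positivity : (0:ℝ) ≤ 1/T)
    simpa [one_div] using this
  -- Cesàro for j > k
  have huces : ∀ j, k < j → j < n → Tendsto (fun T => u j T) atTop (nhds 0) := by
    intro j hkj hjn
    exact cesaro_zero (fun t => x t j) B (hcont j hjn) (fun t => (hpos t j hjn).le)
      (fun t => hB t j hjn) (htend j hkj hjn)
  -- bound on u k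
  have hukb : ∀ T : ℝ, 1 ≤ T → u k T ≤ δ + B * (1/T) := by
    intro T hT
    have hTpos : (0:ℝ) < T := lt_of_lt_of_le one_pos hT
    have hsplit : (∫ t in (0:ℝ)..T, x t k)
        = (∫ t in (0:ℝ)..(1:ℝ), x t k) + ∫ t in (1:ℝ)..T, x t k :=
      (intervalIntegral.integral_add_adjacent_intervals (hint k hk 0 1) (hint k hk 1 T)).symm
    have hb1 : (∫ t in (0:ℝ)..(1:ℝ), x t k) ≤ B := by
      have := intervalIntegral.integral_mono_on zero_le_one (hint k hk 0 1)
        (intervalIntegrable_const (c := B)) (fun t _ => hB t k hk)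
      simpa using this
    have hb2 : (∫ t in (1:ℝ)..T, x t k) ≤ δ * T := by
      have h := intervalIntegral.integral_mono_on hT (hint k hk 1 T)
        (intervalIntegrable_const (c := δ)) (fun t ht => hδx t (lt_of_lt_of_le one_pos ht.1))
      have h2 : (∫ t in (1:ℝ)..T, x t k) ≤ (T - 1) * δ := by simpa [smul_eq_mul] using h
      nlinarith
    calc u k T ≤ (1/T) * (B + δ * T) := by
          apply mul_le_mul_of_nonneg_left (by linarith) (by positivity)
      _ = δ * (T * (1/T)) + B * (1/T) := by ring
      _ = δ + B * (1/T) := by rw [mul_one_div_cancel (ne_of_gt hTpos), mul_one]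
  -- main cluster-point estimate
  have main : ∀ L : ℝ, (∀ ε > (0:ℝ), ∃ᶠ T in atTop, |u i T - L| < ε) →
      |L - p i| ≤ (C * a0 + 1) * δ := by
    intro L hL
    obtain ⟨s, hs1, hs2⟩ := exists_seq_cluster (u i) L hL
    obtain ⟨N, hN⟩ := eventually_atTop.mp (hs1.eventually (eventually_ge_atTop (1:ℝ)))
    set s' : ℕ → ℝ := fun n2 => s (n2 + N) with hs'def
    have hs'1 : Tendsto s' atTop atTop := hs1.comp (tendsto_add_atTop_nat N)
    have hs'2 : Tendsto (fun n2 => u i (s' n2)) atTop (nhds L) :=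
      hs2.comp (tendsto_add_atTop_nat N)
    have hs'ge : ∀ n2, 1 ≤ s' n2 := fun n2 => hN _ (Nat.le_add_left N n2)
    set v : ℕ → (Fin k → ℝ) := fun n2 j => u j (s' n2) with hvdef
    have hvmem : ∀ n2, v n2 ∈ Metric.closedBall (0 : Fin k → ℝ) B := by
      intro n2
      rw [Metric.mem_closedBall, dist_zero_right]
      refine (pi_norm_le_iff_of_nonneg hB0.le).mpr fun j => ?_
      have hj := hu01 j (lt_trans j.isLt hk) (s' n2) (hs'ge n2)
      rw [Real.norm_eq_abs, abs_le]
      exact ⟨by linarith [hj.1], hj.2⟩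
    obtain ⟨q, _, φ, hφ, hqlim⟩ :=
      tendsto_subseq_of_bounded Metric.isBounded_closedBall hvmem
    set t : ℕ → ℝ := fun n2 => s' (φ n2) with htdef
    have ht1 : Tendsto t atTop atTop := hs'1.comp hφ.tendsto_atTop
    have htge : ∀ n2, 1 ≤ t n2 := fun n2 => hs'ge (φ n2)
    have hqj : ∀ j : Fin k, Tendsto (fun n2 => u j (t n2)) atTop (nhds (q j)) := by
      intro j
      exact (tendsto_pi_nhds.mp hqlim) j
    have hqiL : q ⟨i, hik⟩ = L :=
      tendsto_nhds_unique (hqj ⟨i, hik⟩) (hs'2.comp hφ.tendsto_atTop)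
    -- row estimates
    have hinv1 : Tendsto (fun T : ℝ => 1/T) atTop (nhds 0) := by
      simpa [one_div] using (tendsto_inv_atTop_zero (𝕜 := ℝ))
    have hrow : ∀ i' : Fin k, |∑ j : Fin k, A i' j * (q j - p j)| ≤ a0 * δ := by
      intro i'
      have hi'k : (i' : ℕ) < k := i'.isLt
      have hi'n : (i' : ℕ) < n := lt_trans hi'k hk
      have hk1n : k + 1 ≤ n := hk
      have hsplitsum : ∀ f : ℕ → ℝ, ∑ j ∈ Finset.range n, f j
          = ((∑ j ∈ Finset.range k, f j) + f k) + ∑ j ∈ Finset.Ico (k+1) n, f j := by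
        intro f
        rw [Finset.range_eq_Ico,
          ← Finset.sum_Ico_consecutive f (Nat.zero_le (k+1)) hk1n,
          ← Finset.range_eq_Ico, Finset.sum_range_succ]
      have hid : ∀ T : ℝ, 1 ≤ T →
          r i' + ∑ j ∈ Finset.range n, A i' j * u j T
            = (Real.log (x T i') - Real.log (x 0 i')) * (1/T) := by
        intro T hT
        have hTpos : (0:ℝ) < T := lt_of_lt_of_le one_pos hT
        rw [key i' hi'n T, add_mul, Finset.sum_mul]
        congr 1
        · field_simp
        · refine Finset.sum_congr rfl fun j _ => ?_
          simp only [hu]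
          ring
      set Sq : ℝ := ∑ j : Fin k, A i' j * q j with hSq
      set w : ℕ → ℝ := fun n2 => ∑ j ∈ Finset.range k, A i' j * u j (t n2) with hw
      set S2 : ℕ → ℝ := fun n2 => ∑ j ∈ Finset.Ico (k+1) n, A i' j * u j (t n2) with hS2def
      set D : ℕ → ℝ := fun n2 =>
        (Real.log (x (t n2) i') - Real.log (x 0 i')) * (1/(t n2)) with hDdef
      have hD : Tendsto D atTop (nhds 0) := (hlog0 i' hi'k).comp ht1
      have hwlim : Tendsto w atTop (nhds Sq) := by
        have h1 : Tendsto (fun n2 => ∑ j : Fin k, A i' j * u j (t n2)) atTop (nhds Sq) :=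
          tendsto_finset_sum _ fun j _ => (hqj j).const_mul (A i' j)
        exact h1.congr fun n2 => (Finset.sum_range fun j => A i' j * u j (t n2)).symm
      have hS2 : Tendsto S2 atTop (nhds 0) := by
        have h := tendsto_finset_sum (Finset.Ico (k+1) n)
          (fun j hj => (((huces j (Finset.mem_Ico.mp hj).1
            (Finset.mem_Ico.mp hj).2).comp ht1).const_mul (A i' j)))
        simpa using h
      have heq : ∀ n2, A i' k * u k (t n2) = D n2 - r i' - w n2 - S2 n2 := by
        intro n2
        have h1 := hid (t n2) (htge n2)
        rw [hsplitsum (fun j => A i' j * u j (t n2))] at h1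
        simp only [hw, hS2def, hDdef] at *
        linarith
      have hAk : Tendsto (fun n2 => A i' k * u k (t n2)) atTop
          (nhds (0 - r i' - Sq - 0)) := by
        exact Tendsto.congr (fun n2 => (heq n2).symm)
          (((hD.sub tendsto_const_nhds).sub hwlim).sub hS2)
      have hRHS : Tendsto (fun n2 => |A i' k| * (δ + B * (1/(t n2)))) atTop
          (nhds (|A i' k| * (δ + B * 0))) :=
        (tendsto_const_nhds.add ((hinv1.comp ht1).const_mul B)).const_mul _
      have hbnd : |0 - r i' - Sq - 0| ≤ |A i' k| * (δ + B * 0) :=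
        le_of_tendsto_of_tendsto' hAk.abs hRHS (fun n2 => by
          rw [abs_mul, abs_of_nonneg (hu01 k hk (t n2) (htge n2)).1]
          exact mul_le_mul_of_nonneg_left (hukb (t n2) (htge n2)) (abs_nonneg _))
      have hAka0 : |A i' k| ≤ a0 :=
        Finset.single_le_sum (f := fun j => |A j k|) (fun j _ => abs_nonneg (A j k))
          (Finset.mem_range.mpr hi'k)
      have hpe := (hp i' hi'k).2
      have hfin : ∑ j : Fin k, A i' j * (q j - p j) = Sq + r i' := by
        have h2 : (∑ j : Fin k, A i' j * p (j:ℕ)) = ∑ j ∈ Finset.range k, A i' j * p j :=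
          (Finset.sum_range fun j => A i' j * p j).symm
        have h3 : ∑ j : Fin k, A i' j * (q j - p j)
            = Sq - ∑ j : Fin k, A i' j * p (j:ℕ) := by
          rw [hSq, ← Finset.sum_sub_distrib]
          exact Finset.sum_congr rfl fun j _ => by ring
        rw [h3, h2]
        linarith
      rw [hfin]
      calc |Sq + r i'| = |0 - r i' - Sq - 0| := by
            rw [show (0:ℝ) - r i' - Sq - 0 = -(Sq + r i') by ring, abs_neg]
        _ ≤ |A i' k| * (δ + B * 0) := hbnd
        _ = |A i' k| * δ := by ring
        _ ≤ a0 * δ := mul_le_mul_of_nonneg_right hAka0 hδ.le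
    -- conclude via the quantitative invertibility
    have hLv : ‖(fun i' : Fin k => ∑ j : Fin k, A i' j * ((fun j : Fin k => q j - p j) j))‖
        ≤ a0 * δ := by
      refine (pi_norm_le_iff_of_nonneg (by positivity)).mpr fun i' => ?_
      simpa [Real.norm_eq_abs] using hrow i'
    have hnq : ‖(fun j : Fin k => q j - p j)‖ ≤ C * (a0 * δ) :=
      le_trans (hCb _) (mul_le_mul_of_nonneg_left hLv hC.le)
    have : |q ⟨i, hik⟩ - p i| ≤ C * (a0 * δ) := by
      have h1 : |q ⟨i, hik⟩ - p (⟨i, hik⟩ : Fin k)| ≤ ‖(fun j : Fin k => q j - p j)‖ := by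
        simpa [Real.norm_eq_abs] using norm_le_pi_norm (fun j : Fin k => q j - p j) ⟨i, hik⟩
      exact le_trans h1 hnq
    rw [hqiL] at this
    calc |L - p i| ≤ C * (a0 * δ) := this
      _ ≤ (C * a0 + 1) * δ := by nlinarith
  -- boundedness of u i on atTop
  have hble : IsBoundedUnder (· ≤ ·) atTop (u i) := by
    refine ⟨B, ?_⟩
    rw [eventually_map]
    filter_upwards [eventually_ge_atTop (1:ℝ)] with T hT
    exact (hu01 i hin T hT).2
  have hbge : IsBoundedUnder (· ≥ ·) atTop (u i) := by
    refine ⟨0, ?_⟩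
    rw [eventually_map]
    filter_upwards [eventually_ge_atTop (1:ℝ)] with T hT
    exact (hu01 i hin T hT).1
  constructor
  · apply main
    intro ε hε
    have h1 : ∀ᶠ T in atTop, u i T < limsup (u i) atTop + ε :=
      eventually_lt_of_limsup_lt (by linarith) hble
    have h2 : ∃ᶠ T in atTop, limsup (u i) atTop - ε < u i T :=
      frequently_lt_of_lt_limsup hbge.isCoboundedUnder_le (by linarith)
    exact (h2.and_eventually h1).mono fun T hT =>
      abs_lt.mpr ⟨by linarith [hT.1], by linarith [hT.2]⟩
  · apply main
    intro ε hε
    have h1 : ∀ᶠ T in atTop, liminf (u i) atTop - ε < u i T :=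
      eventually_lt_of_lt_liminf (by linarith) hbge
    have h2 : ∃ᶠ T in atTop, u i T < liminf (u i) atTop + ε :=
      frequently_lt_of_liminf_lt hble.isCoboundedUnder_ge (by linarith)
    exact (h2.and_eventually h1).mono fun T hT =>
      abs_lt.mpr ⟨by linarith [hT.2], by linarith [hT.1]⟩
end

section
/- For the nested infection network system written in equilibrium-centered form, define the Lyapunov function V = Σ_i a (H_i − H_i* − H_i* log(H_i/H_i*)) + Σ_i (a/(e_i n_i)) (P_i − P_i* − P_i* log(P_i/P_i*)), where all competition coefficients equal a > 0. Then along any positive solution, dV/dt = −a²(Σ_i H_i − Σ_i H_i*)², which is ≤ 0. -/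
open Filter Finset

/-- with equal competition coefficients `a_j = a`, the Volterra-type Lyapunov
function `V = Σ_i a U(H_i, H_i*) + Σ_i (a/(e_i n_i)) U(P_i, P_i*)` satisfies
`dV/dt = −a²(Σ_i H_i − Σ_i H_i*)² ≤ 0` along any positive solution of the
equilibrium-centered NIN system. -/
theorem statement12
    (n : ℕ) (a : ℝ) (ha : 0 < a) (e ν Hs Ps : ℕ → ℝ)
    (he : ∀ i < n, 0 < e i) (hν : ∀ i < n, 0 < ν i)
    (hHs : ∀ i < n, 0 < Hs i) (hPs : ∀ i < n, 0 < Ps i)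
    (H P : ℝ → ℕ → ℝ)
    (hpos : ∀ t, ∀ i < n, 0 < H t i ∧ 0 < P t i)
    (hH : ∀ t, ∀ i < n, HasDerivAt (fun s => H s i)
      (H t i * ((∑ j ∈ Finset.range n, a * (Hs j - H t j))
        + ∑ j ∈ Finset.Ico i n, (Ps j - P t j))) t)
    (hP : ∀ t, ∀ i < n, HasDerivAt (fun s => P s i)
      (e i * ν i * P t i * ∑ j ∈ Finset.range (i + 1), (H t j - Hs j)) t) :
    ∀ t : ℝ,
      HasDerivAt (fun s =>
          (∑ i ∈ Finset.range n, a * (H s i - Hs i - Hs i * Real.log (H s i / Hs i)))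
          + ∑ i ∈ Finset.range n,
              a / (e i * ν i) * (P s i - Ps i - Ps i * Real.log (P s i / Ps i)))
        (-(a ^ 2) * ((∑ i ∈ Finset.range n, H t i) - ∑ i ∈ Finset.range n, Hs i) ^ 2) t ∧
      -(a ^ 2) * ((∑ i ∈ Finset.range n, H t i) - ∑ i ∈ Finset.range n, Hs i) ^ 2 ≤ 0 := by
  intro t
  refine ⟨?_, by rw [neg_mul]; exact neg_nonpos.mpr (by positivity)⟩
  set x : ℕ → ℝ := fun i => H t i - Hs i with hx
  set y : ℕ → ℝ := fun i => P t i - Ps i with hy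
  set X : ℝ := ∑ i ∈ Finset.range n, x i with hX
  have hXeq : (∑ i ∈ Finset.range n, H t i) - ∑ i ∈ Finset.range n, Hs i = X := by
    rw [hX, ← Finset.sum_sub_distrib]
  have hDH : ∀ i ∈ Finset.range n,
      HasDerivAt (fun s => a * (H s i - Hs i - Hs i * Real.log (H s i / Hs i)))
        (a * ((H t i - Hs i) * ((∑ j ∈ Finset.range n, a * (Hs j - H t j))
          + ∑ j ∈ Finset.Ico i n, (Ps j - P t j)))) t := by
    intro i hi
    rw [Finset.mem_range] at hi
    have hHi := hH t i hi
    have hHpos : ∀ s, 0 < H s i := fun s => (hpos s i hi).1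
    have hfun : (fun s => a * (H s i - Hs i - Hs i * Real.log (H s i / Hs i)))
        = fun s => a * (H s i - Hs i - Hs i * (Real.log (H s i) - Real.log (Hs i))) := by
      funext s
      rw [Real.log_div (hHpos s).ne' (hHs i hi).ne']
    rw [hfun]
    have hlog : HasDerivAt (fun s => Real.log (H s i))
        (H t i * ((∑ j ∈ Finset.range n, a * (Hs j - H t j))
          + ∑ j ∈ Finset.Ico i n, (Ps j - P t j)) / H t i) t := hHi.log (hHpos t).ne'
    have := ((hHi.sub_const (Hs i)).sub ((hlog.sub_const (Real.log (Hs i))).const_mul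
      (Hs i))).const_mul a
    convert this using 1
    · rfl
    · rfl
    · rfl
    rw [mul_div_cancel_left₀ _ (hHpos t).ne']
    ring
  have hDP : ∀ i ∈ Finset.range n,
      HasDerivAt (fun s => a / (e i * ν i) * (P s i - Ps i - Ps i * Real.log (P s i / Ps i)))
        (a * ((P t i - Ps i) * ∑ j ∈ Finset.range (i + 1), (H t j - Hs j))) t := by
    intro i hi
    rw [Finset.mem_range] at hi
    have hPi := hP t i hi
    have hPpos : ∀ s, 0 < P s i := fun s => (hpos s i hi).2
    have he' := (he i hi).ne'
    have hν' := (hν i hi).ne'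
    have hfun : (fun s => a / (e i * ν i) * (P s i - Ps i - Ps i * Real.log (P s i / Ps i)))
        = fun s => a / (e i * ν i) * (P s i - Ps i - Ps i * (Real.log (P s i) - Real.log (Ps i))) := by
      funext s
      rw [Real.log_div (hPpos s).ne' (hPs i hi).ne']
    rw [hfun]
    have hlog : HasDerivAt (fun s => Real.log (P s i))
        (e i * ν i * P t i * (∑ j ∈ Finset.range (i + 1), (H t j - Hs j)) / P t i) t :=
      hPi.log (hPpos t).ne'
    have := ((hPi.sub_const (Ps i)).sub ((hlog.sub_const (Real.log (Ps i))).const_mul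
      (Ps i))).const_mul (a / (e i * ν i))
    convert this using 1
    · rfl
    · rfl
    · rfl
    rw [show e i * ν i * P t i * (∑ j ∈ Finset.range (i + 1), (H t j - Hs j)) / P t i
        = P t i * (e i * ν i * ∑ j ∈ Finset.range (i + 1), (H t j - Hs j)) / P t i by ring,
      mul_div_cancel_left₀ _ (hPpos t).ne',
      show e i * ν i * P t i * (∑ j ∈ Finset.range (i + 1), (H t j - Hs j))
          - Ps i * (e i * ν i * ∑ j ∈ Finset.range (i + 1), (H t j - Hs j))
        = (e i * ν i) * ((P t i - Ps i) * ∑ j ∈ Finset.range (i + 1), (H t j - Hs j)) by ring,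
      div_mul_eq_mul_div, mul_div_assoc,
      mul_div_cancel_left₀ _ (mul_ne_zero he' hν')]
  have hV := (HasDerivAt.sum hDH).add (HasDerivAt.sum hDP)
  convert hV using 1
  · rfl
  · rfl
  · funext s
    simp only [Pi.add_apply, Finset.sum_apply]
  -- the algebraic identity
  have hA : (∑ j ∈ Finset.range n, a * (Hs j - H t j)) = -(a * X) := by
    rw [Finset.sum_congr rfl (fun j _ => show a * (Hs j - H t j) = -(a * x j) by
      simp only [hx]; ring), Finset.sum_neg_distrib, ← Finset.mul_sum, hX]
  have hB : ∀ i, (∑ j ∈ Finset.Ico i n, (Ps j - P t j)) = -∑ j ∈ Finset.Ico i n, y j := by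
    intro i
    rw [Finset.sum_congr rfl (fun j _ => show Ps j - P t j = -(y j) by
      simp only [hy]; ring), Finset.sum_neg_distrib]
  have hswap : ∑ i ∈ Finset.range n, x i * (∑ j ∈ Finset.Ico i n, y j)
      = ∑ j ∈ Finset.range n, y j * (∑ i ∈ Finset.range (j + 1), x i) := by
    calc ∑ i ∈ Finset.range n, x i * (∑ j ∈ Finset.Ico i n, y j)
        = ∑ i ∈ Finset.range n, ∑ j ∈ Finset.Ico i n, x i * y j :=
          Finset.sum_congr rfl fun i _ => by rw [Finset.mul_sum]
      _ = ∑ j ∈ Finset.range n, ∑ i ∈ Finset.range (j + 1), x i * y j := by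
          simp only [Finset.range_eq_Ico]
          exact Finset.sum_Ico_Ico_comm 0 n (fun i j => x i * y j)
      _ = ∑ j ∈ Finset.range n, y j * (∑ i ∈ Finset.range (j + 1), x i) := by
          refine Finset.sum_congr rfl fun j _ => ?_
          rw [Finset.mul_sum]
          exact Finset.sum_congr rfl fun i _ => mul_comm _ _
  have key : (∑ i ∈ Finset.range n, a * (x i * (-(a * X) + -(∑ j ∈ Finset.Ico i n, y j))))
      + ∑ i ∈ Finset.range n, a * (y i * (∑ j ∈ Finset.range (i + 1), x j))
      = -(a ^ 2) * X ^ 2 := by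
    rw [Finset.sum_congr rfl (fun i _ => show
        a * (x i * (-(a * X) + -(∑ j ∈ Finset.Ico i n, y j)))
        = -(a ^ 2) * X * x i - a * (x i * ∑ j ∈ Finset.Ico i n, y j) by ring),
      Finset.sum_sub_distrib, ← Finset.mul_sum, ← Finset.mul_sum, ← Finset.mul_sum,
      hswap, ← hX]
    ring
  rw [hXeq, ← key]
  congr 1 <;> refine Finset.sum_congr rfl fun i _ => ?_ <;>
    simp only [hA, hB, hx, hy] <;> ring
end

section
/- For an entire bounded solution of the NIN limit-set system H_i' = H_i Σ_{j ≥ i}(P_j* − P_j), P_i' = e_i n_i P_i Σ_{j ≤ i}(H_j − H_j*) that is bounded above and away from zero in every component and satisfies Σ_i H_i(t) = Σ_i H_i* for all t, the solution must be identically equal to the equilibrium: H_i(t) ≡ H_i* and P_i(t) ≡ P_i* for all i. -/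
open Filter Finset

/-- If `f` solves `f' = c f` on all of `ℝ` and is trapped in `[p, B]` with `p > 0`,
then `c = 0` and `f` is constant. -/
lemma aux_exp_const (f : ℝ → ℝ) (c p B : ℝ) (hp : 0 < p)
    (hb : ∀ t, p ≤ f t ∧ f t ≤ B)
    (hd : ∀ t, HasDerivAt f (c * f t) t) :
    c = 0 ∧ ∀ t, f t = f 0 := by
  have hg : ∀ t, HasDerivAt (fun s => f s * Real.exp (-c * s)) 0 t := by
    intro t
    have h1 : HasDerivAt (fun s : ℝ => Real.exp (-c * s))
        (Real.exp (-c * t) * (-c * 1)) t :=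
      ((hasDerivAt_id t).const_mul (-c)).exp
    have h2 : HasDerivAt (fun s => f s * Real.exp (-c * s))
        (c * f t * Real.exp (-c * t) + f t * (Real.exp (-c * t) * (-c * 1))) t :=
      (hd t).mul h1
    convert h2 using 1
    ring
  have hgc : ∀ t : ℝ, f t * Real.exp (-c * t) = f 0 * Real.exp (-c * 0) := by
    intro t
    exact is_const_of_deriv_eq_zero (fun x => (hg x).differentiableAt)
      (fun x => (hg x).deriv) t 0
  have hf : ∀ t, f t = f 0 * Real.exp (c * t) := by
    intro t
    have h2 : f t * Real.exp (-c * t) * Real.exp (c * t)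
        = f 0 * Real.exp (c * t) := by
      rw [hgc t]; simp
    have h3 : Real.exp (-c * t) * Real.exp (c * t) = 1 := by
      rw [← Real.exp_add]; ring_nf; exact Real.exp_zero
    calc f t = f t * (Real.exp (-c * t) * Real.exp (c * t)) := by rw [h3]; ring
      _ = f 0 * Real.exp (c * t) := by rw [← mul_assoc]; exact h2
  have hf0 : 0 < f 0 := lt_of_lt_of_le hp (hb 0).1
  have hB : 0 < B := lt_of_lt_of_le hp ((hb 0).1.trans (hb 0).2)
  have hc : c = 0 := by
    by_contra hc
    set t := (Real.log (B / f 0) + 1) / c with ht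
    have hct : c * t = Real.log (B / f 0) + 1 := by
      rw [ht]; field_simp
    have hft : f t = B * Real.exp 1 := by
      rw [hf t, hct, Real.exp_add, Real.exp_log (div_pos hB hf0)]
      field_simp
    have he1 : (2 : ℝ) ≤ Real.exp 1 := by
      have := Real.add_one_le_exp 1; linarith
    have := (hb t).2
    nlinarith
  refine ⟨hc, fun t => ?_⟩
  rw [hf t, hc]; simp

/-- an entire solution of the NIN limit-set system
`H_i' = H_i Σ_{j ≥ i}(P_j* − P_j)`, `P_i' = e_i n_i P_i Σ_{j ≤ i}(H_j − H_j*)`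
that is bounded above and away from zero in every component and satisfies
`Σ_i H_i(t) = Σ_i H_i*` for all `t` must be identically the equilibrium `(H*, P*)`. -/
theorem statement14
    (n : ℕ) (e ν Hs Ps : ℕ → ℝ)
    (he : ∀ i < n, 0 < e i) (hν : ∀ i < n, 0 < ν i)
    (hHs : ∀ i < n, 0 < Hs i) (hPs : ∀ i < n, 0 < Ps i)
    (H P : ℝ → ℕ → ℝ) (p B : ℝ) (hp : 0 < p)
    (hbd : ∀ t : ℝ, ∀ i < n, p ≤ H t i ∧ H t i ≤ B ∧ p ≤ P t i ∧ P t i ≤ B)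
    (hH : ∀ t : ℝ, ∀ i < n, HasDerivAt (fun s => H s i)
      (H t i * ∑ j ∈ Finset.Ico i n, (Ps j - P t j)) t)
    (hP : ∀ t : ℝ, ∀ i < n, HasDerivAt (fun s => P s i)
      (e i * ν i * P t i * ∑ j ∈ Finset.range (i + 1), (H t j - Hs j)) t)
    (hsum : ∀ t : ℝ, ∑ i ∈ Finset.range n, H t i = ∑ i ∈ Finset.range n, Hs i) :
    ∀ t : ℝ, ∀ i < n, H t i = Hs i ∧ P t i = Ps i := by
  -- key downward-induction step
  have step : ∀ k, k < n →
      (∀ i, k + 1 ≤ i → i < n → ∀ t, H t i = Hs i ∧ P t i = Ps i) →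
      ∀ t, H t k = Hs k ∧ P t k = Ps k := by
    intro k hk IH
    -- the driving sum for `P k` vanishes identically
    have hsum0 : ∀ t, ∑ j ∈ Finset.range (k + 1), (H t j - Hs j) = 0 := by
      intro t
      have h1 : ∑ j ∈ Finset.Ico 0 (k + 1), (H t j - Hs j)
          + ∑ j ∈ Finset.Ico (k + 1) n, (H t j - Hs j)
          = ∑ j ∈ Finset.Ico 0 n, (H t j - Hs j) :=
        Finset.sum_Ico_consecutive _ (Nat.zero_le _) hk
      have h2 : ∑ j ∈ Finset.Ico (k + 1) n, (H t j - Hs j) = 0 :=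
        Finset.sum_eq_zero (fun j hj => by
          rw [(IH j (Finset.mem_Ico.mp hj).1 (Finset.mem_Ico.mp hj).2 t).1]; ring)
      have h3 : ∑ j ∈ Finset.Ico 0 n, (H t j - Hs j) = 0 := by
        rw [← Finset.range_eq_Ico, Finset.sum_sub_distrib, hsum t]; ring
      rw [Finset.range_eq_Ico]
      linarith
    -- hence `P k` is constant
    have hPc : ∀ t, P t k = P 0 k := by
      have hd : ∀ t, HasDerivAt (fun s => P s k) 0 t := by
        intro t
        have := hP t k hk
        rwa [hsum0 t, mul_zero] at this
      intro t
      exact is_const_of_deriv_eq_zero (fun x => (hd x).differentiableAt)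
        (fun x => (hd x).deriv) t 0
    -- `H k` solves a linear ODE with constant coefficient
    have hHd : ∀ t, HasDerivAt (fun s => H s k) ((Ps k - P 0 k) * H t k) t := by
      intro t
      have hs : ∑ j ∈ Finset.Ico k n, (Ps j - P t j) = Ps k - P 0 k := by
        rw [Finset.sum_eq_single_of_mem k (Finset.mem_Ico.mpr ⟨le_refl k, hk⟩)]
        · rw [hPc t]
        · intro j hj hjk
          rw [(IH j (lt_of_le_of_ne (Finset.mem_Ico.mp hj).1 (Ne.symm hjk))
            (Finset.mem_Ico.mp hj).2 t).2]
          ring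
      have := hH t k hk
      rw [hs] at this
      convert this using 1
      ring
    have hHbd : ∀ t, p ≤ H t k ∧ H t k ≤ B := fun t =>
      ⟨(hbd t k hk).1, (hbd t k hk).2.1⟩
    obtain ⟨hc0, hHc⟩ := aux_exp_const (fun s => H s k) (Ps k - P 0 k) p B hp hHbd hHd
    have hPk : ∀ t, P t k = Ps k := by
      intro t; rw [hPc t]; linarith
    -- now show `H k ≡ Hs k`
    have hHk : ∀ t, H t k = Hs k := by
      cases k with
      | zero =>
        intro t
        have h := hsum0 t
        norm_num at h
        linarith
      | succ m =>
        have hm : m < n := Nat.lt_of_succ_lt hk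
        -- the driving sum for `P m` is the constant `Hs (m+1) - H 0 (m+1)`
        have hs : ∀ t, ∑ j ∈ Finset.range (m + 1), (H t j - Hs j)
            = Hs (m + 1) - H 0 (m + 1) := by
          intro t
          have h1 := hsum0 t
          rw [Finset.sum_range_succ] at h1
          have h2 := hHc t
          linarith
        have hPd : ∀ t, HasDerivAt (fun s => P s m)
            ((e m * ν m * (Hs (m + 1) - H 0 (m + 1))) * P t m) t := by
          intro t
          have := hP t m hm
          rw [hs t] at this
          convert this using 1
          ring
        have hPbd : ∀ t, p ≤ P t m ∧ P t m ≤ B := fun t =>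
          ⟨(hbd t m hm).2.2.1, (hbd t m hm).2.2.2⟩
        obtain ⟨hc0', _⟩ := aux_exp_const (fun s => P s m) _ p B hp hPbd hPd
        have heν : 0 < e m * ν m := mul_pos (he m hm) (hν m hm)
        have hHeq : H 0 (m + 1) = Hs (m + 1) := by
          rcases mul_eq_zero.mp hc0' with h | h
          · exact absurd h (ne_of_gt heν)
          · linarith
        intro t
        have := hHc t
        rw [this, hHeq]
    exact fun t => ⟨hHk t, hPk t⟩
  -- downward induction packaged as induction on the distance `d = n - k`
  have main : ∀ d i, n ≤ i + d → i < n → ∀ t, H t i = Hs i ∧ P t i = Ps i := by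
    intro d
    induction d with
    | zero => intro i h1 h2; omega
    | succ d IH =>
      intro i h1 h2 t
      exact step i h2 (fun j hj hjn s => IH j (by omega) hjn s) t
  intro t i hi
  exact main n i (by omega) hi t
end

section
/- For the one-to-one infection network system, an equilibrium with all 2n components positive exists if and only if Q̃_n < r_j for all 1 ≤ j ≤ n, where Q̃_n = Σ_{i=1}^n a_i/e_i; in that case it is unique and given by H_j* = 1/e_j and P_j* = r_j − Q̃_n for all j. -/
open Filter Finset

/-- `Q̃_n = Σ_i a_i/e_i`. -/
noncomputable def QOIN (n : ℕ) (a e : ℕ → ℝ) : ℝ :=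
  ∑ i ∈ Finset.range n, a i / e i

/-- `(h, p)` is an equilibrium of the one-to-one infection network system
`H_i' = H_i(r_i − Σ_j a_j H_j) − H_i P_i`, `P_i' = e_i n_i P_i(H_i − 1/e_i)`. -/
def isEqOIN (n : ℕ) (r a e ν : ℕ → ℝ) (h p : ℕ → ℝ) : Prop :=
  (∀ i < n, h i * (r i - ∑ j ∈ Finset.range n, a j * h j) - h i * p i = 0) ∧
  (∀ i < n, e i * ν i * p i * (h i - 1 / e i) = 0)

/-- `(H, P)` solves the one-to-one infection network system for `t ≥ 0`. -/
def isSolOIN (n : ℕ) (r a e ν : ℕ → ℝ) (H P : ℝ → ℕ → ℝ) : Prop :=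
  ∀ t ≥ (0:ℝ), ∀ i < n,
    HasDerivAt (fun s => H s i)
      (H t i * (r i - ∑ j ∈ Finset.range n, a j * H t j) - H t i * P t i) t ∧
    HasDerivAt (fun s => P s i)
      (e i * ν i * P t i * (H t i - 1 / e i)) t

lemma uniq_aux (n : ℕ) (r a e ν : ℕ → ℝ)
    (he : ∀ i < n, 0 < e i) (hν : ∀ i < n, 0 < ν i)
    (h p : ℕ → ℝ) (hpos : ∀ i < n, 0 < h i ∧ 0 < p i) (heq : isEqOIN n r a e ν h p) :
    ∀ j < n, h j = 1 / e j ∧ p j = r j - QOIN n a e := by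
  obtain ⟨eq1, eq2⟩ := heq
  have hh : ∀ j < n, h j = 1 / e j := by
    intro j hj
    have := eq2 j hj
    have he' := (he j hj).ne'
    have hν' := (hν j hj).ne'
    have hp' := (hpos j hj).2.ne'
    have : h j - 1 / e j = 0 := by
      rcases mul_eq_zero.1 this with h1 | h1
      · rcases mul_eq_zero.1 h1 with h2 | h2
        · exact absurd (mul_eq_zero.1 h2) (by simp [he', hν'])
        · exact absurd h2 hp'
      · exact h1
    linarith
  intro j hj
  refine ⟨hh j hj, ?_⟩
  have hsum : ∑ k ∈ Finset.range n, a k * h k = QOIN n a e := by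
    unfold QOIN
    apply Finset.sum_congr rfl
    intro k hk
    rw [hh k (Finset.mem_range.1 hk)]
    ring
  have := eq1 j hj
  rw [hsum] at this
  have hhj := (hpos j hj).1.ne'
  have : h j * (r j - QOIN n a e - p j) = 0 := by ring_nf; linarith [this]
  rcases mul_eq_zero.1 this with h1 | h1
  · exact absurd h1 hhj
  · linarith

/-- the one-to-one infection network system has an equilibrium with all `2n`
components positive iff `Q̃_n < r_j` for all `j`; it is then unique, with `H_j* = 1/e_j`
and `P_j* = r_j − Q̃_n`. -/
theorem statement15
    (n : ℕ) (hn : 0 < n) (r a e ν : ℕ → ℝ)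
    (hr : ∀ i < n, 0 < r i) (ha : ∀ i < n, 0 < a i)
    (he : ∀ i < n, 0 < e i) (hν : ∀ i < n, 0 < ν i) :
    ((∃ h p : ℕ → ℝ, (∀ i < n, 0 < h i ∧ 0 < p i) ∧ isEqOIN n r a e ν h p) ↔
      (∀ j < n, QOIN n a e < r j)) ∧
    (∀ h p : ℕ → ℝ, (∀ i < n, 0 < h i ∧ 0 < p i) → isEqOIN n r a e ν h p →
      ∀ j < n, h j = 1 / e j ∧ p j = r j - QOIN n a e) := by
  constructor
  · constructor
    · rintro ⟨h, p, hpos, heq⟩ j hj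
      have := (uniq_aux n r a e ν he hν h p hpos heq j hj).2
      have := (hpos j hj).2
      linarith
    · intro hQ
      refine ⟨fun i => 1 / e i, fun i => r i - QOIN n a e, ?_, ?_, ?_⟩
      · intro i hi
        exact ⟨one_div_pos.mpr (he i hi), by simpa using sub_pos.mpr (hQ i hi)⟩
      · intro i hi
        have hsum : ∑ k ∈ Finset.range n, a k * (1 / e k) = QOIN n a e := by
          unfold QOIN
          exact Finset.sum_congr rfl fun k _ => by ring
        rw [hsum]; ring
      · intro i hi; ring
  · exact uniq_aux n r a e ν he hν
end
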